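/- arXiv:1510.04584 — 11 statements merged into one kernel-verified Lean document; each statement's English description precedes it below -/
import Mathlib

section
/- Let R be an idempotent semiring with no zero divisors. Then every invertible n×n matrix over R is a monomial matrix, i.e., GL(n,R) is isomorphic to the semidirect product of the symmetric group Σ_n acting on (R^×)^n. Equivalently, any two bases of the free module R^n differ only by a permutation and multiplication by units. -/
/-- Over an idempotent semiring with no zero divisors, every invertible
`n × n` matrix is a monomial matrix: a permutation matrix scaled by units. This expresses
`GL(n,R) ≅ Σ_n ⋉ (R^×)^n`, equivalently that any two bases of `R^n` differ by a
permutation and multiplication by units. -/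
theorem gl_of_idempotent_semiring_is_monomial {R : Type*} [Semiring R] [NoZeroDivisors R]
    (hid : ∀ r : R, r + r = r) (n : ℕ)
    (M : Matrix (Fin n) (Fin n) R) (hM : IsUnit M) :
    ∃ (σ : Equiv.Perm (Fin n)) (u : Fin n → Rˣ),
      M = Matrix.of fun i j => if j = σ i then (u i : R) else 0 := by
  obtain ⟨v, hv⟩ := hM
  set N : Matrix (Fin n) (Fin n) R := (v⁻¹).val with hNdef
  have hMN : M * N = 1 := by rw [← hv]; exact v.mul_inv
  have hNM : N * M = 1 := by rw [← hv]; exact v.inv_mul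
  by_cases h10 : (1 : R) = 0
  · have : Subsingleton R := subsingleton_of_zero_eq_one h10.symm
    exact ⟨Equiv.refl _, fun _ => 1, by ext i j; exact Subsingleton.elim _ _⟩
  -- zerosumfree
  have zs : ∀ a b : R, a + b = 0 → a = 0 := by
    intro a b hab
    calc a = a + (a + b) := by rw [hab, add_zero]
    _ = (a + a) + b := (add_assoc _ _ _).symm
    _ = a + b := by rw [hid]
    _ = 0 := hab
  have sumzs : ∀ (f : Fin n → R), (∑ x, f x) = 0 → ∀ i, f i = 0 := by
    intro f hs i
    have h := Finset.add_sum_erase Finset.univ f (Finset.mem_univ i)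
    exact zs _ _ (h.trans hs)
  have offMN : ∀ i j, i ≠ j → ∀ k, M i k * N k j = 0 := by
    intro i j hij k
    have h0 : (∑ x, M i x * N x j) = 0 := by
      rw [← Matrix.mul_apply, hMN, Matrix.one_apply_ne hij]
    exact sumzs _ h0 k
  have offNM : ∀ k l, k ≠ l → ∀ i, N k i * M i l = 0 := by
    intro k l hkl i
    have h0 : (∑ x, N k x * M x l) = 0 := by
      rw [← Matrix.mul_apply, hNM, Matrix.one_apply_ne hkl]
    exact sumzs _ h0 i
  have diagMN : ∀ i, (∑ k, M i k * N k i) = 1 := by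
    intro i; rw [← Matrix.mul_apply, hMN, Matrix.one_apply_eq]
  have diagNM : ∀ k, (∑ i, N k i * M i k) = 1 := by
    intro k; rw [← Matrix.mul_apply, hNM, Matrix.one_apply_eq]
  have exMN : ∀ i, ∃ k, M i k ≠ 0 := by
    intro i
    by_contra h
    push_neg at h
    apply h10
    rw [← diagMN i]
    apply Finset.sum_eq_zero
    intro k _
    rw [h k, zero_mul]
  -- claim A: if M i k ≠ 0 then row k of N vanishes off column i
  have clA : ∀ i k, M i k ≠ 0 → ∀ j, j ≠ i → N k j = 0 := by
    intro i k hMik j hj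
    have h0 := offMN i j (fun h => hj (h.symm)) k
    rcases mul_eq_zero.mp h0 with h | h
    · exact absurd h hMik
    · exact h
  -- claim B: N k i * M i k = 1
  have clB : ∀ i k, M i k ≠ 0 → N k i * M i k = 1 := by
    intro i k hMik
    have := diagNM k
    rw [Finset.sum_eq_single i (fun j _ hj => by rw [clA i k hMik j hj, zero_mul])
      (fun h => absurd (Finset.mem_univ i) h)] at this
    exact this
  -- row uniqueness
  have rowuniq : ∀ i k l, M i k ≠ 0 → M i l ≠ 0 → k = l := by
    intro i k l hk hl
    by_contra hkl
    have hNli : N l i ≠ 0 := by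
      intro h
      apply h10
      rw [← clB i l hl, h, zero_mul]
    have h0 := offNM l k (fun h => hkl h.symm) i
    rcases mul_eq_zero.mp h0 with h | h
    · exact hNli h
    · exact hk h
  -- claim C: M i k * N k i = 1
  have clC : ∀ i k, M i k ≠ 0 → M i k * N k i = 1 := by
    intro i k hMik
    have := diagMN i
    rw [Finset.sum_eq_single k (fun l _ hl => by
        have : M i l = 0 := by
          by_contra h
          exact hl (rowuniq i l k h hMik)
        rw [this, zero_mul])
      (fun h => absurd (Finset.mem_univ k) h)] at this
    exact this
  -- define σ0
  choose σ0 hσ0 using exMN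
  have hinj : Function.Injective σ0 := by
    intro i i' h
    by_contra hne
    have h1 : N (σ0 i) i' = 0 := clA i (σ0 i) (hσ0 i) i' (fun hc => hne hc.symm)
    have h2 : N (σ0 i') i' * M i' (σ0 i') = 1 := clB i' (σ0 i') (hσ0 i')
    rw [← h] at h2
    rw [h1, zero_mul] at h2
    exact h10 h2.symm
  have hbij : Function.Bijective σ0 := (Finite.injective_iff_bijective).mp hinj
  refine ⟨Equiv.ofBijective σ0 hbij, fun i => ⟨M i (σ0 i), N (σ0 i) i,
    clC i (σ0 i) (hσ0 i), clB i (σ0 i) (hσ0 i)⟩, ?_⟩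
  ext i j
  simp only [Matrix.of_apply, Equiv.ofBijective_apply]
  split_ifs with h
  · rw [h]
  · by_contra hc
    exact h (rowuniq i j (σ0 i) hc (hσ0 i))
end

section
/- Let S be an idempotent semifield and V a free S-module with fixed basis e_1,…,e_n. The S-algebra congruence on the symmetric algebra Sym V generated by the relations e_i² ∼ 0 (for i = 1,…,n) is independent of the choice of basis of V. -/
open MvPolynomial

/-- A family `b` is a basis of `S^n` if every vector is uniquely a finite `S`-linear
combination of the `b i`. -/
def IsTropBasis {S : Type*} [Semifield S] {n : ℕ} (b : Fin n → (Fin n → S)) : Prop :=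
  ∀ v : Fin n → S, ∃! c : Fin n → S, v = ∑ i, c i • b i

/-- In an idempotent semiring, zero sums have zero summands. -/
lemma trop_eq_zero_of_add_eq_zero {S : Type*} [Semifield S] (hid : ∀ s : S, s + s = s)
    {a c : S} (h : a + c = 0) : a = 0 := by
  have h2 : a + (a + c) = a + c := by rw [← add_assoc, hid]
  rw [h, add_zero] at h2
  exact h2

lemma trop_term_eq_zero {S : Type*} [Semifield S] (hid : ∀ s : S, s + s = s) {n : ℕ}
    (f : Fin n → S) (h : ∑ i, f i = 0) (i : Fin n) : f i = 0 := by
  have h1 := Finset.add_sum_erase Finset.univ f (Finset.mem_univ i)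
  exact trop_eq_zero_of_add_eq_zero hid (by rw [h1, h])

/-- Structure of a tropical basis: it is a scaled permutation of the standard basis. -/
lemma trop_basis_struct {S : Type*} [Semifield S] (hid : ∀ s : S, s + s = s) {n : ℕ}
    (b : Fin n → (Fin n → S)) (hb : IsTropBasis b) :
    ∃ f : Fin n → Fin n, Function.Bijective f ∧
      ∀ k, b (f k) k ≠ 0 ∧ ∀ j, j ≠ k → b (f k) j = 0 := by
  have key : ∀ k : Fin n, ∃ i : Fin n, b i k ≠ 0 ∧ ∀ j, j ≠ k → b i j = 0 := by
    intro k
    obtain ⟨c, hc, -⟩ := hb (Pi.single k 1)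
    have hcoord : ∀ j, (Pi.single k 1 : Fin n → S) j = ∑ i, c i * b i j := by
      intro j
      rw [hc]
      simp [Finset.sum_apply]
    have h1 : ∑ i, c i * b i k = 1 := by
      have := hcoord k
      simpa using this.symm
    have hexists : ∃ i, c i * b i k ≠ 0 := by
      by_contra hcon
      push_neg at hcon
      have : (1 : S) = 0 := by
        rw [← h1]
        exact Finset.sum_eq_zero fun i _ => hcon i
      exact one_ne_zero this
    obtain ⟨i, hi⟩ := hexists
    refine ⟨i, right_ne_zero_of_mul hi, fun j hj => ?_⟩
    have h0 : ∑ i', c i' * b i' j = 0 := by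
      have := hcoord j
      rw [Pi.single_apply, if_neg hj] at this
      exact this.symm
    have := trop_term_eq_zero hid _ h0 i
    rcases mul_eq_zero.mp this with h | h
    · exact absurd h (left_ne_zero_of_mul hi)
    · exact h
  choose f hf1 hf2 using key
  have finj : Function.Injective f := by
    intro k k' hkk
    by_contra hne
    have h1 := hf1 k
    have h2 := hf2 k' k hne
    rw [← hkk] at h2
    exact h1 h2
  exact ⟨f, ⟨finj, Finite.surjective_of_injective finj⟩, fun k => ⟨hf1 k, hf2 k⟩⟩

lemma trop_lincomb_eq {S : Type*} [Semifield S] {n : ℕ} (k : Fin n) (g : Fin n → S)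
    (hg : ∀ j, j ≠ k → g j = 0) :
    (∑ j, C (g j) * X j : MvPolynomial (Fin n) S) = C (g k) * X k := by
  rw [Finset.sum_eq_single k]
  · intro j _ hj
    rw [hg j hj]
    simp
  · simp

/-- Over an idempotent semifield `S`, the `S`-algebra congruence on
`Sym V = S[x_1,…,x_n]` generated by the squares of the members of a basis of `V = S^n`
is independent of the choice of basis: for any basis `b` it agrees with the congruence
generated by the squares of the standard basis vectors. -/
theorem wedge_congruence_basis_independent {S : Type*} [Semifield S]
    (hid : ∀ s : S, s + s = s) (n : ℕ)
    (b : Fin n → (Fin n → S)) (hb : IsTropBasis b) :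
    ringConGen (fun p q : MvPolynomial (Fin n) S =>
        (∃ i, p = (∑ j, C (b i j) * X j) ^ 2) ∧ q = 0)
      = ringConGen (fun p q : MvPolynomial (Fin n) S =>
        (∃ i, p = (X i) ^ 2) ∧ q = 0) := by
  obtain ⟨f, hfbij, hf⟩ := trop_basis_struct hid b hb
  apply le_antisymm
  · apply RingCon.ringConGen_le.mpr
    rintro p q ⟨⟨i, rfl⟩, rfl⟩
    obtain ⟨k, hk⟩ := hfbij.2 i
    subst hk
    have hsum : (∑ j, C (b (f k) j) * X j : MvPolynomial (Fin n) S)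
        = C (b (f k) k) * X k := trop_lincomb_eq k _ (hf k).2
    rw [hsum, mul_pow, ← C_pow]
    have h0 : (ringConGen (fun p q : MvPolynomial (Fin n) S =>
        (∃ i, p = (X i) ^ 2) ∧ q = 0)) ((X k : MvPolynomial (Fin n) S) ^ 2) 0 :=
      RingConGen.Rel.of _ _ ⟨⟨k, rfl⟩, rfl⟩
    have := (ringConGen _).mul ((ringConGen _).refl (C (b (f k) k ^ 2))) h0
    rwa [mul_zero] at this
  · apply RingCon.ringConGen_le.mpr
    rintro p q ⟨⟨k, rfl⟩, rfl⟩
    set u : S := b (f k) k with hu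
    have hune : u ≠ 0 := (hf k).1
    have hsum : (∑ j, C (b (f k) j) * X j : MvPolynomial (Fin n) S)
        = C u * X k := trop_lincomb_eq k _ (hf k).2
    have h0 : (ringConGen (fun p q : MvPolynomial (Fin n) S =>
        (∃ i, p = (∑ j, C (b i j) * X j) ^ 2) ∧ q = 0))
        ((∑ j, C (b (f k) j) * X j : MvPolynomial (Fin n) S) ^ 2) 0 :=
      RingConGen.Rel.of _ _ ⟨⟨f k, rfl⟩, rfl⟩
    have h1 := (ringConGen _).mul ((ringConGen _).refl (C ((u ^ 2)⁻¹) :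
      MvPolynomial (Fin n) S)) h0
    rw [mul_zero, hsum, mul_pow, ← C_pow, ← mul_assoc, ← C_mul,
      inv_mul_cancel₀ (pow_ne_zero 2 hune), C_1, one_mul] at h1
    exact h1
end

section
/- Let S be an idempotent semifield and V = S^n free with basis e_1,…,e_n. The tropical Grassmann algebra ⋀V := Sym V / ⟨e_i² ∼ 0⟩ is graded, and its d-th graded component ⋀^d V is a free S-module of rank C(n,d) with basis {e_I := e_{i_1} ∧ ⋯ ∧ e_{i_d} : I = {i_1 < ⋯ < i_d} ⊆ [n]} for d ≤ n, and ⋀^d V = 0 for d > n. -/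
open MvPolynomial Finset

/-- The defining congruence of the tropical Grassmann algebra `⋀ V = Sym V / ⟨e_i² ∼ 0⟩`
on `Sym V = S[x_1,…,x_n]`. -/
noncomputable def wedgeCon (S : Type*) [Semifield S] (n : ℕ) : RingCon (MvPolynomial (Fin n) S) :=
  ringConGen (fun p q => (∃ i, p = (X i) ^ 2) ∧ q = 0)

/-- The square-free polynomial `∑_I f(I) · e_I` attached to coefficients `f`. -/
noncomputable def sqFreeElt (S : Type*) [Semifield S] (n : ℕ) (f : Finset (Fin n) → S) :
    MvPolynomial (Fin n) S :=
  ∑ I : Finset (Fin n), C (f I) * ∏ i ∈ I, X i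

namespace TropGrass

variable {S : Type*} [Semifield S] {n : ℕ}

/-- Square-free exponent vector. -/
def SF (m : Fin n →₀ ℕ) : Prop := ∀ i, m i ≤ 1

instance : DecidablePred (SF (n := n)) := fun _ => by unfold SF; infer_instance

/-- Truncation to the square-free part. -/
noncomputable def trunc (p : MvPolynomial (Fin n) S) : MvPolynomial (Fin n) S :=
  ∑ m ∈ p.support, if SF m then monomial m (coeff m p) else 0

lemma coeff_trunc (p : MvPolynomial (Fin n) S) (m : Fin n →₀ ℕ) :
    coeff m (trunc p) = if SF m then coeff m p else 0 := by
  classical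
  rw [trunc, coeff_sum]
  by_cases hm : m ∈ p.support
  · rw [Finset.sum_eq_single m]
    · split_ifs <;> simp [coeff_monomial]
    · intro b _ hbm
      split_ifs <;> simp [coeff_monomial, hbm]
    · exact fun h => absurd hm h
  · have h0 : coeff m p = 0 := by simpa using hm
    rw [Finset.sum_eq_zero, h0]
    · simp
    · intro b hb
      split_ifs
      · rw [coeff_monomial, if_neg]
        rintro rfl
        exact hm hb
      · simp

lemma SF_of_le {a m : Fin n →₀ ℕ} (h : SF m) (hle : ∀ i, a i ≤ m i) : SF a :=
  fun i => (hle i).trans (h i)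

lemma trunc_add (p q : MvPolynomial (Fin n) S) :
    trunc (p + q) = trunc p + trunc q := by
  apply MvPolynomial.ext
  intro m
  simp only [coeff_trunc, coeff_add]
  split_ifs <;> simp

lemma trunc_mul (p q : MvPolynomial (Fin n) S) :
    trunc (p * q) = trunc (trunc p * trunc q) := by
  apply MvPolynomial.ext
  intro m
  simp only [coeff_trunc]
  split_ifs with h
  · rw [coeff_mul, coeff_mul]
    apply Finset.sum_congr rfl
    intro x hx
    rw [Finset.HasAntidiagonal.mem_antidiagonal] at hx
    have h1 : SF x.1 := SF_of_le h (fun i => by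
      have := congrArg (fun f => f i) hx
      simp only [Finsupp.add_apply] at this
      omega)
    have h2 : SF x.2 := SF_of_le h (fun i => by
      have := congrArg (fun f => f i) hx
      simp only [Finsupp.add_apply] at this
      omega)
    rw [coeff_trunc, coeff_trunc, if_pos h1, if_pos h2]
  · rfl

/-- The congruence "equal square-free truncations". -/
noncomputable def truncCon : RingCon (MvPolynomial (Fin n) S) where
  r p q := trunc p = trunc q
  iseqv := ⟨fun _ => rfl, Eq.symm, Eq.trans⟩
  add' h1 h2 := by
    show trunc _ = trunc _
    rw [trunc_add, trunc_add, h1, h2]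
  mul' h1 h2 := by
    show trunc _ = trunc _
    rw [trunc_mul, h1, h2, ← trunc_mul]

lemma trunc_eq_zero_of (p : MvPolynomial (Fin n) S)
    (h : ∀ m, SF m → coeff m p = 0) : trunc p = 0 := by
  apply MvPolynomial.ext
  intro m
  rw [coeff_trunc]
  split_ifs with hm
  · simp [h m hm]
  · simp

lemma wedge_imp_trunc {p q : MvPolynomial (Fin n) S} (h : wedgeCon S n p q) :
    trunc p = trunc q := by
  have hle : wedgeCon S n ≤ truncCon := by
    apply RingCon.ringConGen_le.mpr
    rintro p q ⟨⟨i, rfl⟩, rfl⟩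
    show trunc _ = trunc _
    rw [trunc_eq_zero_of, trunc_eq_zero_of]
    · intro m _; simp
    · intro m hm
      rw [X_pow_eq_monomial, coeff_monomial, if_neg]
      intro hem
      have := hm i
      rw [← hem] at this
      simp at this
  exact hle h

lemma con_monomial_zero {m : Fin n →₀ ℕ} (hm : ¬ SF m) (c : S) :
    wedgeCon S n (monomial m c) 0 := by
  rw [SF] at hm
  push_neg at hm
  obtain ⟨i, hi⟩ := hm
  have key : monomial m c = monomial (m - Finsupp.single i 2) c * X i ^ 2 := by
    have hm2 : m - Finsupp.single i 2 + Finsupp.single i 2 = m := by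
      ext j
      by_cases hj : j = i
      · subst hj
        simp only [Finsupp.add_apply, Finsupp.tsub_apply, Finsupp.single_eq_same]
        omega
      · simp [Finsupp.add_apply, Finsupp.tsub_apply, Finsupp.single_apply, Ne.symm hj]
    rw [X_pow_eq_monomial, monomial_mul, mul_one, hm2]
  rw [key]
  have h2 : wedgeCon S n ((X i : MvPolynomial (Fin n) S) ^ 2) 0 :=
    RingConGen.Rel.of _ _ ⟨⟨i, rfl⟩, rfl⟩
  have := (wedgeCon S n).mul ((wedgeCon S n).refl (monomial (m - Finsupp.single i 2) c)) h2
  simpa using this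

lemma con_sum_zero {α : Type*} (s : Finset α) (g : α → MvPolynomial (Fin n) S)
    (h : ∀ a ∈ s, wedgeCon S n (g a) 0) : wedgeCon S n (∑ a ∈ s, g a) 0 := by
  classical
  induction s using Finset.induction_on with
  | empty => simpa using (wedgeCon S n).refl 0
  | @insert a s hnot ih =>
    rw [Finset.sum_insert hnot]
    have := (wedgeCon S n).add (h a (Finset.mem_insert_self a s))
      (ih (fun b hb => h b (Finset.mem_insert_of_mem hb)))
    simpa using this

lemma con_trunc (p : MvPolynomial (Fin n) S) : wedgeCon S n p (trunc p) := by
  classical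
  set R : MvPolynomial (Fin n) S :=
    ∑ m ∈ p.support, if SF m then 0 else monomial m (coeff m p) with hR
  have hp : p = trunc p + R := by
    rw [trunc, hR, ← Finset.sum_add_distrib]
    conv_lhs => rw [p.as_sum]
    apply Finset.sum_congr rfl
    intro m _
    split_ifs <;> simp
  have hR0 : wedgeCon S n R 0 := by
    apply con_sum_zero
    intro m _
    split_ifs with hm
    · exact (wedgeCon S n).refl 0
    · exact con_monomial_zero hm _
  have h := (wedgeCon S n).add ((wedgeCon S n).refl (trunc p)) hR0
  rw [add_zero] at h
  rw [← hp] at h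
  exact h

/-- The exponent vector of the square-free monomial `e_I`. -/
noncomputable def ind (I : Finset (Fin n)) : Fin n →₀ ℕ := ∑ i ∈ I, Finsupp.single i 1

lemma ind_apply (I : Finset (Fin n)) (j : Fin n) : ind I j = if j ∈ I then 1 else 0 := by
  classical
  rw [ind, Finsupp.finset_sum_apply]
  simp only [Finsupp.single_apply]
  exact Finset.sum_ite_eq' I j (fun _ => 1)

lemma SF_ind (I : Finset (Fin n)) : SF (ind I) := fun j => by
  rw [ind_apply]; split <;> omega

lemma support_ind (I : Finset (Fin n)) : (ind I).support = I := by
  ext j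
  rw [Finsupp.mem_support_iff, ind_apply]
  split_ifs with h <;> simp [h]

lemma ind_support_eq {m : Fin n →₀ ℕ} (h : SF m) : ind m.support = m := by
  ext j
  rw [ind_apply]
  by_cases hj : j ∈ m.support
  · rw [if_pos hj]
    have h1 := h j
    have h2 : m j ≠ 0 := Finsupp.mem_support_iff.mp hj
    omega
  · rw [if_neg hj]
    exact (Finsupp.notMem_support_iff.mp hj).symm

lemma prod_X_eq (I : Finset (Fin n)) :
    (∏ i ∈ I, X i : MvPolynomial (Fin n) S) = monomial (ind I) 1 := by
  classical
  induction I using Finset.induction_on with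
  | empty => simp [ind, monomial_zero']
  | @insert a s ha ih =>
    have hind : ind (insert a s) = Finsupp.single a 1 + ind s := by
      rw [ind, ind, Finset.sum_insert ha]
    rw [Finset.prod_insert ha, ih, hind,
      show (X a : MvPolynomial (Fin n) S) = monomial (Finsupp.single a 1) 1 from rfl,
      monomial_mul, one_mul]

lemma sqFreeElt_eq (f : Finset (Fin n) → S) :
    sqFreeElt S n f = ∑ I : Finset (Fin n), monomial (ind I) (f I) := by
  apply Finset.sum_congr rfl
  intro I _
  rw [prod_X_eq, C_mul_monomial, mul_one]

lemma coeff_sqFreeElt (f : Finset (Fin n) → S) (m : Fin n →₀ ℕ) :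
    coeff m (sqFreeElt S n f) = if SF m then f m.support else 0 := by
  classical
  rw [sqFreeElt_eq, coeff_sum]
  simp only [coeff_monomial]
  split_ifs with h
  · rw [Finset.sum_eq_single m.support]
    · rw [if_pos (ind_support_eq h)]
    · intro J _ hJ
      rw [if_neg]
      intro he
      apply hJ
      rw [← he]
      exact (support_ind J).symm
    · intro hmem
      exact absurd (Finset.mem_univ _) hmem
  · apply Finset.sum_eq_zero
    intro J _
    rw [if_neg]
    intro he
    exact h (he ▸ SF_ind J)

lemma trunc_sqFreeElt (f : Finset (Fin n) → S) :
    trunc (sqFreeElt S n f) = sqFreeElt S n f := by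
  apply MvPolynomial.ext
  intro m
  rw [coeff_trunc]
  split_ifs with h
  · rfl
  · exact (by rw [coeff_sqFreeElt, if_neg h] :
      coeff m (sqFreeElt S n f) = 0).symm

lemma degree_eq_card {m : Fin n →₀ ℕ} (h : SF m) : m.degree = m.support.card := by
  rw [Finsupp.degree, Finset.card_eq_sum_ones]
  apply Finset.sum_congr rfl
  intro j hj
  have h1 := h j
  have h2 : m j ≠ 0 := Finsupp.mem_support_iff.mp hj
  omega

end TropGrass

/-- the tropical Grassmann algebra `⋀ V` is graded with `d`-th component
`⋀^d V` free of rank `C(n,d)` on the basis `{e_I : |I| = d}` for `d ≤ n`, and zero for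
`d > n`.  Concretely: (1) the square-free monomials `e_I` are linearly independent in the
quotient; (2) every homogeneous polynomial of degree `d` is congruent to an `S`-linear
combination of the `e_I` with `|I| = d`; (3) there are `C(n,d)` such basis elements;
(4) if `d > n` every homogeneous polynomial of degree `d` is congruent to `0`. -/
theorem tropicalGrassmann_graded_free {S : Type*} [Semifield S]
    (hid : ∀ s : S, s + s = s) (n d : ℕ) :
    (∀ f g : Finset (Fin n) → S,
        wedgeCon S n (sqFreeElt S n f) (sqFreeElt S n g) → f = g)
    ∧ (∀ p : MvPolynomial (Fin n) S, p.IsHomogeneous d →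
        ∃ f : Finset (Fin n) → S, (∀ I, I.card ≠ d → f I = 0)
          ∧ wedgeCon S n p (sqFreeElt S n f))
    ∧ Fintype.card {I : Finset (Fin n) // I.card = d} = n.choose d
    ∧ (d > n → ∀ p : MvPolynomial (Fin n) S, p.IsHomogeneous d → wedgeCon S n p 0) := by
  classical
  refine ⟨?_, ?_, ?_, ?_⟩
  · intro f g h
    have ht := TropGrass.wedge_imp_trunc h
    rw [TropGrass.trunc_sqFreeElt, TropGrass.trunc_sqFreeElt] at ht
    funext I
    have hc := congrArg (coeff (TropGrass.ind I)) ht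
    rwa [TropGrass.coeff_sqFreeElt, TropGrass.coeff_sqFreeElt,
      if_pos (TropGrass.SF_ind I), if_pos (TropGrass.SF_ind I),
      TropGrass.support_ind] at hc
  · intro p hp
    refine ⟨fun I => if I.card = d then coeff (TropGrass.ind I) p else 0,
      fun I hI => if_neg hI, ?_⟩
    have heq : sqFreeElt S n
        (fun I => if I.card = d then coeff (TropGrass.ind I) p else 0) = TropGrass.trunc p := by
      apply MvPolynomial.ext
      intro m
      rw [TropGrass.coeff_sqFreeElt, TropGrass.coeff_trunc]
      split_ifs with h hc
      · rw [TropGrass.ind_support_eq h]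
      · refine (hp.coeff_eq_zero ?_).symm
        rw [TropGrass.degree_eq_card h]
        exact hc
      · rfl
    have h2 := TropGrass.con_trunc p
    rw [← heq] at h2
    exact h2
  · rw [Fintype.card_finset_len, Fintype.card_fin]
  · intro hd p hp
    have h0 : TropGrass.trunc p = 0 := by
      apply TropGrass.trunc_eq_zero_of
      intro m hm
      apply hp.coeff_eq_zero
      rw [TropGrass.degree_eq_card hm]
      have : m.support.card ≤ n := by
        have := Finset.card_le_card (Finset.subset_univ m.support)
        simpa using this
      omega
    have h2 := TropGrass.con_trunc p
    rw [h0] at h2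
    exact h2
end

section
/- Let S be an idempotent semifield, V = S^n with basis e_1,…,e_n, and let v_j = Σ_{i=1}^n a_{ij} e_i for j = 1,…,d be elements of V. Then in the tropical Grassmann algebra ⋀^d V, the coefficient of e_I in v_1 ∧ ⋯ ∧ v_d equals the permanent of the d×d submatrix of (a_{ij}) with rows indexed by I, for each I ∈ C([n],d). -/
open MvPolynomial Finset

section Aux

variable {Q : Type*} [CommSemiring Q]

lemma prod_eq_zero_of_not_inj {n d : ℕ} (x : Fin n → Q) (hx : ∀ i, x i * x i = 0)
    (f : Fin d → Fin n) (hf : ¬ Function.Injective f) :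
    (∏ j : Fin d, x (f j)) = 0 := by
  simp only [Function.Injective, not_forall] at hf
  obtain ⟨j1, j2, hval, hne⟩ := hf
  rw [← Finset.mul_prod_erase univ _ (mem_univ j1),
      ← Finset.mul_prod_erase _ _ (Finset.mem_erase.mpr ⟨Ne.symm hne, mem_univ j2⟩),
      ← mul_assoc, hval, hx, zero_mul]

lemma card_image_univ {n d : ℕ} (f : Fin d → Fin n) (hf : Function.Injective f) :
    (Finset.image f univ).card = d := by
  rw [Finset.card_image_of_injective _ hf, card_univ, Fintype.card_fin]

lemma image_orderEmbOfFin {n d : ℕ} (I : Finset (Fin n)) (hI : I.card = d) :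
    Finset.image (I.orderEmbOfFin hI) univ = I := by
  apply Finset.eq_of_subset_of_card_le
  · intro i hi
    simp only [Finset.mem_image] at hi
    obtain ⟨j, _, rfl⟩ := hi
    exact Finset.orderEmbOfFin_mem I hI j
  · rw [card_image_univ _ (I.orderEmbOfFin hI).injective, hI]

lemma orderEmbOfFin_congr {n d : ℕ} {s t : Finset (Fin n)} (hs : s.card = d) (ht : t.card = d)
    (hst : s = t) (k : Fin d) : s.orderEmbOfFin hs k = t.orderEmbOfFin ht k := by
  subst hst; rfl

lemma prod_over_orderEmbOfFin {n d : ℕ} (x : Fin n → Q) (I : Finset (Fin n)) (hI : I.card = d) :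
    (∏ i ∈ I, x i) = ∏ j : Fin d, x (I.orderEmbOfFin hI j) :=
  calc (∏ i ∈ I, x i) = ∏ i ∈ Finset.image (I.orderEmbOfFin hI) univ, x i := by
        rw [image_orderEmbOfFin I hI]
    _ = ∏ j : Fin d, x (I.orderEmbOfFin hI j) :=
        Finset.prod_image (fun a _ b _ h => (I.orderEmbOfFin hI).injective h)

/-- The permutation associated to an injective `f : Fin d → Fin n`. -/
noncomputable def permOf {n d : ℕ} (f : Fin d → Fin n) (hf : Function.Injective f) :
    Equiv.Perm (Fin d) :=
  Equiv.ofBijective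
    (fun j => ((Finset.image f univ).orderIsoOfFin (card_image_univ f hf)).symm
      ⟨f j, Finset.mem_image_of_mem f (mem_univ j)⟩)
    (Finite.injective_iff_bijective.mp (by
      intro j1 j2 h
      have h2 := ((Finset.image f univ).orderIsoOfFin (card_image_univ f hf)).symm.injective h
      exact hf (congrArg Subtype.val h2)))

lemma permOf_spec {n d : ℕ} (f : Fin d → Fin n) (hf : Function.Injective f) (j : Fin d) :
    (Finset.image f univ).orderEmbOfFin (card_image_univ f hf) (permOf f hf j) = f j := by
  rw [← Finset.coe_orderIsoOfFin_apply]
  show ((((Finset.image f univ).orderIsoOfFin (card_image_univ f hf))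
      (((Finset.image f univ).orderIsoOfFin (card_image_univ f hf)).symm
        ⟨f j, Finset.mem_image_of_mem f (mem_univ j)⟩) : _) : Fin n) = f j
  rw [OrderIso.apply_symm_apply]

lemma key_identity {n d : ℕ} (x : Fin n → Q) (hx : ∀ i, x i * x i = 0)
    (b : Fin n → Fin d → Q) :
    (∏ j : Fin d, ∑ i : Fin n, b i j * x i)
      = ∑ I : {I : Finset (Fin n) // I.card = d},
          (∑ σ : Equiv.Perm (Fin d), ∏ j : Fin d, b (I.1.orderEmbOfFin I.2 (σ j)) j)
            * ∏ i ∈ I.1, x i := by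
  rw [Finset.prod_univ_sum, Fintype.piFinset_univ]
  rw [← Finset.sum_filter_add_sum_filter_not univ (fun f => Function.Injective f)]
  have h0 : ∑ f ∈ univ.filter (fun f : Fin d → Fin n => ¬ Function.Injective f),
      ∏ j, b (f j) j * x (f j) = 0 := by
    apply Finset.sum_eq_zero
    intro f hf
    rw [Finset.prod_mul_distrib, prod_eq_zero_of_not_inj x hx f (by simpa using hf), mul_zero]
  rw [h0, add_zero]
  have hrhs : ∀ I : {I : Finset (Fin n) // I.card = d},
      (∑ σ : Equiv.Perm (Fin d), ∏ j : Fin d, b (I.1.orderEmbOfFin I.2 (σ j)) j)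
        * ∏ i ∈ I.1, x i
      = ∑ σ : Equiv.Perm (Fin d), ∏ j : Fin d,
          (b (I.1.orderEmbOfFin I.2 (σ j)) j * x (I.1.orderEmbOfFin I.2 (σ j))) := by
    intro I
    rw [Finset.sum_mul]
    refine Finset.sum_congr rfl fun σ _ => ?_
    rw [Finset.prod_mul_distrib, prod_over_orderEmbOfFin x I.1 I.2,
      ← Equiv.prod_comp σ (fun k => x (I.1.orderEmbOfFin I.2 k))]
  simp only [hrhs]
  rw [← Finset.sum_product']
  rw [show ((univ : Finset {I : Finset (Fin n) // I.card = d}) ×ˢ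
      (univ : Finset (Equiv.Perm (Fin d)))) = univ from Finset.univ_product_univ]
  symm
  refine Finset.sum_bij'
    (i := fun (p : {I : Finset (Fin n) // I.card = d} × Equiv.Perm (Fin d)) _ =>
      fun j => p.1.1.orderEmbOfFin p.1.2 (p.2 j))
    (j := fun f hf => (⟨Finset.image f univ, card_image_univ f (by simpa using hf)⟩,
      permOf f (by simpa using hf)))
    ?_ ?_ ?_ ?_ ?_
  · intro p _
    simp only [Finset.mem_filter, mem_univ, true_and]
    exact (p.1.1.orderEmbOfFin p.1.2).injective.comp p.2.injective
  · intro f hf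
    exact mem_univ _
  · rintro ⟨⟨I, hI⟩, σ⟩ _
    have hinj : Function.Injective (fun j => I.orderEmbOfFin hI (σ j)) :=
      (I.orderEmbOfFin hI).injective.comp σ.injective
    have himg : Finset.image (fun j => I.orderEmbOfFin hI (σ j)) univ = I := by
      rw [show Finset.image (fun j => I.orderEmbOfFin hI (σ j)) univ
          = Finset.image (I.orderEmbOfFin hI) (Finset.image σ univ) from
        (Finset.image_image ..).symm, Finset.image_univ_equiv,
        image_orderEmbOfFin I hI]
    refine Prod.ext (Subtype.ext ?_) ?_
    · exact himg
    · refine Equiv.ext fun k => ?_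
      apply (I.orderEmbOfFin hI).injective
      show I.orderEmbOfFin hI _ = I.orderEmbOfFin hI (σ k)
      rw [← orderEmbOfFin_congr (card_image_univ _ (by simpa using hinj)) hI himg,
        permOf_spec]
  · intro f hf
    funext j
    exact permOf_spec f (by simpa using hf) j
  · intro p _
    rfl

end Aux

/-- if `v_j = ∑_i a_{ij} e_i` for `j = 1,…,d`, then in the tropical
Grassmann algebra `⋀^d V` the product `v_1 ∧ ⋯ ∧ v_d` equals `∑_I perm_I(a) · e_I`,
i.e. the coefficient of `e_I` is the permanent of the `d × d` submatrix of `(a_{ij})`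
with rows indexed by `I`. -/
theorem wedge_coefficients_are_permanents {S : Type*} [Semifield S]
    (hid : ∀ s : S, s + s = s) (n d : ℕ) (a : Matrix (Fin n) (Fin d) S) :
    wedgeCon S n
      (∏ j : Fin d, ∑ i : Fin n, C (a i j) * X i)
      (∑ I : {I : Finset (Fin n) // I.card = d},
        C (∑ σ : Equiv.Perm (Fin d), ∏ j : Fin d, a (I.1.orderEmbOfFin I.2 (σ j)) j)
          * ∏ i ∈ I.1, X i) := by
  rw [← RingCon.eq (wedgeCon S n)]
  let π : MvPolynomial (Fin n) S →+* (wedgeCon S n).Quotient := (wedgeCon S n).mk'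
  show π _ = π _
  have hx : ∀ i : Fin n, π (X i) * π (X i) = 0 := by
    intro i
    have h1 : wedgeCon S n ((X i : MvPolynomial (Fin n) S) ^ 2) 0 :=
      RingConGen.Rel.of _ _ ⟨⟨i, rfl⟩, rfl⟩
    have h2 : (((X i : MvPolynomial (Fin n) S) ^ 2 : MvPolynomial (Fin n) S) :
        (wedgeCon S n).Quotient) = ((0 : MvPolynomial (Fin n) S) : (wedgeCon S n).Quotient) :=
      (RingCon.eq (wedgeCon S n)).mpr h1
    calc π (X i) * π (X i) = π ((X i) ^ 2) := by rw [sq, map_mul]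
    _ = π 0 := h2
    _ = 0 := map_zero π
  simp only [map_prod, map_sum, map_mul]
  exact key_identity (fun i => π (X i)) hx (fun i j => π (C (a i j)))
end

section
/- Let S be an idempotent semifield, w ∈ ⋀^d V a tropical Plücker vector, and 1 ≤ d ≤ d' ≤ n. Then the elongation w' ∈ ⋀^{d'}V defined by w'_J = Σ_{I ⊆ J, |I| = d} w_I equals w ∧ (Σ_{|K| = d'−d} e_K), and in particular is a tropical Plücker vector whenever it is nonzero. -/
open Finset

/-- The tropical Plücker relations for a rank-`d` tensor `w ∈ ⋀^d S^n`. -/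
def TropPluckerRel {S : Type*} [Semifield S] (n d : ℕ) (w : Finset (Fin n) → S) : Prop :=
  ∀ A B : Finset (Fin n), A.card = d + 1 → B.card = d - 1 → ∀ p ∈ A \ B,
    ∑ i ∈ A \ B, w (A.erase i) * w (insert i B)
      = ∑ i ∈ (A \ B).erase p, w (A.erase i) * w (insert i B)

/-- The wedge product of multivectors in coordinates: `(w ∧ w')_K = ∑_{I⊆K, |I|=d} w_I w'_{K∖I}`. -/
def wedgeMul {S : Type*} [Semifield S] {n : ℕ} (d : ℕ)
    (w w' : Finset (Fin n) → S) : Finset (Fin n) → S :=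
  fun K => ∑ I ∈ K.powersetCard d, w I * w' (K \ I)


open Finset

section TropOrder
variable {S : Type*} [CommSemiring S]

/-- `a` is dominated by `b` in the idempotent (join) order. -/
def TLE (a b : S) : Prop := a + b = b

theorem tle_refl (hid : ∀ s : S, s + s = s) (a : S) : TLE a a := hid a

theorem tle_trans {a b c : S} (h1 : TLE a b) (h2 : TLE b c) : TLE a c := by
  unfold TLE at *
  calc a + c = a + (b + c) := by rw [h2]
    _ = (a + b) + c := (add_assoc _ _ _).symm
    _ = b + c := by rw [h1]
    _ = c := h2

theorem tle_zero (a : S) : TLE 0 a := zero_add a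

theorem tle_add_right (hid : ∀ s : S, s + s = s) (a b : S) : TLE a (a + b) := by
  unfold TLE
  calc a + (a + b) = (a + a) + b := (add_assoc _ _ _).symm
    _ = a + b := by rw [hid]

theorem tle_add_left (hid : ∀ s : S, s + s = s) (a b : S) : TLE b (a + b) := by
  rw [add_comm a b]; exact tle_add_right hid b a

theorem add_tle {a b c : S} (h1 : TLE a c) (h2 : TLE b c) : TLE (a + b) c := by
  unfold TLE at *
  calc (a + b) + c = a + (b + c) := add_assoc _ _ _
    _ = a + c := by rw [h2]
    _ = c := h1

theorem sum_tle {ι : Type*} {s : Finset ι} {f : ι → S} {c : S}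
    (h : ∀ i ∈ s, TLE (f i) c) : TLE (∑ i ∈ s, f i) c := by
  induction s using Finset.cons_induction with
  | empty => simpa using tle_zero c
  | cons a s ha ih =>
      rw [Finset.sum_cons]
      exact add_tle (h a (Finset.mem_cons_self a s))
        (ih fun i hi => h i (Finset.mem_cons_of_mem hi))

theorem tle_sum_mem (hid : ∀ s : S, s + s = s) {ι : Type*} [DecidableEq ι] {s : Finset ι} (f : ι → S)
    {j : ι} (hj : j ∈ s) : TLE (f j) (∑ i ∈ s, f i) := by
  rw [← Finset.add_sum_erase _ f hj]
  exact tle_add_right hid _ _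

theorem mul_tle_mul (hid : ∀ s : S, s + s = s) {a b c d : S}
    (h1 : TLE a b) (h2 : TLE c d) : TLE (a * c) (b * d) := by
  unfold TLE at *
  have h : b * d = a * c + (a * d + (b * c + b * d)) := by
    conv_lhs => rw [← h1, ← h2]
    ring
  show a * c + b * d = b * d
  conv_lhs => rw [h]
  rw [← add_assoc, hid]
  exact h.symm

theorem mul_tle_mul_left (hid : ∀ s : S, s + s = s) {c d : S} (a : S)
    (h : TLE c d) : TLE (a * c) (a * d) := mul_tle_mul hid (tle_refl hid a) h

theorem tle_antisymm {a b : S} (h1 : TLE a b) (h2 : TLE b a) : a = b := by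
  unfold TLE at *
  calc a = b + a := h2.symm
    _ = a + b := add_comm _ _
    _ = b := h1

theorem add_eq_zero_left (hid : ∀ s : S, s + s = s) {a b : S} (h : a + b = 0) : a = 0 := by
  calc a = a + 0 := (add_zero a).symm
    _ = a + (a + b) := by rw [h]
    _ = (a + a) + b := (add_assoc _ _ _).symm
    _ = a + b := by rw [hid]
    _ = 0 := h

end TropOrder

section Cancel
variable {S : Type*} [Semifield S]

theorem tle_cancel {a b c : S} (hc : c ≠ 0) (h : TLE (a * c) (b * c)) : TLE a b := by
  unfold TLE at *
  have : (a + b) * c = b * c := by rw [add_mul]; exact h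
  exact mul_right_cancel₀ hc this

end Cancel

section Aux
variable {S : Type*} [Semifield S] {n : ℕ}

theorem tle_congr {a a' b b' : S} (ha : a = a') (hb : b = b') (h : TLE a' b') : TLE a b := by
  rw [ha, hb]; exact h

/-- The relation instance in `TLE` form: the pivot term is dominated by the others. -/
theorem rel_tle {e : ℕ} {v : Finset (Fin n) → S}
    (hv : TropPluckerRel n e v) (A₁ B₁ : Finset (Fin n)) (q : Fin n)
    (h1 : A₁.card = e + 1) (h2 : B₁.card = e - 1) (hq1 : q ∈ A₁) (hq2 : q ∉ B₁) :
    TLE (v (A₁.erase q) * v (insert q B₁))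
      (∑ i ∈ (A₁ \ B₁).erase q, v (A₁.erase i) * v (insert i B₁)) := by
  have hmem : q ∈ A₁ \ B₁ := Finset.mem_sdiff.2 ⟨hq1, hq2⟩
  show _ + _ = _
  calc v (A₁.erase q) * v (insert q B₁) + ∑ i ∈ (A₁ \ B₁).erase q, v (A₁.erase i) * v (insert i B₁)
      = ∑ i ∈ A₁ \ B₁, v (A₁.erase i) * v (insert i B₁) :=
        Finset.add_sum_erase _ (fun i => v (A₁.erase i) * v (insert i B₁)) hmem
    _ = _ := hv A₁ B₁ h1 h2 q hmem

/-- The right-hand side of the goal relation: sum over `i ≠ p` of products of elongations. -/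
def Gsum (v : Finset (Fin n) → S) (A B : Finset (Fin n)) (p : Fin n) : S :=
  ∑ i ∈ (A \ B).erase p,
    (∑ x ∈ A.erase i, v ((A.erase i).erase x)) * (∑ y ∈ insert i B, v ((insert i B).erase y))

/-- Every monomial of one of the `G`-products is dominated by `Gsum`. -/
theorem memG (hid : ∀ s : S, s + s = s) {v : Finset (Fin n) → S} {A B : Finset (Fin n)}
    {p i x y : Fin n} (hiA : i ∈ A) (hiB : i ∉ B) (hip : i ≠ p)
    (hx : x ∈ A.erase i) (hy : y ∈ insert i B) :
    TLE (v ((A.erase i).erase x) * v ((insert i B).erase y)) (Gsum v A B p) := by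
  refine tle_trans (mul_tle_mul hid
    (tle_sum_mem hid (fun x => v ((A.erase i).erase x)) hx)
    (tle_sum_mem hid (fun y => v ((insert i B).erase y)) hy)) ?_
  exact tle_sum_mem hid (fun i => (∑ x ∈ A.erase i, v ((A.erase i).erase x)) *
      (∑ y ∈ insert i B, v ((insert i B).erase y)))
    (Finset.mem_erase.2 ⟨hip, Finset.mem_sdiff.2 ⟨hiA, hiB⟩⟩)

end Aux

section Core
variable {S : Type*} [Semifield S] {n : ℕ}

/-- The core quadratic estimate: for `α, β ∈ A ∩ B` distinct, the "junk" monomial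
`v(A∖{α,β})·v(B)` is dominated by `Gsum`. -/
theorem core_bound (hid : ∀ s : S, s + s = s) {e : ℕ} {v : Finset (Fin n) → S}
    (hv : TropPluckerRel n e v) {A B : Finset (Fin n)} (hA : A.card = e + 2) (hB : B.card = e)
    {p α β : Fin n} (hpA : p ∈ A) (hpB : p ∉ B)
    (hαA : α ∈ A) (hαB : α ∈ B) (hβA : β ∈ A) (hβB : β ∈ B) (hαβ : α ≠ β) :
    TLE (v ((A.erase α).erase β) * v B) (Gsum v A B p) := by
  have hpα : p ≠ α := fun h => hpB (h ▸ hαB)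
  have hpβ : p ≠ β := fun h => hpB (h ▸ hβB)
  have h2e : 2 ≤ e := by
    have hsub : ({α, β} : Finset (Fin n)) ⊆ B := by
      intro z hz
      rcases Finset.mem_insert.1 hz with h | h
      · exact h ▸ hαB
      · exact (Finset.mem_singleton.1 h) ▸ hβB
    have hcard := Finset.card_le_card hsub
    rwa [Finset.card_insert_of_notMem (by simp [hαβ]), Finset.card_singleton, hB] at hcard
  set G := Gsum v A B p with hG
  set u := v ((A.erase α).erase β) * v B with hu
  set t' := v ((A.erase p).erase β) * v ((insert p B).erase α) with ht'
  -- R1 : u ≤ t' + G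
  have R1 : TLE u (t' + G) := by
    have key := rel_tle hv (A.erase β) (B.erase α) α
      (by rw [Finset.card_erase_of_mem hβA, hA]; omega)
      (by rw [Finset.card_erase_of_mem hαB, hB])
      (Finset.mem_erase.2 ⟨hαβ, hαA⟩) (Finset.notMem_erase _ _)
    rw [Finset.erase_right_comm, Finset.insert_erase hαB] at key
    refine tle_trans key (sum_tle ?_)
    intro i hi
    rw [Finset.mem_erase, Finset.mem_sdiff, Finset.mem_erase, Finset.mem_erase] at hi
    obtain ⟨hiα, ⟨hiβ, hiA⟩, hi3⟩ := hi
    have hiB : i ∉ B := fun h => hi3 ⟨hiα, h⟩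
    have e2 : insert i (B.erase α) = (insert i B).erase α := (Finset.erase_insert_of_ne hiα).symm
    by_cases hip : i = p
    · subst hip
      rw [Finset.erase_right_comm, e2]
      exact tle_add_right hid t' G
    · rw [Finset.erase_right_comm, e2]
      exact tle_trans
        (memG hid hiA hiB hip (Finset.mem_erase.2 ⟨Ne.symm hiβ, hβA⟩)
          (Finset.mem_insert_of_mem hαB))
        (tle_add_left hid t' G)
  -- C1 : t' * u ≤ G*u + G*G
  have C1 : TLE (t' * u) (G * u + G * G) := by
    have hmemβ : β ∈ (insert p B).erase α :=
      Finset.mem_erase.2 ⟨Ne.symm hαβ, Finset.mem_insert_of_mem hβB⟩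
    have R2 := rel_tle hv (A.erase α) (((insert p B).erase α).erase β) β
      (by rw [Finset.card_erase_of_mem hαA, hA]; omega)
      (by
        rw [Finset.card_erase_of_mem hmemβ,
          Finset.card_erase_of_mem (Finset.mem_insert_of_mem hαB),
          Finset.card_insert_of_notMem hpB, hB]
        omega)
      (Finset.mem_erase.2 ⟨Ne.symm hαβ, hβA⟩) (Finset.notMem_erase _ _)
    rw [Finset.insert_erase hmemβ] at R2
    have expand : t' * u =
        (v ((A.erase p).erase β) * v B) *
          (v ((A.erase α).erase β) * v ((insert p B).erase α)) := by
      rw [ht', hu]; ring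
    rw [expand]
    refine tle_trans (mul_tle_mul_left hid _ R2) ?_
    rw [Finset.mul_sum]
    refine sum_tle ?_
    intro l hl
    rw [Finset.mem_erase, Finset.mem_sdiff, Finset.mem_erase, Finset.mem_erase,
      Finset.mem_erase, Finset.mem_insert] at hl
    obtain ⟨hlβ, ⟨hlα, hlA⟩, hl3⟩ := hl
    have hlpB : ¬(l = p ∨ l ∈ B) := fun h => hl3 ⟨hlβ, hlα, h⟩
    have hlp : l ≠ p := fun h => hlpB (Or.inl h)
    have hlB : l ∉ B := fun h => hlpB (Or.inr h)
    have hlZ : l ∉ (B.erase α).erase β :=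
      fun h => hlB (Finset.mem_of_mem_erase (Finset.mem_of_mem_erase h))
    have hβBα : β ∈ B.erase α := Finset.mem_erase.2 ⟨Ne.symm hαβ, hβB⟩
    have eqB : insert l (((insert p B).erase α).erase β)
        = insert p (insert l ((B.erase α).erase β)) := by
      rw [Finset.erase_insert_of_ne hpα, Finset.erase_insert_of_ne hpβ, Finset.insert_comm]
    have R3 := rel_tle hv (A.erase β) (insert l ((B.erase α).erase β)) p
      (by rw [Finset.card_erase_of_mem hβA, hA]; omega)
      (by
        rw [Finset.card_insert_of_notMem hlZ, Finset.card_erase_of_mem hβBα,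
          Finset.card_erase_of_mem hαB, hB]
        omega)
      (Finset.mem_erase.2 ⟨hpβ, hpA⟩)
      (by
        intro hmem
        rcases Finset.mem_insert.1 hmem with h | h
        · exact hlp h.symm
        · exact hpB (Finset.mem_of_mem_erase (Finset.mem_of_mem_erase h)))
    rw [show (A.erase β).erase p = (A.erase p).erase β from Finset.erase_right_comm,
      ← eqB] at R3
    have expand2 : (v ((A.erase p).erase β) * v B) *
          (v ((A.erase α).erase l) * v (insert l (((insert p B).erase α).erase β)))
        = (v B * v ((A.erase α).erase l)) *
          (v ((A.erase p).erase β) * v (insert l (((insert p B).erase α).erase β))) := by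
      ring
    rw [expand2]
    refine tle_trans (mul_tle_mul_left hid _ R3) ?_
    rw [Finset.mul_sum]
    refine sum_tle ?_
    intro i hi
    rw [Finset.mem_erase, Finset.mem_sdiff, Finset.mem_erase] at hi
    obtain ⟨hip, ⟨⟨hiβ, hiA⟩, hi3⟩⟩ := hi
    have hinotins := hi3
    have hil : i ≠ l := by
      intro h; exact hi3 (by rw [h]; exact Finset.mem_insert_self l _)
    have hiZ : i ∉ (B.erase α).erase β := fun h => hi3 (Finset.mem_insert_of_mem h)
    by_cases hiα : i = α
    · -- the `G·u` child
      subst hiα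
      have eq2 : insert i (insert l ((B.erase i).erase β)) = insert l (B.erase β) := by
        rw [Finset.insert_comm, Finset.erase_right_comm,
          Finset.insert_erase (Finset.mem_erase.2 ⟨hαβ, hαB⟩)]
      rw [show (A.erase β).erase i = (A.erase i).erase β from Finset.erase_right_comm, eq2]
      have expand3 : (v B * v ((A.erase i).erase l)) *
            (v ((A.erase i).erase β) * v (insert l (B.erase β)))
          = (v ((A.erase i).erase l) * v (insert l (B.erase β))) * u := by
        rw [hu]; ring
      rw [expand3]
      have Gm : TLE (v ((A.erase i).erase l) * v (insert l (B.erase β))) G := by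
        rw [Finset.erase_right_comm,
          show insert l (B.erase β) = (insert l B).erase β from
            (Finset.erase_insert_of_ne hlβ).symm]
        exact memG hid hlA hlB hlp (Finset.mem_erase.2 ⟨Ne.symm hlα, hαA⟩)
          (Finset.mem_insert_of_mem hβB)
      exact tle_trans (mul_tle_mul hid Gm (tle_refl hid u)) (tle_add_right hid _ _)
    · -- the `G·G` children via R4
      have hiB : i ∉ B := by
        intro h
        exact hiZ (Finset.mem_erase.2 ⟨hiβ, Finset.mem_erase.2 ⟨fun hh => hiα hh, h⟩⟩)
      have hαi : α ≠ i := fun h => hiα h.symm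
      have hαl : α ≠ l := fun h => hlα h.symm
      have hαZ : α ∉ (B.erase α).erase β :=
        fun h => (Finset.notMem_erase α B) (Finset.mem_of_mem_erase h)
      have hαA1 : α ∉ insert i (insert l ((B.erase α).erase β)) := by
        intro h
        rcases Finset.mem_insert.1 h with h | h
        · exact hαi h
        · rcases Finset.mem_insert.1 h with h | h
          · exact hαl h
          · exact hαZ h
      have hiA1 : i ∉ insert l ((B.erase α).erase β) := by
        intro h
        rcases Finset.mem_insert.1 h with h | h
        · exact hil h
        · exact hiZ h
      have R4 := rel_tle hv (insert α (insert i (insert l ((B.erase α).erase β)))) (B.erase α) α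
        (by
          rw [Finset.card_insert_of_notMem hαA1, Finset.card_insert_of_notMem hiA1,
            Finset.card_insert_of_notMem hlZ, Finset.card_erase_of_mem hβBα,
            Finset.card_erase_of_mem hαB, hB]
          omega)
        (by rw [Finset.card_erase_of_mem hαB, hB])
        (Finset.mem_insert_self _ _) (Finset.notMem_erase _ _)
      rw [Finset.erase_insert hαA1, Finset.insert_erase hαB] at R4
      have expand4 : (v B * v ((A.erase α).erase l)) *
            (v ((A.erase β).erase i) * v (insert i (insert l ((B.erase α).erase β))))
          = (v ((A.erase α).erase l) * v ((A.erase β).erase i)) *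
            (v (insert i (insert l ((B.erase α).erase β))) * v B) := by
        ring
      rw [expand4]
      refine tle_trans (mul_tle_mul_left hid _ R4) ?_
      rw [Finset.mul_sum]
      refine sum_tle ?_
      intro j hj
      rw [Finset.mem_erase, Finset.mem_sdiff] at hj
      obtain ⟨hjα, hjmem, hjB'⟩ := hj
      have hj2 : j = i ∨ j = l := by
        rcases Finset.mem_insert.1 hjmem with h | h
        · exact absurd h hjα
        · rcases Finset.mem_insert.1 h with h | h
          · exact Or.inl h
          · rcases Finset.mem_insert.1 h with h | h
            · exact Or.inr h
            · exact absurd (Finset.mem_of_mem_erase h) hjB'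
      have hαZB : insert α ((B.erase α).erase β) = B.erase β := by
        rw [Finset.erase_right_comm, Finset.insert_erase (Finset.mem_erase.2 ⟨hαβ, hαB⟩)]
      rcases hj2 with hj | hj
      · -- j = i
        subst hj
        have eqA : (insert α (insert j (insert l ((B.erase α).erase β)))).erase j
            = insert l (B.erase β) := by
          rw [Finset.erase_insert_of_ne hαi, Finset.erase_insert hiA1, Finset.insert_comm, hαZB]
        rw [eqA]
        have expand5 : (v ((A.erase α).erase l) * v ((A.erase β).erase j)) *
              (v (insert l (B.erase β)) * v (insert j (B.erase α)))
            = (v ((A.erase α).erase l) * v (insert l (B.erase β))) *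
              (v ((A.erase β).erase j) * v (insert j (B.erase α))) := by
          ring
        rw [expand5]
        have Gm1 : TLE (v ((A.erase α).erase l) * v (insert l (B.erase β))) G := by
          rw [Finset.erase_right_comm,
            show insert l (B.erase β) = (insert l B).erase β from
              (Finset.erase_insert_of_ne hlβ).symm]
          exact memG hid hlA hlB hlp (Finset.mem_erase.2 ⟨Ne.symm hlα, hαA⟩)
            (Finset.mem_insert_of_mem hβB)
        have Gm2 : TLE (v ((A.erase β).erase j) * v (insert j (B.erase α))) G := by
          rw [Finset.erase_right_comm,
            show insert j (B.erase α) = (insert j B).erase α from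
              (Finset.erase_insert_of_ne (fun h => hiα h)).symm]
          exact memG hid hiA hiB hip (Finset.mem_erase.2 ⟨Ne.symm hiβ, hβA⟩)
            (Finset.mem_insert_of_mem hαB)
        exact tle_trans (mul_tle_mul hid Gm1 Gm2) (tle_add_left hid _ _)
      · -- j = l
        subst hj
        have eqA : (insert α (insert i (insert j ((B.erase α).erase β)))).erase j
            = insert i (B.erase β) := by
          rw [Finset.erase_insert_of_ne hαl, Finset.erase_insert_of_ne hil,
            Finset.erase_insert hlZ, Finset.insert_comm, hαZB]
        rw [eqA]
        have expand5 : (v ((A.erase α).erase j) * v ((A.erase β).erase i)) *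
              (v (insert i (B.erase β)) * v (insert j (B.erase α)))
            = (v ((A.erase α).erase j) * v (insert j (B.erase α))) *
              (v ((A.erase β).erase i) * v (insert i (B.erase β))) := by
          ring
        rw [expand5]
        have Gm1 : TLE (v ((A.erase α).erase j) * v (insert j (B.erase α))) G := by
          rw [Finset.erase_right_comm,
            show insert j (B.erase α) = (insert j B).erase α from
              (Finset.erase_insert_of_ne hlα).symm]
          exact memG hid hlA hlB hlp (Finset.mem_erase.2 ⟨Ne.symm hlα, hαA⟩)
            (Finset.mem_insert_of_mem hαB)
        have Gm2 : TLE (v ((A.erase β).erase i) * v (insert i (B.erase β))) G := by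
          rw [Finset.erase_right_comm,
            show insert i (B.erase β) = (insert i B).erase β from
              (Finset.erase_insert_of_ne hiβ).symm]
          exact memG hid hiA hiB hip (Finset.mem_erase.2 ⟨Ne.symm hiβ, hβA⟩)
            (Finset.mem_insert_of_mem hβB)
        exact tle_trans (mul_tle_mul hid Gm1 Gm2) (tle_add_left hid _ _)
  -- conclude by the quotient trick
  have step3 : TLE (u * u) (G * u + G * G) := by
    refine tle_trans (mul_tle_mul hid R1 (tle_refl hid u)) ?_
    rw [add_mul]
    exact add_tle C1 (tle_add_right hid (G * u) (G * G))
  by_cases h0 : u + G = 0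
  · have hu0 : u = 0 := add_eq_zero_left hid h0
    rw [hu0]
    exact tle_zero G
  · refine tle_cancel h0 ?_
    rw [mul_add, mul_add]
    refine add_tle step3 ?_
    rw [mul_comm u G]
    exact tle_add_right hid (G * u) (G * G)

end Core

section Step
variable {S : Type*} [Semifield S] {n : ℕ}

/-- Each monomial of `T_p` is dominated by `Gsum`. -/
theorem mono_bound (hid : ∀ s : S, s + s = s) {e : ℕ} {v : Finset (Fin n) → S}
    (hv : TropPluckerRel n e v) {A B : Finset (Fin n)} (hA : A.card = e + 2) (hB : B.card = e)
    {p : Fin n} (hpA : p ∈ A) (hpB : p ∉ B) {x y : Fin n}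
    (hx : x ∈ A.erase p) (hy : y ∈ insert p B) :
    TLE (v ((A.erase p).erase x) * v ((insert p B).erase y)) (Gsum v A B p) := by
  obtain ⟨hxp, hxA⟩ := Finset.mem_erase.1 hx
  rcases Finset.mem_insert.1 hy with hyp | hyB
  · -- y = p
    rw [hyp, Finset.erase_insert hpB]
    by_cases hxB : x ∈ B
    · -- relation (A.erase p, B.erase x, pivot x)
      have key := rel_tle hv (A.erase p) (B.erase x) x
        (by rw [Finset.card_erase_of_mem hpA, hA]; omega)
        (by rw [Finset.card_erase_of_mem hxB, hB])
        hx (Finset.notMem_erase _ _)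
      rw [Finset.insert_erase hxB] at key
      refine tle_trans key (sum_tle ?_)
      intro i hi
      rw [Finset.mem_erase, Finset.mem_sdiff, Finset.mem_erase, Finset.mem_erase] at hi
      obtain ⟨hix, ⟨hip, hiA⟩, hi3⟩ := hi
      have hiB : i ∉ B := fun h => hi3 ⟨hix, h⟩
      rw [Finset.erase_right_comm,
        show insert i (B.erase x) = (insert i B).erase x from
          (Finset.erase_insert_of_ne hix).symm]
      exact memG hid hiA hiB hip (Finset.mem_erase.2 ⟨Ne.symm hip, hpA⟩)
        (Finset.mem_insert_of_mem hxB)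
    · -- direct
      have h := memG (v := v) (p := p) hid hxA hxB hxp
        (Finset.mem_erase.2 ⟨Ne.symm hxp, hpA⟩) (Finset.mem_insert_self x B)
      rw [Finset.erase_insert hxB, Finset.erase_right_comm] at h
      exact h
  · -- y ∈ B
    have hyp : y ≠ p := fun h => hpB (h ▸ hyB)
    have key := rel_tle hv (A.erase x) (B.erase y) p
      (by rw [Finset.card_erase_of_mem hxA, hA]; omega)
      (by rw [Finset.card_erase_of_mem hyB, hB])
      (Finset.mem_erase.2 ⟨Ne.symm hxp, hpA⟩)
      (fun h => hpB (Finset.mem_of_mem_erase h))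
    rw [Finset.erase_right_comm,
      show insert p (B.erase y) = (insert p B).erase y from
        (Finset.erase_insert_of_ne (Ne.symm hyp)).symm] at key
    refine tle_trans key (sum_tle ?_)
    intro i hi
    rw [Finset.mem_erase, Finset.mem_sdiff, Finset.mem_erase, Finset.mem_erase] at hi
    obtain ⟨hip, ⟨hix, hiA⟩, hi3⟩ := hi
    by_cases hiB : i ∈ B
    · have hiy : i = y := by
        by_contra h
        exact hi3 ⟨h, hiB⟩
      subst hiy
      rw [Finset.insert_erase hiB]
      by_cases hxB : x ∈ B
      · exact core_bound hid hv hA hB hpA hpB hxA hxB hiA hiB (Ne.symm hix)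
      · have h := memG (v := v) (p := p) hid hxA hxB hxp
          (Finset.mem_erase.2 ⟨hix, hiA⟩) (Finset.mem_insert_self x B)
        rw [Finset.erase_insert hxB] at h
        exact h
    · have hiy : i ≠ y := fun h => hiB (h ▸ hyB)
      rw [Finset.erase_right_comm,
        show insert i (B.erase y) = (insert i B).erase y from
          (Finset.erase_insert_of_ne hiy).symm]
      exact memG hid hiA hiB hip (Finset.mem_erase.2 ⟨Ne.symm hix, hxA⟩)
        (Finset.mem_insert_of_mem hyB)

/-- Single-step elongation preserves the tropical Plücker relations. -/
theorem tropPlucker_step (hid : ∀ s : S, s + s = s) {e : ℕ} (he : 1 ≤ e)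
    (v : Finset (Fin n) → S) (hv : TropPluckerRel n e v) :
    TropPluckerRel n (e + 1) (fun J => ∑ j ∈ J, v (J.erase j)) := by
  intro A B hA hB p hp
  have hp' := hp
  rw [Finset.mem_sdiff] at hp'
  obtain ⟨hpA, hpB⟩ := hp'
  have hA' : A.card = e + 2 := hA
  have hB' : B.card = e := by omega
  dsimp only
  rw [← Finset.add_sum_erase _
    (fun i => (∑ j ∈ A.erase i, v ((A.erase i).erase j)) *
      (∑ j ∈ insert i B, v ((insert i B).erase j))) hp]
  show TLE _ _
  rw [Finset.sum_mul_sum]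
  refine sum_tle fun x hx => sum_tle fun y hy => ?_
  exact mono_bound hid hv hA' hB' hpA hpB hx hy

end Step

section Final
variable {S : Type*} [Semifield S] {n : ℕ}

/-- The Plücker relations only look at sets of cardinality `e`. -/
theorem tropPlucker_congr {e : ℕ} (he : 1 ≤ e) {f g : Finset (Fin n) → S}
    (h : ∀ K : Finset (Fin n), K.card = e → f K = g K) (hf : TropPluckerRel n e f) :
    TropPluckerRel n e g := by
  intro A B hA hB p hp
  have hrw : ∀ i ∈ A \ B, g (A.erase i) * g (insert i B) = f (A.erase i) * f (insert i B) := by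
    intro i hi
    rw [Finset.mem_sdiff] at hi
    rw [← h (A.erase i) (by rw [Finset.card_erase_of_mem hi.1, hA]; omega),
      ← h (insert i B) (by rw [Finset.card_insert_of_notMem hi.2, hB]; omega)]
  rw [Finset.sum_congr rfl hrw,
    Finset.sum_congr rfl (fun i hi => hrw i (Finset.mem_of_mem_erase hi)),
    hf A B hA hB p hp]

theorem elongation_plucker (hid : ∀ s : S, s + s = s) {d : ℕ} (hd : 1 ≤ d)
    {w : Finset (Fin n) → S} (hpl : TropPluckerRel n d w) (k : ℕ) :
    TropPluckerRel n (d + k) (fun J => ∑ I ∈ J.powersetCard d, w I) := by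
  induction k with
  | zero =>
    refine tropPlucker_congr hd (f := w) ?_ hpl
    intro K hK
    rw [← hK, Finset.powersetCard_self, Finset.sum_singleton]
  | succ k ih =>
    have he : 1 ≤ d + k := le_trans hd (Nat.le_add_right d k)
    have hs := tropPlucker_step hid he _ ih
    refine tropPlucker_congr (show 1 ≤ d + (k + 1) by omega)
      (f := fun J => ∑ j ∈ J, ∑ I ∈ (J.erase j).powersetCard d, w I) ?_ hs
    intro K hK
    apply tle_antisymm
    · refine sum_tle fun j hj => sum_tle fun I hI => ?_
      rw [Finset.mem_powersetCard] at hI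
      exact tle_sum_mem hid w (Finset.mem_powersetCard.2
        ⟨hI.1.trans (Finset.erase_subset _ _), hI.2⟩)
    · refine sum_tle fun I hI => ?_
      rw [Finset.mem_powersetCard] at hI
      have hne : ∃ j ∈ K, j ∉ I := by
        by_contra hcon
        push_neg at hcon
        have : K.card ≤ I.card := Finset.card_le_card hcon
        omega
      obtain ⟨j, hjK, hjI⟩ := hne
      exact tle_trans
        (tle_sum_mem hid w (Finset.mem_powersetCard.2
          ⟨Finset.subset_erase.2 ⟨hI.1, hjI⟩, hI.2⟩))
        (tle_sum_mem hid (fun j => ∑ I ∈ (K.erase j).powersetCard d, w I) hjK)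

end Final

/-- the elongation `w'_J = ∑_{I ⊆ J, |I| = d} w_I` of a tropical Plücker
vector `w` of rank `d` to rank `d'` equals `w ∧ (∑_{|K| = d'−d} e_K)` (on sets of
cardinality `d'`), and in particular it is a tropical Plücker vector whenever nonzero. -/
theorem elongation_eq_wedge_with_uniform {S : Type*} [Semifield S]
    (hid : ∀ s : S, s + s = s) (n d d' : ℕ) (hd : 1 ≤ d) (hdd' : d ≤ d') (hd'n : d' ≤ n)
    (w : Finset (Fin n) → S)
    (hw : ∃ I : Finset (Fin n), I.card = d ∧ w I ≠ 0)
    (hpl : TropPluckerRel n d w) :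
    (∀ J : Finset (Fin n), J.card = d' →
        (∑ I ∈ J.powersetCard d, w I)
          = wedgeMul d w (fun K => if K.card = d' - d then (1 : S) else 0) J)
    ∧ ((∃ J : Finset (Fin n), J.card = d' ∧ (∑ I ∈ J.powersetCard d, w I) ≠ 0) →
        TropPluckerRel n d' (fun J => ∑ I ∈ J.powersetCard d, w I)) := by
  constructor
  · intro J hJ
    unfold wedgeMul
    refine Finset.sum_congr rfl fun I hI => ?_
    rw [Finset.mem_powersetCard] at hI
    show w I = w I * (if (J \ I).card = d' - d then 1 else 0)
    rw [Finset.card_sdiff_of_subset hI.1, hI.2, hJ, if_pos rfl, mul_one]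
  · intro _
    have main := elongation_plucker hid hd hpl (d' - d)
    rwa [Nat.add_sub_cancel' hdd'] at main
end

section
/- Let S be an idempotent semifield, w ∈ ⋀^d V nonzero, and Q_w = V^∨ / B(−∧w) the quotient by the bend relations of wedge multiplication by w. Then ⋀^d Q_w is presented as the quotient of ⋀^d V^∨ by the congruence generated by the bend relations of the expressions Σ_{i ∈ A∖B} w_{A−i} x_{B+i}, for A ∈ C([n],d+1) and B ∈ C([n],d−1). In particular, taking B = A∖{p,q} yields the relation w_{A−p} x_{A−q} = w_{A−q} x_{A−p} in ⋀^d Q_w. -/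
open Finset

/-- The `S`-module congruence generated by a relation `r`: the smallest equivalence
relation containing `r` and compatible with addition and scalar multiplication. -/
inductive ModCongr (S : Type*) [Semiring S] {M : Type*} [AddCommMonoid M] [Module S M]
    (r : M → M → Prop) : M → M → Prop
  | of {x y} : r x y → ModCongr S r x y
  | refl (x) : ModCongr S r x x
  | symm {x y} : ModCongr S r x y → ModCongr S r y x
  | trans {x y z} : ModCongr S r x y → ModCongr S r y z → ModCongr S r x z
  | add {x y x' y'} : ModCongr S r x y → ModCongr S r x' y' →
      ModCongr S r (x + x') (y + y')
  | smul (s : S) {x y} : ModCongr S r x y → ModCongr S r (s • x) (s • y)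

/-- Index type for the standard basis of `⋀^d S^n`: `d`-element subsets of `[n]`. -/
abbrev WIdx (n d : ℕ) := {I : Finset (Fin n) // I.card = d}

/-- The element `x_B ∧ (∑_{i ∈ T} w_{J−i} x_i)` of `⋀^d (S^n)^∨` in coordinates:
its `K`-coordinate is `∑_{i ∈ T∖B, K = B+i} w_{J−i}`. -/
def wedgeElt {S : Type*} [Semifield S] {n : ℕ} (d : ℕ) (w : Finset (Fin n) → S)
    (T J B : Finset (Fin n)) : WIdx n d → S :=
  fun K => ∑ i ∈ T \ B, if K.1 = insert i B then w (J.erase i) else 0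

/-- The generating relations of the congruence presenting `⋀^d Q_w` as a quotient of
`⋀^d (S^n)^∨`: the bend relations of the circuit forms `α_J = ∑_{i∈J} w_{J−i} x_i`
(`J ∈ C([n],d+1)`), wedged with square-free monomials `x_B` of degree `d−1`. -/
def WedgeBendRel {S : Type*} [Semifield S] (n d : ℕ) (w : Finset (Fin n) → S) :
    (WIdx n d → S) → (WIdx n d → S) → Prop :=
  fun p q => ∃ J B : Finset (Fin n), ∃ j ∈ J, J.card = d + 1 ∧ B.card = d - 1 ∧
    p = wedgeElt d w J J B ∧ q = wedgeElt d w (J.erase j) J B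

/-- The basis vector `x_I` of `⋀^d (S^n)^∨` in coordinates. -/
def deltaVec (S : Type*) [Semifield S] (n d : ℕ) (I : Finset (Fin n)) : WIdx n d → S :=
  fun K => if K.1 = I then 1 else 0

/-- The bend relations of the expressions `∑_{i ∈ A∖B} w_{A−i} x_{B+i}` for
`A ∈ C([n],d+1)`, `B ∈ C([n],d−1)`: any single term `l ∈ A∖B` may be dropped. -/
def ExprBendRel {S : Type*} [Semifield S] (n d : ℕ) (w : Finset (Fin n) → S) :
    (WIdx n d → S) → (WIdx n d → S) → Prop :=
  fun p q => ∃ A B : Finset (Fin n), ∃ l ∈ A \ B, A.card = d + 1 ∧ B.card = d - 1 ∧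
    p = wedgeElt d w A A B ∧ q = wedgeElt d w (A.erase l) A B

lemma modCongr_mono {S : Type*} [Semiring S] {M : Type*} [AddCommMonoid M] [Module S M]
    {r r' : M → M → Prop} (h : ∀ x y, r x y → ModCongr S r' x y) :
    ∀ {x y}, ModCongr S r x y → ModCongr S r' x y := by
  intro x y hxy
  induction hxy with
  | of h' => exact h _ _ h'
  | refl x => exact .refl x
  | symm _ ih => exact ih.symm
  | trans _ _ ih1 ih2 => exact ih1.trans ih2
  | add _ _ ih1 ih2 => exact ih1.add ih2
  | smul s _ ih => exact ih.smul s

lemma wedgeElt_erase_of_mem {S : Type*} [Semifield S] {n : ℕ} (d : ℕ)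
    (w : Finset (Fin n) → S) {J B : Finset (Fin n)} {j : Fin n} (hj : j ∈ B) :
    wedgeElt d w (J.erase j) J B = wedgeElt d w J J B := by
  funext K
  unfold wedgeElt
  congr 1
  ext x
  simp only [Finset.mem_sdiff, Finset.mem_erase]
  constructor
  · rintro ⟨⟨_, h1⟩, h2⟩; exact ⟨h1, h2⟩
  · rintro ⟨h1, h2⟩
    exact ⟨⟨fun hxj => h2 (hxj ▸ hj), h1⟩, h2⟩

lemma wedgeElt_pair {S : Type*} [Semifield S] {n : ℕ} (d : ℕ)
    (w : Finset (Fin n) → S) {A : Finset (Fin n)} {p q : Fin n}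
    (hp : p ∈ A) (hq : q ∈ A) (hpq : p ≠ q) :
    wedgeElt d w (A.erase q) A ((A.erase p).erase q)
      = w (A.erase p) • deltaVec S n d (A.erase q) := by
  have hset : (A.erase q) \ ((A.erase p).erase q) = {p} := by
    ext x
    simp only [Finset.mem_sdiff, Finset.mem_erase, Finset.mem_singleton]
    constructor
    · rintro ⟨⟨hxq, hxA⟩, h2⟩
      by_contra hxp
      exact h2 ⟨hxq, hxp, hxA⟩
    · rintro rfl
      exact ⟨⟨hpq, hp⟩, fun h => h.2.1 rfl⟩
  have hins : insert p ((A.erase p).erase q) = A.erase q := by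
    ext x
    simp only [Finset.mem_insert, Finset.mem_erase]
    constructor
    · rintro (rfl | ⟨hxq, _, hxA⟩)
      · exact ⟨hpq, hp⟩
      · exact ⟨hxq, hxA⟩
    · rintro ⟨hxq, hxA⟩
      by_cases hxp : x = p
      · exact Or.inl hxp
      · exact Or.inr ⟨hxq, hxp, hxA⟩
  funext K
  unfold wedgeElt deltaVec
  rw [hset, Finset.sum_singleton, hins]
  simp [Pi.smul_apply, smul_eq_mul, mul_ite, mul_one, mul_zero]

/-- `⋀^d Q_w` is presented as the quotient of `⋀^d (S^n)^∨` by the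
congruence generated by the bend relations of the expressions
`∑_{i∈A∖B} w_{A−i} x_{B+i}` (`A ∈ C([n],d+1)`, `B ∈ C([n],d−1)`): this congruence
coincides with the defining congruence of `⋀^d Q_w`.  In particular, taking
`B = A∖{p,q}` yields the relation `w_{A−p} x_{A−q} = w_{A−q} x_{A−p}` in `⋀^d Q_w`. -/
theorem top_wedge_Qw_presentation {S : Type*} [Semifield S]
    (hid : ∀ s : S, s + s = s) (n d : ℕ) (w : Finset (Fin n) → S)
    (hw : ∃ I : Finset (Fin n), I.card = d ∧ w I ≠ 0) :
    (∀ p q : WIdx n d → S,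
        ModCongr S (WedgeBendRel n d w) p q ↔ ModCongr S (ExprBendRel n d w) p q)
    ∧ (∀ A : Finset (Fin n), A.card = d + 1 → ∀ p ∈ A, ∀ q ∈ A, p ≠ q →
        ModCongr S (WedgeBendRel n d w)
          (w (A.erase p) • deltaVec S n d (A.erase q))
          (w (A.erase q) • deltaVec S n d (A.erase p))) := by
  constructor
  · intro p q
    constructor
    · refine modCongr_mono (fun x y hxy => ?_)
      obtain ⟨J, B, j, hj, hJ, hB, hx, hy⟩ := hxy
      by_cases hjB : j ∈ B
      · subst hx hy
        rw [wedgeElt_erase_of_mem d w hjB]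
        exact .refl _
      · exact .of ⟨J, B, j, Finset.mem_sdiff.mpr ⟨hj, hjB⟩, hJ, hB, hx, hy⟩
    · refine modCongr_mono (fun x y hxy => ?_)
      obtain ⟨A, B, l, hl, hA, hB, hx, hy⟩ := hxy
      exact .of ⟨A, B, l, (Finset.mem_sdiff.mp hl).1, hA, hB, hx, hy⟩
  · intro A hA p hp q hq hpq
    set B : Finset (Fin n) := (A.erase p).erase q with hBdef
    have hqA : q ∈ A.erase p := Finset.mem_erase.mpr ⟨fun h => hpq (h ▸ rfl), hq⟩
    have hB : B.card = d - 1 := by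
      rw [hBdef, Finset.card_erase_of_mem hqA, Finset.card_erase_of_mem hp, hA]
      simp
    have g1 : ModCongr S (WedgeBendRel n d w)
        (wedgeElt d w A A B) (wedgeElt d w (A.erase q) A B) :=
      .of ⟨A, B, q, hq, hA, hB, rfl, rfl⟩
    have g2 : ModCongr S (WedgeBendRel n d w)
        (wedgeElt d w A A B) (wedgeElt d w (A.erase p) A B) :=
      .of ⟨A, B, p, hp, hA, hB, rfl, rfl⟩
    have e1 : wedgeElt d w (A.erase q) A B = w (A.erase p) • deltaVec S n d (A.erase q) :=
      wedgeElt_pair d w hp hq hpq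
    have e2 : wedgeElt d w (A.erase p) A B = w (A.erase q) • deltaVec S n d (A.erase p) := by
      have hB' : B = (A.erase q).erase p := by
        rw [hBdef, Finset.erase_right_comm]
      rw [hB']
      exact wedgeElt_pair d w hq hp hpq.symm
    rw [← e1, ← e2]
    exact g1.symm.trans g2
end

section
/- Let S be an idempotent semifield and w = Σ w_I e_I ∈ ⋀^d V nonzero, with Q_w = V^∨/B(−∧w). In ⋀^d Q_w, if w_I = 0 then the image of x_I is 0; conversely, if at least one x_J is nonzero in ⋀^d Q_w, then x_I = 0 in ⋀^d Q_w implies w_I = 0. -/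
open Finset

namespace VanishAux

variable {S : Type*} [Semifield S] {n d : ℕ} {w : Finset (Fin n) → S}

local notation "Cng" => ModCongr S (WedgeBendRel n d w)

lemma cng_smul_zero {x : WIdx n d → S} (h : Cng x 0) (c : S) : Cng (c • x) 0 := by
  have h2 := ModCongr.smul (r := WedgeBendRel n d w) c h
  rwa [smul_zero] at h2

lemma cng_of_smul {x : WIdx n d → S} {c : S} (hc : c ≠ 0) (h : Cng (c • x) 0) : Cng x 0 := by
  have h2 := cng_smul_zero h c⁻¹
  rwa [smul_smul, inv_mul_cancel₀ hc, one_smul] at h2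

lemma cng_sum_zero {ι : Type*} (s : Finset ι) (f : ι → (WIdx n d → S))
    (h : ∀ i ∈ s, Cng (f i) 0) : Cng (∑ i ∈ s, f i) 0 := by
  induction s using Finset.cons_induction with
  | empty => simpa using ModCongr.refl (r := WedgeBendRel n d w) 0
  | cons a s ha ih =>
    rw [Finset.sum_cons]
    have h2 := ModCongr.add (h a (Finset.mem_cons_self a s))
      (ih fun i hi => h i (Finset.mem_cons_of_mem hi))
    simpa using h2

lemma wedge_eq (T J B : Finset (Fin n)) :
    wedgeElt (S := S) d w T J B
      = ∑ i ∈ T \ B, w (J.erase i) • deltaVec S n d (insert i B) := by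
  funext K
  simp [wedgeElt, deltaVec, Finset.sum_apply, mul_ite, mul_one, mul_zero]

/-- The "small" instance of the bend relations: if `w I = 0`, `j ∈ I`, `k ∉ I` and
`w (insert k (I.erase j)) ≠ 0`, then `x_I ≡ 0`. -/
lemma small {I : Finset (Fin n)} (hI : I.card = d) {j k : Fin n} (hj : j ∈ I) (hk : k ∉ I)
    (hwI : w I = 0) (hwA : w (insert k (I.erase j)) ≠ 0) :
    Cng (deltaVec S n d I) 0 := by
  have hne : j ≠ k := fun h => hk (h ▸ hj)
  set J := insert k I with hJ
  set B := I.erase j with hB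
  have hJcard : J.card = d + 1 := by rw [hJ, Finset.card_insert_of_notMem hk, hI]
  have hBcard : B.card = d - 1 := by rw [hB, Finset.card_erase_of_mem hj, hI]
  have hjJ : j ∈ J := Finset.mem_insert_of_mem hj
  have hgen : Cng (wedgeElt d w J J B) (wedgeElt d w (J.erase j) J B) :=
    ModCongr.of ⟨J, B, j, hjJ, hJcard, hBcard, rfl, rfl⟩
  have h1 : J \ B = insert k {j} := by
    ext a
    simp only [hJ, hB, Finset.mem_sdiff, Finset.mem_insert, Finset.mem_erase,
      Finset.mem_singleton]
    constructor
    · rintro ⟨rfl | haI, h2⟩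
      · exact Or.inl rfl
      · right
        by_contra hne2
        exact h2 ⟨hne2, haI⟩
    · rintro (rfl | rfl)
      · exact ⟨Or.inl rfl, fun h => hk h.2⟩
      · exact ⟨Or.inr hj, fun h => h.1 rfl⟩
  have hJj : J.erase j = insert k B := by
    rw [hJ, hB, Finset.erase_insert_of_ne hne.symm]
  have h2 : (J.erase j) \ B = {k} := by
    rw [hJj]
    ext a
    simp only [Finset.mem_sdiff, Finset.mem_insert, Finset.mem_singleton]
    constructor
    · rintro ⟨rfl | haB, h2⟩
      · exact rfl
      · exact absurd haB h2
    · rintro rfl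
      exact ⟨Or.inl rfl, fun h => hk (Finset.mem_of_mem_erase h)⟩
  have hkj : k ∉ ({j} : Finset (Fin n)) := by simp [hne.symm]
  rw [wedge_eq, wedge_eq, h1, h2, Finset.sum_insert hkj, Finset.sum_singleton,
    Finset.sum_singleton] at hgen
  have hJk : J.erase k = I := Finset.erase_insert hk
  have hIB : insert j B = I := Finset.insert_erase hj
  rw [hJk, hJj, hIB, hwI, zero_smul, zero_add] at hgen
  exact cng_of_smul hwA hgen

/-- The "big" instance of the bend relations: if all `x_{insert i (I.erase j)}` vanish
for `i ∈ K \ I`, then `w K • x_I ≡ 0`. -/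
lemma big {I K : Finset (Fin n)} (hI : I.card = d) (hK : K.card = d)
    {j : Fin n} (hjI : j ∈ I) (hjK : j ∉ K)
    (hall : ∀ i ∈ K \ I, Cng (deltaVec S n d (insert i (I.erase j))) 0) :
    Cng (w K • deltaVec S n d I) 0 := by
  set J := insert j K with hJ
  set B := I.erase j with hB
  have hJcard : J.card = d + 1 := by rw [hJ, Finset.card_insert_of_notMem hjK, hK]
  have hBcard : B.card = d - 1 := by rw [hB, Finset.card_erase_of_mem hjI, hI]
  have hjJ : j ∈ J := Finset.mem_insert_self j K
  have hgen : Cng (wedgeElt d w J J B) (wedgeElt d w (J.erase j) J B) :=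
    ModCongr.of ⟨J, B, j, hjJ, hJcard, hBcard, rfl, rfl⟩
  have h1 : J \ B = insert j (K \ I) := by
    ext a
    simp only [hJ, hB, Finset.mem_sdiff, Finset.mem_insert, Finset.mem_erase]
    constructor
    · rintro ⟨rfl | haK, h2⟩
      · exact Or.inl rfl
      · by_cases haj : a = j
        · exact Or.inl haj
        · exact Or.inr ⟨haK, fun haI => h2 ⟨haj, haI⟩⟩
    · rintro (rfl | ⟨haK, haI⟩)
      · exact ⟨Or.inl rfl, fun h => h.1 rfl⟩
      · exact ⟨Or.inr haK, fun h => haI h.2⟩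
  have hJj : J.erase j = K := Finset.erase_insert hjK
  have h2 : (J.erase j) \ B = K \ I := by
    rw [hJj, hB]
    ext a
    simp only [Finset.mem_sdiff, Finset.mem_erase]
    constructor
    · rintro ⟨haK, h2⟩
      refine ⟨haK, fun haI => h2 ⟨fun haj => hjK (haj ▸ haK), haI⟩⟩
    · rintro ⟨haK, haI⟩
      exact ⟨haK, fun h => haI h.2⟩
  have hjKI : j ∉ K \ I := fun h => hjK (Finset.mem_sdiff.1 h).1
  rw [wedge_eq, wedge_eq, h1, h2, Finset.sum_insert hjKI] at hgen
  have hIB : insert j B = I := Finset.insert_erase hjI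
  rw [hJj, hIB] at hgen
  have hq : Cng (∑ i ∈ K \ I, w (J.erase i) • deltaVec S n d (insert i B)) 0 :=
    cng_sum_zero _ _ fun i hi => cng_smul_zero (hall i hi) _
  have h3 : Cng (w K • deltaVec S n d I
        + ∑ i ∈ K \ I, w (J.erase i) • deltaVec S n d (insert i B))
      (w K • deltaVec S n d I + 0) :=
    ModCongr.add (ModCongr.refl _) hq
  rw [add_zero] at h3
  exact ModCongr.trans (ModCongr.symm h3) (ModCongr.trans hgen hq)

lemma step_aux {I K : Finset (Fin n)} {j i : Fin n} (hj : j ∈ I \ K) (hi : i ∈ K \ I) :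
    (insert i (I.erase j)).card = I.card
      ∧ (insert i (I.erase j)) \ K = (I \ K).erase j := by
  have hjI : j ∈ I := (Finset.mem_sdiff.1 hj).1
  have hiK : i ∈ K := (Finset.mem_sdiff.1 hi).1
  have hiI : i ∉ I := (Finset.mem_sdiff.1 hi).2
  have hiI' : i ∉ I.erase j := fun h => hiI (Finset.mem_of_mem_erase h)
  constructor
  · rw [Finset.card_insert_of_notMem hiI', Finset.card_erase_of_mem hjI]
    have : 1 ≤ I.card := Finset.card_pos.2 ⟨j, hjI⟩
    omega
  · ext a
    simp only [Finset.mem_sdiff, Finset.mem_insert, Finset.mem_erase]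
    constructor
    · rintro ⟨rfl | ⟨haj, haI⟩, haK⟩
      · exact absurd hiK haK
      · exact ⟨haj, haI, haK⟩
    · rintro ⟨haj, haI, haK⟩
      exact ⟨Or.inr ⟨haj, haI⟩, haK⟩

/-- Part (1): if `w K ≠ 0` for some `K` and `w I = 0`, then `x_I ≡ 0`. -/
lemma vanish1 {K : Finset (Fin n)} (hK : K.card = d) (hwK : w K ≠ 0) :
    ∀ I : Finset (Fin n), I.card = d → w I = 0 → Cng (deltaVec S n d I) 0 := by
  suffices h : ∀ r : ℕ, ∀ I : Finset (Fin n), I.card = d → w I = 0 → (I \ K).card = r →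
      Cng (deltaVec S n d I) 0 by
    exact fun I hI hwI => h _ I hI hwI rfl
  intro r
  induction r with
  | zero =>
    intro I hI hwI h0
    have hsub : I ⊆ K := Finset.sdiff_eq_empty_iff_subset.1 (Finset.card_eq_zero.1 h0)
    have : I = K := Finset.eq_of_subset_of_card_le hsub (by rw [hI, hK])
    exact absurd (this ▸ hwI) hwK
  | succ r ih =>
    intro I hI hwI hr
    obtain ⟨j, hj⟩ : (I \ K).Nonempty := Finset.card_pos.1 (by omega)
    have hjI : j ∈ I := (Finset.mem_sdiff.1 hj).1
    have hjK : j ∉ K := (Finset.mem_sdiff.1 hj).2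
    by_cases hex : ∃ i ∈ K \ I, w (insert i (I.erase j)) ≠ 0
    · obtain ⟨i, hi, hwA⟩ := hex
      exact small hI hjI (Finset.mem_sdiff.1 hi).2 hwI hwA
    · push_neg at hex
      apply cng_of_smul hwK
      apply big hI hK hjI hjK
      intro i hi
      obtain ⟨hcard, hset⟩ := step_aux hj hi
      apply ih (insert i (I.erase j)) (hcard.trans hI) (hex i hi)
      rw [hset, Finset.card_erase_of_mem hj, hr]
      omega

/-- Part (2) key step: if `w I0 ≠ 0` but `x_{I0} ≡ 0`, then everything vanishes. -/
lemma vanish2 {I0 : Finset (Fin n)} (hI0 : I0.card = d) (hw0 : w I0 ≠ 0)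
    (h0 : Cng (deltaVec S n d I0) 0) :
    ∀ I : Finset (Fin n), I.card = d → Cng (deltaVec S n d I) 0 := by
  suffices h : ∀ r : ℕ, ∀ I : Finset (Fin n), I.card = d → (I \ I0).card = r →
      Cng (deltaVec S n d I) 0 by
    exact fun I hI => h _ I hI rfl
  intro r
  induction r with
  | zero =>
    intro I hI h0'
    have hsub : I ⊆ I0 := Finset.sdiff_eq_empty_iff_subset.1 (Finset.card_eq_zero.1 h0')
    have : I = I0 := Finset.eq_of_subset_of_card_le hsub (by rw [hI, hI0])
    exact this ▸ h0
  | succ r ih =>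
    intro I hI hr
    obtain ⟨j, hj⟩ : (I \ I0).Nonempty := Finset.card_pos.1 (by omega)
    have hjI : j ∈ I := (Finset.mem_sdiff.1 hj).1
    have hjI0 : j ∉ I0 := (Finset.mem_sdiff.1 hj).2
    apply cng_of_smul hw0
    apply big hI hI0 hjI hjI0
    intro i hi
    obtain ⟨hcard, hset⟩ := step_aux hj hi
    apply ih (insert i (I.erase j)) (hcard.trans hI)
    rw [hset, Finset.card_erase_of_mem hj, hr]
    omega

end VanishAux

/-- vanishing lemma: for nonzero `w ∈ ⋀^d S^n`, in `⋀^d Q_w` we have: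
if `w_I = 0` then `x_I = 0`; and conversely, provided some `x_J` is nonzero in
`⋀^d Q_w`, `x_I = 0` in `⋀^d Q_w` implies `w_I = 0`. -/
theorem vanishing_in_top_wedge_Qw {S : Type*} [Semifield S]
    (hid : ∀ s : S, s + s = s) (n d : ℕ) (w : Finset (Fin n) → S)
    (hw : ∃ I : Finset (Fin n), I.card = d ∧ w I ≠ 0) :
    (∀ I : Finset (Fin n), I.card = d → w I = 0 →
        ModCongr S (WedgeBendRel n d w) (deltaVec S n d I) 0)
    ∧ ((∃ J : Finset (Fin n), J.card = d ∧
          ¬ ModCongr S (WedgeBendRel n d w) (deltaVec S n d J) 0) →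
        ∀ I : Finset (Fin n), I.card = d →
          ModCongr S (WedgeBendRel n d w) (deltaVec S n d I) 0 → w I = 0) := by
  constructor
  · intro I hI hwI
    obtain ⟨K, hK, hwK⟩ := hw
    exact VanishAux.vanish1 hK hwK I hI hwI
  · rintro ⟨J, hJ, hJne⟩ I hI hI0
    by_contra hwI
    exact hJne (VanishAux.vanish2 hI hwI hI0 J hJ)
end

section
/- Let S be an idempotent semifield and w ∈ ⋀^d V a tropical Plücker vector. If I and I' both lie in supp(w) = {K : w_K ≠ 0}, then in ⋀^d Q_w the relation x_{I'} = (w_{I'}/w_I) x_I holds; i.e., all monomials x_I with I ∈ supp(w) are proportional in ⋀^d Q_w, so ⋀^d Q_w is generated by a single element. -/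
open Finset

section Aux

variable {S : Type*} [Semifield S] {n d : ℕ} (w : Finset (Fin n) → S)

lemma wedgeElt_eq_sum (T J B : Finset (Fin n)) :
    wedgeElt (S := S) d w T J B
      = ∑ i ∈ T \ B, w (J.erase i) • deltaVec S n d (insert i B) := by
  funext L
  simp [wedgeElt, deltaVec, Finset.sum_apply, mul_ite]

lemma modCongr_sum {ι : Type*} (r : (WIdx n d → S) → (WIdx n d → S) → Prop)
    (s : Finset ι) (f g : ι → (WIdx n d → S))
    (h : ∀ i ∈ s, ModCongr S r (f i) (g i)) :
    ModCongr S r (∑ i ∈ s, f i) (∑ i ∈ s, g i) := by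
  classical
  induction s using Finset.cons_induction with
  | empty => simpa using ModCongr.refl (r := r) (0 : WIdx n d → S)
  | cons a s ha ih =>
      rw [Finset.sum_cons, Finset.sum_cons]
      exact ModCongr.add (h a (Finset.mem_cons_self _ _))
        (ih fun i hi => h i (Finset.mem_cons.mpr (Or.inr hi)))

lemma swap_rel (P : Finset (Fin n)) (hP : P.card = d) {a b : Fin n}
    (hb : b ∈ P) (ha : a ∉ P) :
    ModCongr S (WedgeBendRel n d w)
      (w (insert a (P.erase b)) • deltaVec S n d P)
      (w P • deltaVec S n d (insert a (P.erase b))) := by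
  have hab : a ≠ b := fun h => ha (h ▸ hb)
  have hJa : (insert a P).erase a = P := erase_insert ha
  have hJb : (insert a P).erase b = insert a (P.erase b) := erase_insert_of_ne hab
  have hBb : insert b (P.erase b) = P := insert_erase hb
  have hJcard : (insert a P).card = d + 1 := by rw [card_insert_of_notMem ha, hP]
  have hBcard : (P.erase b).card = d - 1 := by rw [card_erase_of_mem hb, hP]
  have hJB : insert a P \ P.erase b = {a, b} := by
    ext i
    by_cases hia : i = a
    · subst hia; simp [ha]
    · by_cases hib : i = b
      · subst hib; simp [hb]
      · simp [hia, hib, mem_sdiff, mem_erase]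
  have e1 : wedgeElt d w (insert a P) (insert a P) (P.erase b)
      = w P • deltaVec S n d (insert a (P.erase b))
        + w (insert a (P.erase b)) • deltaVec S n d P := by
    rw [wedgeElt_eq_sum, hJB, sum_pair hab, hJa, hJb, hBb]
  have e2 : wedgeElt d w ((insert a P).erase a) (insert a P) (P.erase b)
      = w (insert a (P.erase b)) • deltaVec S n d P := by
    rw [hJa, wedgeElt_eq_sum]
    have hsd : P \ P.erase b = {b} := by
      ext i
      by_cases hib : i = b
      · subst hib; simp [hb]
      · simp [hib, mem_sdiff, mem_erase]
    rw [hsd, sum_singleton, hJb, hBb]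
  have e3 : wedgeElt d w ((insert a P).erase b) (insert a P) (P.erase b)
      = w P • deltaVec S n d (insert a (P.erase b)) := by
    rw [hJb, wedgeElt_eq_sum]
    have hsd : insert a (P.erase b) \ P.erase b = {a} := by
      ext i
      by_cases hia : i = a
      · subst hia; simp [mem_erase, ha]
      · simp [hia, mem_sdiff, mem_erase]
    rw [hsd, sum_singleton, hJa]
  have r1 : ModCongr S (WedgeBendRel n d w)
      (wedgeElt d w (insert a P) (insert a P) (P.erase b))
      (wedgeElt d w ((insert a P).erase a) (insert a P) (P.erase b)) :=
    ModCongr.of ⟨insert a P, P.erase b, a, mem_insert_self a P, hJcard, hBcard, rfl, rfl⟩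
  have r2 : ModCongr S (WedgeBendRel n d w)
      (wedgeElt d w (insert a P) (insert a P) (P.erase b))
      (wedgeElt d w ((insert a P).erase b) (insert a P) (P.erase b)) :=
    ModCongr.of ⟨insert a P, P.erase b, b, mem_insert_of_mem hb, hJcard, hBcard, rfl, rfl⟩
  rw [e1, e2] at r1
  rw [e1, e3] at r2
  exact r1.symm.trans r2

lemma suppA (hpl : TropPluckerRel n d w) :
    ∀ N : ℕ, ∀ Kb K' : Finset (Fin n), Kb.card = d → K'.card = d →
      w Kb ≠ 0 → w K' ≠ 0 → (K' \ Kb).card ≤ N →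
      ModCongr S (WedgeBendRel n d w) (deltaVec S n d K')
        ((w K' / w Kb) • deltaVec S n d Kb) := by
  intro N
  induction N with
  | zero =>
      intro Kb K' hKb hK' hwKb hwK' hcard
      have h0 : K' = Kb := eq_of_subset_of_card_le
        (sdiff_eq_empty_iff_subset.mp (card_eq_zero.mp (Nat.le_zero.mp hcard)))
        (by rw [hKb, hK'])
      subst h0
      rw [div_self hwK', one_smul]
      exact ModCongr.refl _
  | succ N IH =>
      intro Kb K' hKb hK' hwKb hwK' hcard
      by_cases heq : K' = Kb
      · subst heq; rw [div_self hwK', one_smul]; exact ModCongr.refl _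
      have hne : (Kb \ K').Nonempty := by
        rw [sdiff_nonempty]
        intro hsub
        exact heq (eq_of_subset_of_card_le hsub (by rw [hKb, hK'])).symm
      obtain ⟨a, ha⟩ := hne
      have haKb := (mem_sdiff.mp ha).1
      have haK' := (mem_sdiff.mp ha).2
      have hAcard : (insert a K').card = d + 1 := by rw [card_insert_of_notMem haK', hK']
      have hBcard : (Kb.erase a).card = d - 1 := by rw [card_erase_of_mem haKb, hKb]
      have hpA := hpl (insert a K') (Kb.erase a) hAcard hBcard a
        (mem_sdiff.mpr ⟨mem_insert_self _ _, notMem_erase _ _⟩)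
      have hsd : insert a K' \ Kb.erase a = insert a (K' \ Kb) := by
        ext i
        by_cases hia : i = a
        · subst hia; simp [notMem_erase]
        · simp [hia, mem_sdiff, mem_erase, haKb]
      have hanotsd : a ∉ K' \ Kb := fun h => haK' (mem_sdiff.mp h).1
      rw [hsd, sum_insert hanotsd, erase_insert hanotsd, erase_insert haK',
        insert_erase haKb] at hpA
      have hex : ∃ b ∈ K' \ Kb, w (insert b (Kb.erase a)) ≠ 0 := by
        by_contra hno
        push_neg at hno
        have hz : ∑ i ∈ K' \ Kb, w ((insert a K').erase i) * w (insert i (Kb.erase a)) = 0 :=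
          sum_eq_zero fun i hi => by rw [hno i hi, mul_zero]
        rw [hz, add_zero] at hpA
        exact mul_ne_zero hwK' hwKb hpA
      obtain ⟨b, hbmem, hwK⟩ := hex
      have hbK' := (mem_sdiff.mp hbmem).1
      have hbKb := (mem_sdiff.mp hbmem).2
      have hbB : b ∉ Kb.erase a := fun h => hbKb (mem_of_mem_erase h)
      have hd : 0 < d := by rw [← hKb]; exact card_pos.mpr ⟨a, haKb⟩
      have hKcard : (insert b (Kb.erase a)).card = d := by
        rw [card_insert_of_notMem hbB, card_erase_of_mem haKb, hKb]; omega
      have hsd2 : K' \ insert b (Kb.erase a) = (K' \ Kb).erase b := by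
        ext i
        by_cases hib : i = b
        · subst hib; simp
        · by_cases hia : i = a
          · subst hia; simp [haK', hib]
          · simp [hib, hia, mem_sdiff, mem_erase, mem_insert]
      have hcard2 : (K' \ insert b (Kb.erase a)).card ≤ N := by
        rw [hsd2, card_erase_of_mem hbmem]; omega
      have ih := IH (insert b (Kb.erase a)) K' hKcard hK' hwK hwK' hcard2
      have hsw := swap_rel w Kb hKb haKb hbKb
      have h1 := ModCongr.smul (w Kb)⁻¹ hsw.symm
      rw [smul_smul, inv_mul_cancel₀ hwKb, one_smul, smul_smul] at h1
      have h2 := ih.trans (ModCongr.smul (w K' / w (insert b (Kb.erase a))) h1)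
      rw [smul_smul] at h2
      have hsc : w K' / w (insert b (Kb.erase a)) * ((w Kb)⁻¹ * w (insert b (Kb.erase a)))
          = w K' / w Kb := by
        field_simp
      rw [hsc] at h2
      exact h2

lemma mainL (hpl : TropPluckerRel n d w)
    (I : Finset (Fin n)) (hI : I.card = d) (hwI : w I ≠ 0) :
    ∀ N : ℕ, ∀ K K' : Finset (Fin n), K.card = d → K'.card = d → w K ≠ 0 →
      (K' \ K).card ≤ N →
      ModCongr S (WedgeBendRel n d w) (deltaVec S n d K')
        ((w K' / w I) • deltaVec S n d I) := by
  intro N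
  induction N with
  | zero =>
      intro K K' hK hK' hwK hle
      have h0 : K' = K := eq_of_subset_of_card_le
        (sdiff_eq_empty_iff_subset.mp (card_eq_zero.mp (Nat.le_zero.mp hle)))
        (by rw [hK, hK'])
      exact suppA w hpl (K' \ I).card I K' hI hK' hwI (h0 ▸ hwK) le_rfl
  | succ N IH =>
      intro K K' hK hK' hwK hle
      rcases ne_or_eq (w K') 0 with hwK' | hwK'
      · exact suppA w hpl (K' \ I).card I K' hI hK' hwI hwK' le_rfl
      rcases le_or_gt (K' \ K).card N with hleN | hltN
      · exact IH K K' hK hK' hwK hleN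
      by_cases hadj : ∃ p, ∃ q ∈ K', p ∉ K' ∧ w (insert p (K'.erase q)) ≠ 0
      · obtain ⟨p, q, hq, hp, hwP⟩ := hadj
        have hsw := swap_rel w K' hK' hq hp
        rw [hwK', zero_smul] at hsw
        have h2 := ModCongr.smul (w (insert p (K'.erase q)))⁻¹ hsw
        rw [smul_smul, inv_mul_cancel₀ hwP, one_smul, smul_zero] at h2
        rw [hwK', zero_div, zero_smul]
        exact h2
      · push_neg at hadj
        have hpos : 0 < (K' \ K).card := by omega
        obtain ⟨b, hbmem⟩ := card_pos.mp hpos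
        have hbK' := (mem_sdiff.mp hbmem).1
        have hbK := (mem_sdiff.mp hbmem).2
        have hJcard : (insert b K).card = d + 1 := by rw [card_insert_of_notMem hbK, hK]
        have hBcard : (K'.erase b).card = d - 1 := by rw [card_erase_of_mem hbK', hK']
        have rel : ModCongr S (WedgeBendRel n d w)
            (wedgeElt d w (insert b K) (insert b K) (K'.erase b))
            (wedgeElt d w ((insert b K).erase b) (insert b K) (K'.erase b)) :=
          ModCongr.of ⟨insert b K, K'.erase b, b, mem_insert_self _ _, hJcard, hBcard, rfl, rfl⟩
        rw [erase_insert hbK] at rel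
        have hJB : insert b K \ K'.erase b = insert b (K \ K'.erase b) := by
          ext i
          by_cases hib : i = b
          · subst hib; simp [notMem_erase]
          · simp [hib, mem_sdiff, mem_insert]
        have hbnot : b ∉ K \ K'.erase b := fun h => hbK (mem_sdiff.mp h).1
        have eX : wedgeElt d w (insert b K) (insert b K) (K'.erase b)
            = w K • deltaVec S n d K' + wedgeElt d w K (insert b K) (K'.erase b) := by
          rw [wedgeElt_eq_sum, wedgeElt_eq_sum, hJB, sum_insert hbnot, erase_insert hbK,
            insert_erase hbK']
        rw [eX] at rel
        have hE0 : ModCongr S (WedgeBendRel n d w)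
            (wedgeElt d w K (insert b K) (K'.erase b)) (0 : WIdx n d → S) := by
          rw [wedgeElt_eq_sum]
          have hterm : ∀ i ∈ K \ K'.erase b,
              ModCongr S (WedgeBendRel n d w)
                (w ((insert b K).erase i) • deltaVec S n d (insert i (K'.erase b)))
                (0 : WIdx n d → S) := by
            intro i hi
            have hiK := (mem_sdiff.mp hi).1
            have hib : i ≠ b := fun h => hbK (h ▸ hiK)
            have hiK' : i ∉ K' := fun hK'i => (mem_sdiff.mp hi).2 (mem_erase.mpr ⟨hib, hK'i⟩)
            have hw0 : w (insert i (K'.erase b)) = 0 := hadj i b hbK' hiK'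
            have hd : 0 < d := by rw [← hK']; exact card_pos.mpr ⟨b, hbK'⟩
            have hiB : i ∉ K'.erase b := fun h => hiK' (mem_of_mem_erase h)
            have hKicard : (insert i (K'.erase b)).card = d := by
              rw [card_insert_of_notMem hiB, card_erase_of_mem hbK', hK']; omega
            have hsd : insert i (K'.erase b) \ K = (K' \ K).erase b := by
              ext j
              by_cases hjb : j = b
              · subst hjb; simp [Ne.symm hib, notMem_erase]
              · by_cases hji : j = i
                · subst hji; simp [hiK]
                · simp [hji, hjb, mem_sdiff, mem_erase, mem_insert]
            have hcard' : (insert i (K'.erase b) \ K).card ≤ N := by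
              rw [hsd, card_erase_of_mem hbmem]; omega
            have ihh := IH K (insert i (K'.erase b)) hK hKicard hwK hcard'
            rw [hw0, zero_div, zero_smul] at ihh
            have hsm := ModCongr.smul (w ((insert b K).erase i)) ihh
            rwa [smul_zero] at hsm
          have hsum := modCongr_sum (WedgeBendRel n d w) (K \ K'.erase b) _ _ hterm
          rwa [sum_const_zero] at hsum
        have h4 : ModCongr S (WedgeBendRel n d w) (w K • deltaVec S n d K')
            (w K • deltaVec S n d K' + wedgeElt d w K (insert b K) (K'.erase b)) := by
          have h := ModCongr.add (ModCongr.refl (w K • deltaVec S n d K')) hE0.symm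
          rwa [add_zero] at h
        have h6 := (h4.trans rel).trans hE0
        have h7 := ModCongr.smul (w K)⁻¹ h6
        rw [smul_smul, inv_mul_cancel₀ hwK, one_smul, smul_zero] at h7
        rw [hwK', zero_div, zero_smul]
        exact h7

end Aux

/-- for a tropical Plücker vector `w`, if `I, I' ∈ supp(w)` then in
`⋀^d Q_w` the relation `x_{I'} = (w_{I'}/w_I) · x_I` holds; all monomials `x_I` with
`I ∈ supp(w)` are proportional, so `⋀^d Q_w` is generated by a single element. -/
theorem supp_monomials_proportional {S : Type*} [Semifield S]
    (hid : ∀ s : S, s + s = s) (n d : ℕ) (w : Finset (Fin n) → S)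
    (hpl : TropPluckerRel n d w)
    (I I' : Finset (Fin n)) (hI : I.card = d) (hI' : I'.card = d)
    (hwI : w I ≠ 0) (hwI' : w I' ≠ 0) :
    ModCongr S (WedgeBendRel n d w)
        (deltaVec S n d I') ((w I' / w I) • deltaVec S n d I)
    ∧ (∀ m : WIdx n d → S, ∃ s : S,
        ModCongr S (WedgeBendRel n d w) m (s • deltaVec S n d I)) := by
  classical
  constructor
  · exact mainL w hpl I hI hwI 0 I' I' hI' hI' hwI' (by simp)
  · intro m
    refine ⟨∑ K : WIdx n d, m K * (w K.1 / w I), ?_⟩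
    have hm : m = ∑ K : WIdx n d, m K • deltaVec S n d K.1 := by
      funext L
      rw [Finset.sum_apply]
      simp only [Pi.smul_apply, smul_eq_mul, deltaVec, mul_ite, mul_one, mul_zero]
      simp only [← Subtype.ext_iff]
      rw [Finset.sum_ite_eq]
      simp
    have hstep : ModCongr S (WedgeBendRel n d w)
        (∑ K : WIdx n d, m K • deltaVec S n d K.1)
        (∑ K : WIdx n d, (m K * (w K.1 / w I)) • deltaVec S n d I) := by
      refine modCongr_sum _ _ _ _ (fun K _ => ?_)
      have h := mainL w hpl I hI hwI (K.1 \ I).card I K.1 hI K.2 hwI le_rfl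
      have hsm := ModCongr.smul (m K) h
      rwa [smul_smul] at hsm
    rw [← hm, ← Finset.sum_smul] at hstep
    exact hstep
end

section
/- Over the Boolean semifield B = {0, 1} (with 1+1 = 1), an element w = Σ_{I ∈ 𝓘} e_I ∈ ⋀^d B^n satisfies the tropical Plücker relations if and only if the collection 𝓘 ⊆ C([n],d) is the set of bases of a rank d matroid on [n]. -/
open Finset

section Helpers
open Set

/-- Symmetric basis exchange for matroids with a finite base. -/
lemma Matroid.symm_base_exchange {α : Type*} {M : Matroid α} {B₁ B₂ : Set α}
    (hB₁ : M.IsBase B₁) (hfin : B₁.Finite) (hB₂ : M.IsBase B₂) {e : α} (he : e ∈ B₂ \ B₁) :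
    ∃ f ∈ B₁ \ B₂, M.IsBase (insert e (B₁ \ {f})) ∧ M.IsBase (insert f (B₂ \ {e})) := by
  have heE : e ∈ M.E := hB₂.subset_ground he.1
  have hD : M.Dep (insert e B₁) := hB₁.insert_dep ⟨heE, he.2⟩
  set 𝒞 : Set (Set α) := {C | C ⊆ insert e B₁ ∧ M.Dep C} with h𝒞
  have h𝒞fin : 𝒞.Finite := by
    have : 𝒞 ⊆ {t | t ⊆ insert e B₁} := fun C hC => hC.1
    exact Set.Finite.subset (Set.Finite.finite_subsets (hfin.insert e)) this
  obtain ⟨C, hC𝒞, hmin⟩ : ∃ C ∈ 𝒞, ∀ C' ∈ 𝒞, C'.ncard ≤ C.ncard → C.ncard = C'.ncard := by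
    obtain ⟨C, hC, h⟩ := Set.exists_min_image 𝒞 Set.ncard h𝒞fin ⟨insert e B₁, subset_rfl, hD⟩
    exact ⟨C, hC, fun C' hC' hle => le_antisymm (h C' hC') hle⟩
  have hCfin : C.Finite := (hfin.insert e).subset hC𝒞.1
  have hminimal : ∀ C' ⊆ C, M.Dep C' → C' = C := by
    intro C' hsub hdep
    by_contra hne
    have hlt : C'.ncard < C.ncard := Set.ncard_lt_ncard ⟨hsub, fun h => hne (hsub.antisymm h)⟩ hCfin
    exact hlt.ne ((hmin C' ⟨hsub.trans hC𝒞.1, hdep⟩ hlt.le).symm)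
  have heC : e ∈ C := by
    by_contra h
    have hCB₁ : C ⊆ B₁ := by
      intro x hx
      rcases hC𝒞.1 hx with rfl | hxB₁
      · exact absurd hx h
      · exact hxB₁
    exact hC𝒞.2.not_indep (hB₁.indep.subset hCB₁)
  have hCdiff_indep : ∀ y ∈ C, M.Indep (C \ {y}) := by
    intro y hy
    by_contra h
    have hdep : M.Dep (C \ {y}) := dep_of_not_indep h (diff_subset.trans hC𝒞.2.subset_ground)
    have := hminimal _ diff_subset hdep
    exact (this ▸ (fun (hh : y ∈ C \ {y}) => hh.2 rfl)) (this ▸ hy)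
  have hinsC : ∀ y ∈ C, y ∈ M.closure (C \ {y}) := by
    intro y hy
    have hI := hCdiff_indep y hy
    have hdep : M.Dep (insert y (C \ {y})) := by
      rw [Set.insert_diff_singleton, Set.insert_eq_self.2 hy]
      exact hC𝒞.2
    exact (hI.insert_dep_iff.1 hdep).1
  have key : ∃ f, f ∈ C ∧ f ∉ B₂ ∧ M.Indep (insert f (B₂ \ {e})) := by
    by_contra! hcon
    have hsub : C \ {e} ⊆ M.closure (B₂ \ {e}) := by
      intro x hx
      by_cases hxB₂ : x ∈ B₂
      · exact M.subset_closure (B₂ \ {e}) (diff_subset.trans hB₂.subset_ground) ⟨hxB₂, hx.2⟩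
      · have hnind := hcon x hx.1 hxB₂
        have hxE : x ∈ M.E := hC𝒞.2.subset_ground hx.1
        have hxnotin : x ∉ B₂ \ {e} := fun h => hxB₂ h.1
        have hiff := (hB₂.indep.subset diff_subset).insert_indep_iff_of_notMem hxnotin
        by_contra hxcl
        exact hnind (hiff.2 ⟨hxE, hxcl⟩)
    have hecl : e ∈ M.closure (B₂ \ {e}) :=
      (Matroid.closure_subset_closure_of_subset_closure hsub) (hinsC e heC)
    exact hB₂.indep.notMem_closure_diff_of_mem he.1 hecl
  obtain ⟨f, hfC, hfB₂, hfind⟩ := key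
  have hfe : f ≠ e := fun h => hfB₂ (h ▸ he.1)
  have hfB₁ : f ∈ B₁ := by
    rcases hC𝒞.1 hfC with rfl | h
    · exact absurd rfl hfe
    · exact h
  have hbase2 : M.IsBase (insert f (B₂ \ {e})) := hB₂.exchange_isBase_of_indep hfB₂ hfind
  have hind1 : M.Indep (insert e (B₁ \ {f})) := by
    by_contra h
    have hIndep : M.Indep (B₁ \ {f}) := hB₁.indep.subset diff_subset
    have henotin : e ∉ B₁ \ {f} := fun hh => he.2 hh.1
    have hiff := hIndep.insert_indep_iff_of_notMem henotin
    have hecl : e ∈ M.closure (B₁ \ {f}) := by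
      by_contra hecl
      exact h (hiff.2 ⟨heE, hecl⟩)
    have hclo : M.closure (insert e (B₁ \ {f})) = M.closure (B₁ \ {f}) :=
      Matroid.closure_insert_eq_of_mem_closure hecl
    have hsubCf : C \ {f} ⊆ insert e (B₁ \ {f}) := by
      intro x hx
      rcases hC𝒞.1 hx.1 with rfl | hxB₁
      · exact mem_insert _ _
      · exact mem_insert_of_mem _ ⟨hxB₁, hx.2⟩
    have hfcl : f ∈ M.closure (B₁ \ {f}) := by
      have h1 := (M.closure_subset_closure hsubCf) (hinsC f hfC)
      rwa [hclo] at h1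
    exact hB₁.indep.notMem_closure_diff_of_mem hfB₁ hfcl
  exact ⟨f, ⟨hfB₁, hfB₂⟩, hB₁.exchange_isBase_of_indep he.2 hind1, hbase2⟩

end Helpers

/-- Finset-level symmetric exchange derived from the basis exchange axiom. -/
lemma finset_symm_exchange {n : ℕ} (𝓘 : Finset (Finset (Fin n)))
    (hex : ∀ I ∈ 𝓘, ∀ I' ∈ 𝓘, ∀ i ∈ I \ I', ∃ j ∈ I' \ I, insert j (I.erase i) ∈ 𝓘)
    {I I' : Finset (Fin n)} (hI : I ∈ 𝓘) (hI' : I' ∈ 𝓘) {p : Fin n} (hp : p ∈ I' \ I) :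
    ∃ q ∈ I \ I', insert p (I.erase q) ∈ 𝓘 ∧ insert q (I'.erase p) ∈ 𝓘 := by
  classical
  set BaseP : Set (Fin n) → Prop := fun B => ∃ J ∈ 𝓘, (↑J : Set (Fin n)) = B with hBP
  have hexch : Matroid.ExchangeProperty BaseP := by
    rintro X Y ⟨J, hJ, rfl⟩ ⟨K, hK, rfl⟩ a ha
    have haJK : a ∈ J \ K := by
      rw [Finset.mem_sdiff]
      exact ⟨by exact_mod_cast ha.1, by exact_mod_cast ha.2⟩
    obtain ⟨b, hb, hins⟩ := hex J hJ K hK a haJK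
    rw [Finset.mem_sdiff] at hb
    refine ⟨b, ⟨by exact_mod_cast hb.1, by exact_mod_cast hb.2⟩,
      ⟨insert b (J.erase a), hins, ?_⟩⟩
    push_cast
    rfl
  set M := Matroid.ofIsBaseOfFinite Set.finite_univ BaseP ⟨↑I, I, hI, rfl⟩ hexch
    (fun B _ => Set.subset_univ B) with hM
  have hMbase : ∀ B, M.IsBase B ↔ BaseP B := fun B => by
    rw [hM, Matroid.ofIsBaseOfFinite_isBase]
  have hB1 : M.IsBase ↑I := (hMbase _).2 ⟨I, hI, rfl⟩
  have hB2 : M.IsBase ↑I' := (hMbase _).2 ⟨I', hI', rfl⟩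
  rw [Finset.mem_sdiff] at hp
  obtain ⟨f, hf, h1, h2⟩ := Matroid.symm_base_exchange hB1 (I.finite_toSet) hB2 (e := p)
    ⟨by exact_mod_cast hp.1, by exact_mod_cast hp.2⟩
  obtain ⟨J1, hJ1, hJ1eq⟩ := (hMbase _).1 h1
  obtain ⟨J2, hJ2, hJ2eq⟩ := (hMbase _).1 h2
  have e1 : J1 = insert p (I.erase f) := by
    apply Finset.coe_injective
    rw [hJ1eq]
    push_cast
    rfl
  have e2 : J2 = insert f (I'.erase p) := by
    apply Finset.coe_injective
    rw [hJ2eq]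
    push_cast
    rfl
  exact ⟨f, Finset.mem_sdiff.2 ⟨by exact_mod_cast hf.1, by exact_mod_cast hf.2⟩,
    e1 ▸ hJ1, e2 ▸ hJ2⟩

section Bool01

variable {S : Type*} [Semifield S]

lemma bool_sum_eq_zero_iff (hid : ∀ s : S, s + s = s) (htwo : ∀ s : S, s = 0 ∨ s = 1)
    {ι : Type*} (s : Finset ι) (f : ι → S) :
    ∑ i ∈ s, f i = 0 ↔ ∀ i ∈ s, f i = 0 := by
  classical
  induction s using Finset.induction with
  | empty => simp
  | @insert a t hat ih =>
    rw [Finset.sum_insert hat]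
    constructor
    · intro h
      have hsum0 : ∑ i ∈ t, f i = 0 ∧ f a = 0 := by
        rcases htwo (f a) with h1 | h1 <;> rcases htwo (∑ i ∈ t, f i) with h2 | h2
        · exact ⟨h2, h1⟩
        · rw [h1, h2, zero_add] at h; exact absurd h one_ne_zero
        · rw [h1, h2, add_zero] at h; exact absurd h one_ne_zero
        · rw [h1, h2, hid 1] at h; exact absurd h one_ne_zero
      intro i hi
      rcases Finset.mem_insert.1 hi with rfl | hi
      · exact hsum0.2
      · exact (ih.1 hsum0.1) i hi
    · intro h
      rw [h a (Finset.mem_insert_self a t), zero_add]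
      exact ih.2 fun i hi => h i (Finset.mem_insert_of_mem hi)

lemma bool_sum_eq_one_iff (hid : ∀ s : S, s + s = s) (htwo : ∀ s : S, s = 0 ∨ s = 1)
    {ι : Type*} (s : Finset ι) (f : ι → S) :
    ∑ i ∈ s, f i = 1 ↔ ∃ i ∈ s, f i = 1 := by
  constructor
  · intro h
    by_contra hcon
    push_neg at hcon
    have : ∑ i ∈ s, f i = 0 := (bool_sum_eq_zero_iff hid htwo s f).2
      (fun i hi => (htwo (f i)).resolve_right (hcon i hi))
    rw [this] at h
    exact one_ne_zero h.symm
  · intro ⟨i, hi, hfi⟩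
    rcases htwo (∑ j ∈ s, f j) with h | h
    · have := ((bool_sum_eq_zero_iff hid htwo s f).1 h) i hi
      rw [this] at hfi
      exact absurd hfi.symm one_ne_zero
    · exact h

end Bool01

/-- over the Boolean semifield `𝔹 = {0,1}` (an idempotent semifield whose
only elements are `0` and `1`), the `{0,1}`-tensor `w = ∑_{I ∈ 𝓘} e_I` attached to a
collection `𝓘` of `d`-element subsets of `[n]` is a (nonzero) tropical Plücker vector
iff `𝓘` is the set of bases of a rank-`d` matroid on `[n]`, i.e. `𝓘` is nonempty and
satisfies the basis exchange axiom. -/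
theorem boolean_plucker_iff_matroid {S : Type*} [Semifield S]
    (hid : ∀ s : S, s + s = s) (htwo : ∀ s : S, s = 0 ∨ s = 1)
    (n d : ℕ) (𝓘 : Finset (Finset (Fin n))) (hcard : ∀ I ∈ 𝓘, I.card = d) :
    (𝓘.Nonempty ∧
        TropPluckerRel n d (fun I => if I ∈ 𝓘 then (1 : S) else 0))
      ↔ (𝓘.Nonempty ∧
          ∀ I ∈ 𝓘, ∀ I' ∈ 𝓘, ∀ i ∈ I \ I', ∃ j ∈ I' \ I,
            insert j (I.erase i) ∈ 𝓘) := by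
  classical
  set w : Finset (Fin n) → S := fun I => if I ∈ 𝓘 then (1 : S) else 0 with hw
  constructor
  · rintro ⟨hne, hpl⟩
    refine ⟨hne, ?_⟩
    intro I hI I' hI' i hi
    rw [Finset.mem_sdiff] at hi
    set A := insert i I' with hA
    set B := I.erase i with hB
    have hAcard : A.card = d + 1 := by
      rw [hA, Finset.card_insert_of_notMem hi.2, hcard I' hI']
    have hBcard : B.card = d - 1 := by
      rw [hB, Finset.card_erase_of_mem hi.1, hcard I hI]
    have hpAB : i ∈ A \ B :=
      Finset.mem_sdiff.2 ⟨Finset.mem_insert_self _ _, Finset.notMem_erase _ _⟩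
    have heq := hpl A B hAcard hBcard i hpAB
    have hAi : A.erase i = I' := by rw [hA, Finset.erase_insert hi.2]
    have hiB : insert i B = I := by rw [hB, Finset.insert_erase hi.1]
    have hfi1 : w (A.erase i) * w (insert i B) = 1 := by
      rw [hAi, hiB]; simp [w, hI, hI']
    have hL1 : ∑ j ∈ A \ B, w (A.erase j) * w (insert j B) = 1 :=
      (bool_sum_eq_one_iff hid htwo _ _).2 ⟨i, hpAB, hfi1⟩
    rw [heq] at hL1
    obtain ⟨q, hq, hgq⟩ := (bool_sum_eq_one_iff hid htwo _ _).1 hL1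
    have hqmem := Finset.mem_erase.1 hq
    have hqAB := Finset.mem_sdiff.1 hqmem.2
    have hmem : A.erase q ∈ 𝓘 ∧ insert q B ∈ 𝓘 := by
      by_cases hx : A.erase q ∈ 𝓘
      · by_cases hy : insert q B ∈ 𝓘
        · exact ⟨hx, hy⟩
        · exfalso; simp [w, hy] at hgq
      · exfalso; simp [w, hx] at hgq
    have hqI' : q ∈ I' := by
      rcases Finset.mem_insert.1 hqAB.1 with rfl | h
      · exact absurd rfl hqmem.1
      · exact h
    have hqI : q ∉ I := fun h => hqAB.2 (Finset.mem_erase.2 ⟨hqmem.1, h⟩)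
    exact ⟨q, Finset.mem_sdiff.2 ⟨hqI', hqI⟩, hmem.2⟩
  · rintro ⟨hne, hex⟩
    refine ⟨hne, ?_⟩
    intro A B hA hB p hp
    have hpAB := Finset.mem_sdiff.1 hp
    rw [← Finset.add_sum_erase _ (fun i => w (A.erase i) * w (insert i B)) hp]
    rcases htwo (w (A.erase p) * w (insert p B)) with h0 | h1
    · rw [h0, zero_add]
    · have hmem : A.erase p ∈ 𝓘 ∧ insert p B ∈ 𝓘 := by
        by_cases hx : A.erase p ∈ 𝓘
        · by_cases hy : insert p B ∈ 𝓘
          · exact ⟨hx, hy⟩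
          · exfalso; simp [w, hy] at h1
        · exfalso; simp [w, hx] at h1
      obtain ⟨hIm, hI'm⟩ := hmem
      obtain ⟨q, hq, hq1, hq2⟩ := finset_symm_exchange 𝓘 hex hIm hI'm (p := p)
        (Finset.mem_sdiff.2 ⟨Finset.mem_insert_self _ _, Finset.notMem_erase _ _⟩)
      rw [Finset.mem_sdiff, Finset.mem_erase] at hq
      have hqp : q ≠ p := hq.1.1
      have hqA : q ∈ A := hq.1.2
      have hqB : q ∉ B := fun h => hq.2 (Finset.mem_insert_of_mem h)
      have hAq : insert p ((A.erase p).erase q) = A.erase q := by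
        rw [Finset.erase_right_comm]
        exact Finset.insert_erase (Finset.mem_erase.2 ⟨hqp.symm, hpAB.1⟩)
      have hBq : insert q ((insert p B).erase p) = insert q B := by
        rw [Finset.erase_insert hpAB.2]
      rw [hAq] at hq1
      rw [hBq] at hq2
      have hgq1 : w (A.erase q) * w (insert q B) = 1 := by simp [w, hq1, hq2]
      have hmemq : q ∈ (A \ B).erase p :=
        Finset.mem_erase.2 ⟨hqp, Finset.mem_sdiff.2 ⟨hqA, hqB⟩⟩
      have hR : ∑ j ∈ (A \ B).erase p, w (A.erase j) * w (insert j B) = 1 :=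
        (bool_sum_eq_one_iff hid htwo _ _).2 ⟨q, hmemq, hgq1⟩
      rw [h1, hR, hid 1]
end

section
/- Let S be a totally ordered idempotent semifield and w ∈ ⋀^d V a tropical Plücker vector. Then (L_w)^⊥ = L_{⋆w}, and consequently L_w^{⊥⊥} = L_w, where L^⊥ = ∩_{α∈L} tropker(α) denotes the orthogonal dual of a submodule L. -/
open Finset

/-- The orthogonal dual of a submodule `L ⊆ S^n`:
`L^⊥ = {f | every v ∈ L satisfies the bend relations of f}`. -/
def orthDual {S : Type*} [Semifield S] {n : ℕ} (L : Set (Fin n → S)) : Set (Fin n → S) :=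
  {f | ∀ v ∈ L, ∀ j : Fin n, ∑ i, f i * v i = ∑ i ∈ univ.erase j, f i * v i}

/-- The tropical linear space of a rank-`r` tensor `u`: the intersection of the tropical
hyperplanes of the circuit forms `∑_{i∈J} u_{J−i} x_i`, `J ∈ C([n],r+1)`. -/
def tropLinearSpace {S : Type*} [Semifield S] (n r : ℕ) (u : Finset (Fin n) → S) :
    Set (Fin n → S) :=
  {v | ∀ J : Finset (Fin n), J.card = r + 1 → ∀ j : Fin n,
    ∑ i ∈ J, u (J.erase i) * v i = ∑ i ∈ J.erase j, u (J.erase i) * v i}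


section Toolkit
variable {S : Type*} [Semifield S] [LinearOrder S]

theorem idem_le0 (hord : ∀ a b : S, a ≤ b ↔ a + b = b) (a : S) : (0:S) ≤ a :=
  (hord 0 a).2 (zero_add a)

theorem idem_le_zero_eq (hord : ∀ a b : S, a ≤ b ↔ a + b = b) {a : S} (h : a ≤ 0) : a = 0 :=
  le_antisymm h (idem_le0 hord a)

theorem idem_add_le (hord : ∀ a b : S, a ≤ b ↔ a + b = b) {a b c : S}
    (ha : a ≤ c) (hb : b ≤ c) : a + b ≤ c := by
  refine (hord _ _).2 ?_
  rw [add_assoc, (hord b c).1 hb, (hord a c).1 ha]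

theorem idem_le_add_left (hord : ∀ a b : S, a ≤ b ↔ a + b = b) {a b : S} (c : S)
    (h : a ≤ b) : a ≤ c + b := by
  refine (hord _ _).2 ?_
  rw [add_left_comm, (hord a b).1 h]

theorem idem_le_add_right (hord : ∀ a b : S, a ≤ b ↔ a + b = b) {a b : S} (c : S)
    (h : a ≤ b) : a ≤ b + c := by
  refine (hord _ _).2 ?_
  rw [← add_assoc, (hord a b).1 h]

theorem idem_sum_le (hord : ∀ a b : S, a ≤ b ↔ a + b = b) {ι : Type*} {s : Finset ι}
    {g : ι → S} {c : S} (h : ∀ i ∈ s, g i ≤ c) : ∑ i ∈ s, g i ≤ c := by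
  classical
  induction s using Finset.induction_on with
  | empty => simpa using idem_le0 hord c
  | insert _ _ ha ih =>
    rw [Finset.sum_insert ha]
    exact idem_add_le hord (h _ (mem_insert_self _ _))
      (ih fun i hi => h i (mem_insert_of_mem hi))

theorem idem_sum_le_sum (hord : ∀ a b : S, a ≤ b ↔ a + b = b) {ι : Type*} {s : Finset ι}
    {g h : ι → S} (hgh : ∀ i ∈ s, g i ≤ h i) : ∑ i ∈ s, g i ≤ ∑ i ∈ s, h i := by
  classical
  induction s using Finset.induction_on with
  | empty => simp
  | insert _ _ ha ih =>
    rw [Finset.sum_insert ha, Finset.sum_insert ha]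
    exact idem_add_le hord
      (idem_le_add_right hord _ (hgh _ (mem_insert_self _ _)))
      (idem_le_add_left hord _ (ih fun i hi => hgh i (mem_insert_of_mem hi)))

theorem idem_sum_le_sum_subset (hord : ∀ a b : S, a ≤ b ↔ a + b = b) {ι : Type*}
    [DecidableEq ι] {s t : Finset ι} (hst : s ⊆ t) (g : ι → S) :
    ∑ i ∈ s, g i ≤ ∑ i ∈ t, g i := by
  rw [← Finset.sum_sdiff hst]
  exact idem_le_add_left hord _ (le_refl _)

theorem idem_bend_iff (hord : ∀ a b : S, a ≤ b ↔ a + b = b) {ι : Type*} [DecidableEq ι]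
    {s : Finset ι} {g : ι → S} {j : ι} (hj : j ∈ s) :
    (∑ i ∈ s, g i = ∑ i ∈ s.erase j, g i) ↔ g j ≤ ∑ i ∈ s.erase j, g i := by
  have hsum := Finset.add_sum_erase s g hj
  constructor
  · intro heq
    exact (hord _ _).2 (by rw [hsum, heq])
  · intro hle
    rw [← hsum, (hord _ _).1 hle]

theorem idem_mul_le_right (hord : ∀ a b : S, a ≤ b ↔ a + b = b) {a b : S}
    (h : a ≤ b) (c : S) : a * c ≤ b * c := by
  refine (hord _ _).2 ?_
  rw [← add_mul, (hord a b).1 h]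

theorem idem_mul_le_left (hord : ∀ a b : S, a ≤ b ↔ a + b = b) {a b : S}
    (h : a ≤ b) (c : S) : c * a ≤ c * b := by
  refine (hord _ _).2 ?_
  rw [← mul_add, (hord a b).1 h]

theorem idem_le_cancel (hord : ∀ a b : S, a ≤ b ↔ a + b = b) {a b c : S}
    (h : a * c ≤ b * c) (hc : c ≠ 0) : a ≤ b := by
  have := idem_mul_le_right hord h c⁻¹
  rwa [mul_assoc, mul_assoc, mul_inv_cancel₀ hc, mul_one, mul_one] at this

end Toolkit


section FinsetHelpers
variable {n : ℕ}

theorem compl_erase_compl {K : Finset (Fin n)} {p : Fin n} :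
    univ \ ((univ \ K).erase p) = insert p K := by
  ext m
  simp only [mem_sdiff, mem_univ, true_and, mem_erase, mem_insert, not_and, not_not]
  tauto

theorem compl_insert_compl {A : Finset (Fin n)} {i : Fin n} :
    univ \ (insert i (univ \ A)) = A.erase i := by
  ext m
  simp only [mem_sdiff, mem_univ, true_and, mem_insert, mem_erase, not_or, not_not]

theorem compl_erase_eq_insert_compl {J : Finset (Fin n)} {i : Fin n} :
    univ \ (J.erase i) = insert i (univ \ J) := by
  ext m
  simp only [mem_sdiff, mem_univ, true_and, mem_erase, mem_insert, not_and, not_not]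
  tauto

theorem insert_compl_eq_compl_erase {A : Finset (Fin n)} {i : Fin n} :
    insert i (univ \ A) = univ \ (A.erase i) := by
  ext m
  simp only [mem_sdiff, mem_univ, true_and, mem_insert, mem_erase, not_and, not_not]
  tauto

theorem sdiff_sdiff_eq_sdiff {A B : Finset (Fin n)} :
    (univ \ B) \ (univ \ A) = A \ B := by
  ext m
  simp only [mem_sdiff, mem_univ, true_and, not_and, not_not]
  tauto

end FinsetHelpers


/-- Bend relations of `v` (in inequality form) for all circuit forms of `w`
with support inside the ground set `E`. -/
def VL {S : Type*} [Semifield S] [LinearOrder S] {n : ℕ} (E : Finset (Fin n)) (d : ℕ)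
    (w : Finset (Fin n) → S) (v : Fin n → S) : Prop :=
  ∀ J ⊆ E, J.card = d + 1 → ∀ p ∈ J,
    w (J.erase p) * v p ≤ ∑ i ∈ J.erase p, w (J.erase i) * v i

section KL
variable {S : Type*} [Semifield S] [LinearOrder S] {n : ℕ}

theorem key_lemma (hid : ∀ s : S, s + s = s) (hord : ∀ a b : S, a ≤ b ↔ a + b = b) :
    ∀ (N : ℕ) (E : Finset (Fin n)) (d : ℕ) (w : Finset (Fin n) → S) (v : Fin n → S)
      (j : Fin n), E.card ≤ N → 1 ≤ d → VL E d w v → j ∈ E → v j ≠ 0 →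
      (∃ B, B ⊆ E ∧ B.card = d ∧ j ∈ B ∧ w B ≠ 0) →
      ∃ K, K ⊆ E.erase j ∧ K.card + 1 = d ∧ w (insert j K) ≠ 0 ∧
        ∀ i ∈ E, i ∉ K → i ≠ j → w (insert i K) * v j ≤ w (insert j K) * v i := by
  intro N
  induction N with
  | zero =>
    intro E d w v j hcard _ _ hj _ _
    rw [Nat.le_zero, Finset.card_eq_zero] at hcard
    simp [hcard] at hj
  | succ N ih =>
    intro E d w v j hcard hd hv hj hvj hbasis
    by_cases hfull : ∃ x, x ∈ E ∧ x ≠ j ∧ v x = 0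
    · obtain ⟨x, hxE, hxj, hvx⟩ := hfull
      have hEx : (E.erase x).card ≤ N := by
        rw [Finset.card_erase_of_mem hxE]; omega
      have hjEx : j ∈ E.erase x := Finset.mem_erase.2 ⟨Ne.symm hxj, hj⟩
      by_cases hjx : ∃ B, B ⊆ E ∧ B.card = d ∧ j ∈ B ∧ x ∈ B ∧ w B ≠ 0
      · -- contraction at x
        obtain ⟨B, hBE, hBc, hjB, hxB, hwB⟩ := hjx
        have hd2 : 2 ≤ d := by
          have : 1 < B.card := Finset.one_lt_card.2 ⟨j, hjB, x, hxB, Ne.symm hxj⟩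
          omega
        have hVL' : VL (E.erase x) (d - 1) (fun I => w (insert x I)) v := by
          intro J hJE hJc p hp
          have hxJ : x ∉ J := fun hxJ => (Finset.mem_erase.1 (hJE hxJ)).1 rfl
          have hJ'E : insert x J ⊆ E := by
            intro m hm
            rcases Finset.mem_insert.1 hm with h | h
            · exact h ▸ hxE
            · exact (Finset.erase_subset _ _) (hJE h)
          have hJ'c : (insert x J).card = d + 1 := by
            rw [Finset.card_insert_of_notMem hxJ, hJc]; omega
          have hpx : p ≠ x := fun h => hxJ (h ▸ hp)
          have hbend := hv (insert x J) hJ'E hJ'c p (Finset.mem_insert_of_mem hp)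
          have herase : (insert x J).erase p = insert x (J.erase p) :=
            Finset.erase_insert_of_ne (Ne.symm hpx)
          have hxJp : x ∉ J.erase p := fun h => hxJ (Finset.mem_of_mem_erase h)
          rw [herase, Finset.sum_insert hxJp, hvx, mul_zero, zero_add] at hbend
          calc (fun I => w (insert x I)) (J.erase p) * v p
              = w (insert x (J.erase p)) * v p := rfl
            _ ≤ ∑ i ∈ J.erase p, w ((insert x J).erase i) * v i := hbend
            _ = ∑ i ∈ J.erase p, (fun I => w (insert x I)) (J.erase i) * v i := by
                refine Finset.sum_congr rfl fun i hi => ?_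
                have hix : i ≠ x := fun h => hxJ (h ▸ Finset.mem_of_mem_erase hi)
                rw [Finset.erase_insert_of_ne (Ne.symm hix)]
        have hbasis' : ∃ B', B' ⊆ E.erase x ∧ B'.card = d - 1 ∧ j ∈ B' ∧
            (fun I => w (insert x I)) B' ≠ 0 := by
          refine ⟨B.erase x, Finset.erase_subset_erase _ hBE, ?_, ?_, ?_⟩
          · rw [Finset.card_erase_of_mem hxB, hBc]
          · exact Finset.mem_erase.2 ⟨Ne.symm hxj, hjB⟩
          · simpa [Finset.insert_erase hxB] using hwB
        obtain ⟨K', hK'sub, hK'c, hK'w, hK'main⟩ :=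
          ih (E.erase x) (d - 1) (fun I => w (insert x I)) v j hEx (by omega) hVL' hjEx hvj hbasis'
        have hxK' : x ∉ K' :=
          fun h => (Finset.mem_erase.1 (Finset.mem_of_mem_erase (hK'sub h))).1 rfl
        have hjK' : j ∉ K' := fun h => (Finset.mem_erase.1 (hK'sub h)).1 rfl
        refine ⟨insert x K', ?_, ?_, ?_, ?_⟩
        · intro m hm
          rcases Finset.mem_insert.1 hm with h | h
          · exact h ▸ Finset.mem_erase.2 ⟨hxj, hxE⟩
          · exact Finset.erase_subset_erase _ (Finset.erase_subset _ _) (hK'sub h)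
        · rw [Finset.card_insert_of_notMem hxK']; omega
        · rw [Finset.insert_comm]
          exact hK'w
        · intro i hiE hiK hij
          have hix : i ≠ x := fun h => hiK (h ▸ Finset.mem_insert_self _ _)
          have hiK' : i ∉ K' := fun h => hiK (Finset.mem_insert_of_mem h)
          have := hK'main i (Finset.mem_erase.2 ⟨hix, hiE⟩) hiK' hij
          simpa [Finset.insert_comm] using this
      · -- deletion at x
        have hbasis' : ∃ B, B ⊆ E.erase x ∧ B.card = d ∧ j ∈ B ∧ w B ≠ 0 := by
          obtain ⟨B, hBE, hBc, hjB, hwB⟩ := hbasis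
          refine ⟨B, ?_, hBc, hjB, hwB⟩
          intro m hm
          refine Finset.mem_erase.2 ⟨?_, hBE hm⟩
          intro hmx
          exact hjx ⟨B, hBE, hBc, hjB, hmx ▸ hm, hwB⟩
        have hVL' : VL (E.erase x) d w v := fun J hJE hJc p hp =>
          hv J (hJE.trans (Finset.erase_subset _ _)) hJc p hp
        obtain ⟨K, hKsub, hKc, hKw, hKmain⟩ :=
          ih (E.erase x) d w v j hEx hd hVL' hjEx hvj hbasis'
        have hjK : j ∉ K := fun h => (Finset.mem_erase.1 (hKsub h)).1 rfl
        have hxK : x ∉ K :=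
          fun h => (Finset.mem_erase.1 (Finset.mem_of_mem_erase (hKsub h))).1 rfl
        have hKE : K ⊆ E :=
          fun m hm => Finset.mem_of_mem_erase (Finset.mem_of_mem_erase (hKsub hm))
        refine ⟨K, hKsub.trans (Finset.erase_subset_erase _ (Finset.erase_subset _ _)),
          hKc, hKw, ?_⟩
        intro i hiE hiK hij
        by_cases hix : i = x
        · subst hix
          rw [hvx, mul_zero]
          -- show w (insert i K) * v j ≤ 0 using the bend relation at J₀ = insert i (insert j K)
          have hijK : i ∉ insert j K := by
            simp only [Finset.mem_insert]
            push_neg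
            exact ⟨hij, hiK⟩
          have hJ₀E : insert i (insert j K) ⊆ E := by
            intro m hm
            rcases Finset.mem_insert.1 hm with h | h
            · exact h ▸ hiE
            · rcases Finset.mem_insert.1 h with h' | h'
              · exact h' ▸ hj
              · exact hKE h'
          have hJ₀c : (insert i (insert j K)).card = d + 1 := by
            rw [Finset.card_insert_of_notMem hijK, Finset.card_insert_of_notMem hjK]
            omega
          have hbend := hv (insert i (insert j K)) hJ₀E hJ₀c j
            (Finset.mem_insert_of_mem (Finset.mem_insert_self _ _))
          have herase : (insert i (insert j K)).erase j = insert i K := by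
            rw [Finset.erase_insert_of_ne hij, Finset.erase_insert hjK]
          rw [herase] at hbend
          have hzero : ∑ i' ∈ insert i K, w ((insert i (insert j K)).erase i') * v i' = 0 := by
            refine Finset.sum_eq_zero fun i' hi' => ?_
            rcases Finset.mem_insert.1 hi' with h | h
            · rw [h, hvx, mul_zero]
            · -- i' ∈ K : the erased set contains both j and x, so w vanishes by hjx
              have hi'K := h
              have hi'j : i' ≠ j := fun hh => hjK (hh ▸ hi'K)
              have hi'i : i' ≠ i := fun hh => hiK (hh ▸ hi'K)
              have hmem : (insert i (insert j K)).erase i' ⊆ E := by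
                intro m hm
                exact hJ₀E (Finset.mem_of_mem_erase hm)
              have hcard' : ((insert i (insert j K)).erase i').card = d := by
                rw [Finset.card_erase_of_mem
                  (Finset.mem_insert_of_mem (Finset.mem_insert_of_mem hi'K)), hJ₀c]
                omega
              have hjmem : j ∈ (insert i (insert j K)).erase i' :=
                Finset.mem_erase.2 ⟨Ne.symm hi'j,
                  Finset.mem_insert_of_mem (Finset.mem_insert_self _ _)⟩
              have hxmem : i ∈ (insert i (insert j K)).erase i' :=
                Finset.mem_erase.2 ⟨Ne.symm hi'i, Finset.mem_insert_self _ _⟩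
              have hw0 : w ((insert i (insert j K)).erase i') = 0 := by
                by_contra hne
                exact hjx ⟨(insert i (insert j K)).erase i', hmem, hcard', hjmem, hxmem, hne⟩
              rw [hw0, zero_mul]
          rw [hzero] at hbend
          exact hbend
        · exact hKmain i (Finset.mem_erase.2 ⟨hix, hiE⟩) hiK hij
    · -- base case: v has full support on E \ {j}
      push_neg at hfull
      obtain ⟨Bw, hBwE, hBwc, hjBw, hwBw⟩ := hbasis
      classical
      set 𝔅 : Finset (Finset (Fin n)) :=
        (E.powersetCard d).filter (fun B => j ∈ B) with h𝔅
      have hmem𝔅 : ∀ B, B ∈ 𝔅 ↔ (B ⊆ E ∧ B.card = d ∧ j ∈ B) := by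
        intro B
        simp only [h𝔅, Finset.mem_filter, Finset.mem_powersetCard]
        tauto
      have hne : 𝔅.Nonempty := ⟨Bw, (hmem𝔅 Bw).2 ⟨hBwE, hBwc, hjBw⟩⟩
      obtain ⟨B₀, hB₀mem, hmax⟩ :=
        Finset.exists_max_image 𝔅 (fun B => w B * ∏ m ∈ E \ B, v m) hne
      obtain ⟨hB₀E, hB₀c, hjB₀⟩ := (hmem𝔅 B₀).1 hB₀mem
      have hprodBw : (∏ m ∈ E \ Bw, v m) ≠ 0 := by
        rw [Finset.prod_ne_zero_iff]
        intro m hm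
        obtain ⟨hmE, hmBw⟩ := Finset.mem_sdiff.1 hm
        exact hfull m hmE (fun h => hmBw (h ▸ hjBw))
      have hφw : w Bw * ∏ m ∈ E \ Bw, v m ≠ 0 := mul_ne_zero hwBw hprodBw
      have hφ₀ : w B₀ * ∏ m ∈ E \ B₀, v m ≠ 0 := by
        intro h0
        have hle := hmax Bw ((hmem𝔅 Bw).2 ⟨hBwE, hBwc, hjBw⟩)
        rw [h0] at hle
        exact hφw (idem_le_zero_eq hord hle)
      have hwB₀ : w B₀ ≠ 0 := left_ne_zero_of_mul hφ₀
      refine ⟨B₀.erase j, Finset.erase_subset_erase _ hB₀E, ?_, ?_, ?_⟩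
      · rw [Finset.card_erase_of_mem hjB₀, hB₀c]; omega
      · rw [Finset.insert_erase hjB₀]; exact hwB₀
      · intro i hiE hiK hij
        have hiB₀ : i ∉ B₀ := fun h => hiK (Finset.mem_erase.2 ⟨hij, h⟩)
        set J := insert i B₀ with hJ
        have hJE : J ⊆ E := by
          intro m hm
          rcases Finset.mem_insert.1 hm with h | h
          · exact h ▸ hiE
          · exact hB₀E h
        have hJc : J.card = d + 1 := by
          rw [hJ, Finset.card_insert_of_notMem hiB₀, hB₀c]
        have hbend := hv J hJE hJc j (Finset.mem_insert_of_mem hjB₀)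
        have herase : J.erase j = insert i (B₀.erase j) :=
          Finset.erase_insert_of_ne hij
        have hsum : ∑ l ∈ J.erase j, w (J.erase l) * v l ≤ w B₀ * v i := by
          refine idem_sum_le hord fun l hl => ?_
          obtain ⟨hlj, hlJ⟩ := Finset.mem_erase.1 hl
          rcases Finset.mem_insert.1 hlJ with hli | hlB₀
          · subst hli
            rw [hJ, Finset.erase_insert hiB₀]
          · have hli : l ≠ i := fun h => hiB₀ (h ▸ hlB₀)
            have hB' : J.erase l = insert i (B₀.erase l) :=
              Finset.erase_insert_of_ne (Ne.symm hli)
            have hB'mem : J.erase l ∈ 𝔅 := by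
              refine (hmem𝔅 _).2 ⟨fun m hm => hJE (Finset.mem_of_mem_erase hm), ?_, ?_⟩
              · rw [Finset.card_erase_of_mem hlJ, hJc]
                omega
              · exact Finset.mem_erase.2 ⟨Ne.symm hlj, Finset.mem_insert_of_mem hjB₀⟩
            have hle := hmax _ hB'mem
            have hlE : l ∈ E := hB₀E hlB₀
            have hlnotsd : l ∉ (E \ B₀).erase i := by
              intro h
              exact (Finset.mem_sdiff.1 (Finset.mem_of_mem_erase h)).2 hlB₀
            have hEB' : E \ (insert i (B₀.erase l)) = insert l ((E \ B₀).erase i) := by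
              ext m
              constructor
              · intro hm
                obtain ⟨hmE, hmn⟩ := Finset.mem_sdiff.1 hm
                by_cases hml : m = l
                · exact hml ▸ Finset.mem_insert_self _ _
                · have hmi : m ≠ i := fun h => hmn (h ▸ Finset.mem_insert_self _ _)
                  have hmB₀ : m ∉ B₀ := fun h =>
                    hmn (Finset.mem_insert_of_mem (Finset.mem_erase.2 ⟨hml, h⟩))
                  exact Finset.mem_insert_of_mem
                    (Finset.mem_erase.2 ⟨hmi, Finset.mem_sdiff.2 ⟨hmE, hmB₀⟩⟩)
              · intro hm
                rcases Finset.mem_insert.1 hm with hml | hm'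
                · subst hml
                  refine Finset.mem_sdiff.2 ⟨hlE, ?_⟩
                  intro hmem
                  rcases Finset.mem_insert.1 hmem with h | h
                  · exact hli h
                  · exact (Finset.mem_erase.1 h).1 rfl
                · obtain ⟨hmi, hmsd⟩ := Finset.mem_erase.1 hm'
                  obtain ⟨hmE, hmB₀⟩ := Finset.mem_sdiff.1 hmsd
                  refine Finset.mem_sdiff.2 ⟨hmE, ?_⟩
                  intro hmem
                  rcases Finset.mem_insert.1 hmem with h | h
                  · exact hmi h
                  · exact hmB₀ (Finset.mem_of_mem_erase h)
            rw [hB'] at hle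
            have hEB₀ : E \ B₀ = insert i ((E \ B₀).erase i) := by
              rw [Finset.insert_erase (Finset.mem_sdiff.2 ⟨hiE, hiB₀⟩)]
            set P := ∏ m ∈ (E \ B₀).erase i, v m with hP
            have hPne : P ≠ 0 := by
              rw [hP, Finset.prod_ne_zero_iff]
              intro m hm
              obtain ⟨hmE, hmB₀⟩ := Finset.mem_sdiff.1 (Finset.mem_of_mem_erase hm)
              exact hfull m hmE (fun h => hmB₀ (h ▸ hjB₀))
            have hprod1 : ∏ m ∈ E \ (insert i (B₀.erase l)), v m = v l * P := by
              rw [hEB', Finset.prod_insert hlnotsd]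
            have hprod2 : ∏ m ∈ E \ B₀, v m = v i * P := by
              conv_lhs => rw [hEB₀]
              rw [Finset.prod_insert (Finset.notMem_erase _ _)]
            rw [hprod1, hprod2] at hle
            have hle' : (w (insert i (B₀.erase l)) * v l) * P ≤ (w B₀ * v i) * P := by
              rw [mul_assoc, mul_assoc]
              exact hle
            rw [hB']
            exact idem_le_cancel hord hle' hPne
        calc w (insert i (B₀.erase j)) * v j
            = w (J.erase j) * v j := by rw [herase]
          _ ≤ ∑ l ∈ J.erase j, w (J.erase l) * v l := hbend
          _ ≤ w B₀ * v i := hsum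
          _ = w (insert j (B₀.erase j)) * v i := by rw [Finset.insert_erase hjB₀]
end KL


section Orth
variable {S : Type*} [Semifield S] [LinearOrder S] {n : ℕ}

/-- Membership in a tropical linear space, in bend-inequality form. -/
theorem memL_iff (hord : ∀ a b : S, a ≤ b ↔ a + b = b) {r : ℕ} {u : Finset (Fin n) → S}
    {v : Fin n → S} :
    v ∈ tropLinearSpace n r u ↔ ∀ J : Finset (Fin n), J.card = r + 1 → ∀ p ∈ J,
      u (J.erase p) * v p ≤ ∑ i ∈ J.erase p, u (J.erase i) * v i := by
  constructor
  · intro hv J hJ p hp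
    exact (idem_bend_iff hord hp).1 (hv J hJ p)
  · intro hv J hJ p
    by_cases hp : p ∈ J
    · exact (idem_bend_iff hord hp).2 (hv J hJ p hp)
    · rw [Finset.erase_eq_of_notMem hp]

/-- The orthogonality lemma: any point of `L_w` and any point of `L_{⋆w}` satisfy each
other's bend relations. -/
theorem orth_pairing (hid : ∀ s : S, s + s = s) (hord : ∀ a b : S, a ≤ b ↔ a + b = b)
    {d : ℕ} {w : Finset (Fin n) → S}
    (hw : ∃ I : Finset (Fin n), I.card = d ∧ w I ≠ 0)
    {v f : Fin n → S} (hv : v ∈ tropLinearSpace n d w)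
    (hf : f ∈ tropLinearSpace n (n - d) (fun K => w (univ \ K))) (j : Fin n) :
    f j * v j ≤ ∑ i ∈ univ.erase j, f i * v i := by
  by_cases hz : f j * v j = 0
  · rw [hz]
    exact idem_le0 hord _
  have hvj : v j ≠ 0 := right_ne_zero_of_mul hz
  have hfj : f j ≠ 0 := left_ne_zero_of_mul hz
  obtain ⟨I, hIc, hwI⟩ := hw
  have hdn : d ≤ n := by
    have := Finset.card_le_univ I
    rwa [hIc, Fintype.card_fin] at this
  have hv' := (memL_iff hord).1 hv
  have hf' := (memL_iff hord).1 hf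
  have hd1 : 1 ≤ d := by
    by_contra hd0
    have hd0 : d = 0 := by omega
    subst hd0
    have hI : I = ∅ := Finset.card_eq_zero.1 hIc
    have := hv' {j} (by simp) j (Finset.mem_singleton_self j)
    simp only [Finset.erase_singleton, Finset.sum_empty] at this
    have : w ∅ * v j = 0 := idem_le_zero_eq hord this
    rcases mul_eq_zero.1 this with h | h
    · exact hwI (hI ▸ h)
    · exact hvj h
  by_cases hloop : ∃ B : Finset (Fin n), B.card = d ∧ j ∈ B ∧ w B ≠ 0
  · obtain ⟨B, hBc, hjB, hwB⟩ := hloop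
    obtain ⟨K, hKsub, hKc, hKw, hKmain⟩ :=
      key_lemma hid hord n univ d w v j (by rw [Finset.card_univ, Fintype.card_fin])
        hd1 (fun J _ hJc p hp => hv' J hJc p hp) (Finset.mem_univ j) hvj
        ⟨B, Finset.subset_univ B, hBc, hjB, hwB⟩
    have hjK : j ∉ K := fun h => (Finset.mem_erase.1 (hKsub h)).1 rfl
    set J := univ \ K with hJdef
    have hKuniv : K ⊆ univ := Finset.subset_univ K
    have hJc : J.card = (n - d) + 1 := by
      rw [hJdef, Finset.card_sdiff_of_subset hKuniv, Finset.card_univ, Fintype.card_fin]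
      omega
    have hjJ : j ∈ J := Finset.mem_sdiff.2 ⟨Finset.mem_univ j, hjK⟩
    have hfb := hf' J hJc j hjJ
    have hJK : ∀ i ∈ J, univ \ (J.erase i) = insert i K := by
      intro i hi
      rw [hJdef, compl_erase_compl]
    have hterm : ∀ i ∈ J, w (univ \ J.erase i) = w (insert i K) := by
      intro i hi
      rw [hJK i hi]
    rw [hterm j hjJ] at hfb
    have hfb2 : w (insert j K) * f j ≤ ∑ i ∈ J.erase j, f i * w (insert i K) := by
      calc w (insert j K) * f j
          ≤ ∑ i ∈ J.erase j, w (univ \ J.erase i) * f i := hfb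
        _ = ∑ i ∈ J.erase j, f i * w (insert i K) := by
            refine Finset.sum_congr rfl fun i hi => ?_
            rw [hterm i (Finset.mem_of_mem_erase hi), mul_comm]
    have hstep : (f j * v j) * w (insert j K) ≤
        (∑ i ∈ J.erase j, f i * v i) * w (insert j K) := by
      have h1 : (w (insert j K) * f j) * v j ≤
          (∑ i ∈ J.erase j, f i * w (insert i K)) * v j :=
        idem_mul_le_right hord hfb2 _
      rw [Finset.sum_mul] at h1
      have h2 : ∑ i ∈ J.erase j, (f i * w (insert i K)) * v j ≤
          ∑ i ∈ J.erase j, (f i * v i) * w (insert j K) := by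
        refine idem_sum_le_sum hord fun i hi => ?_
        obtain ⟨hij, hiJ⟩ := Finset.mem_erase.1 hi
        have hiK : i ∉ K := (Finset.mem_sdiff.1 hiJ).2
        have := hKmain i (Finset.mem_univ i) hiK hij
        calc (f i * w (insert i K)) * v j = f i * (w (insert i K) * v j) := by ring
          _ ≤ f i * (w (insert j K) * v i) := idem_mul_le_left hord this _
          _ = (f i * v i) * w (insert j K) := by ring
      calc (f j * v j) * w (insert j K) = (w (insert j K) * f j) * v j := by ring
        _ ≤ ∑ i ∈ J.erase j, (f i * w (insert i K)) * v j := h1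
        _ ≤ ∑ i ∈ J.erase j, (f i * v i) * w (insert j K) := h2
        _ = (∑ i ∈ J.erase j, f i * v i) * w (insert j K) := (Finset.sum_mul _ _ _).symm
    have hfinal : f j * v j ≤ ∑ i ∈ J.erase j, f i * v i :=
      idem_le_cancel hord hstep hKw
    calc f j * v j ≤ ∑ i ∈ J.erase j, f i * v i := hfinal
      _ ≤ ∑ i ∈ univ.erase j, f i * v i :=
        idem_sum_le_sum_subset hord (Finset.erase_subset_erase _ (Finset.sdiff_subset)) _
  · push_neg at hloop
    exfalso
    have hjI : j ∉ I := fun h => hwI (hloop I hIc h)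
    have hJc : (insert j I).card = d + 1 := by
      rw [Finset.card_insert_of_notMem hjI, hIc]
    have hbend := hv' (insert j I) hJc j (Finset.mem_insert_self _ _)
    rw [Finset.erase_insert hjI] at hbend
    have hzero : ∑ i ∈ I, w ((insert j I).erase i) * v i = 0 := by
      refine Finset.sum_eq_zero fun i hi => ?_
      have hij : i ≠ j := fun h => hjI (h ▸ hi)
      have heq : (insert j I).erase i = insert j (I.erase i) :=
        Finset.erase_insert_of_ne (Ne.symm hij)
      have hcard : (insert j (I.erase i)).card = d := by
        rw [Finset.card_insert_of_notMem (fun h => hjI (Finset.mem_of_mem_erase h)),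
          Finset.card_erase_of_mem hi, hIc]
        omega
      rw [heq, hloop _ hcard (Finset.mem_insert_self _ _), zero_mul]
    rw [hzero] at hbend
    have : w I * v j = 0 := idem_le_zero_eq hord hbend
    rcases mul_eq_zero.1 this with h | h
    · exact hwI h
    · exact hvj h

end Orth


section Main
variable {S : Type*} [Semifield S] [LinearOrder S] {n : ℕ}

/-- The cocircuit vector of `u` associated with `K` lies in the tropical linear space. -/
theorem cocirc_mem (hid : ∀ s : S, s + s = s) (hord : ∀ a b : S, a ≤ b ↔ a + b = b)
    {r : ℕ} (u : Finset (Fin n) → S)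
    (hu : ∀ A B : Finset (Fin n), A.card = r + 1 → B.card + 1 = r → ∀ p ∈ A \ B,
      u (A.erase p) * u (insert p B) ≤ ∑ i ∈ (A \ B).erase p, u (A.erase i) * u (insert i B))
    (K : Finset (Fin n)) (hK : K.card + 1 = r) :
    (fun i => if i ∈ K then 0 else u (insert i K)) ∈ tropLinearSpace n r u := by
  rw [memL_iff hord]
  intro A hA p hp
  by_cases hpK : p ∈ K
  · simp only [if_pos hpK, mul_zero]
    exact idem_le0 hord _
  · simp only [if_neg hpK]
    have hpAB : p ∈ A \ K := Finset.mem_sdiff.2 ⟨hp, hpK⟩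
    calc u (A.erase p) * u (insert p K)
        ≤ ∑ i ∈ (A \ K).erase p, u (A.erase i) * u (insert i K) := hu A K hA hK p hpAB
      _ = ∑ i ∈ (A \ K).erase p, u (A.erase i) * (if i ∈ K then 0 else u (insert i K)) := by
          refine Finset.sum_congr rfl fun i hi => ?_
          have hiK : i ∉ K := (Finset.mem_sdiff.1 (Finset.mem_of_mem_erase hi)).2
          rw [if_neg hiK]
      _ ≤ ∑ i ∈ A.erase p, u (A.erase i) * (if i ∈ K then 0 else u (insert i K)) :=
          idem_sum_le_sum_subset hord
            (Finset.erase_subset_erase _ (Finset.sdiff_subset)) _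

/-- The tropical Plücker relations in inequality form. -/
theorem tpr'_of_tpr (hord : ∀ a b : S, a ≤ b ↔ a + b = b) {d : ℕ}
    {w : Finset (Fin n) → S} (hpl : TropPluckerRel n d w) :
    ∀ A B : Finset (Fin n), A.card = d + 1 → B.card + 1 = d → ∀ p ∈ A \ B,
      w (A.erase p) * w (insert p B) ≤ ∑ i ∈ (A \ B).erase p, w (A.erase i) * w (insert i B) := by
  intro A B hA hB p hp
  have := hpl A B hA (by omega) p hp
  exact (idem_bend_iff hord hp).1 this

/-- The dual (Hodge star) of a tropical Plücker vector satisfies the rank-`n-d`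
Plücker relations in inequality form. -/
theorem dual_tpr (hord : ∀ a b : S, a ≤ b ↔ a + b = b) {d : ℕ} (hdn : d ≤ n)
    {w : Finset (Fin n) → S} (hpl : TropPluckerRel n d w) :
    ∀ A B : Finset (Fin n), A.card = (n - d) + 1 → B.card + 1 = n - d → ∀ p ∈ A \ B,
      w (univ \ A.erase p) * w (univ \ insert p B) ≤
        ∑ i ∈ (A \ B).erase p, w (univ \ A.erase i) * w (univ \ insert i B) := by
  intro A B hA hB p hp
  have hAn : A.card ≤ n := by
    have := Finset.card_le_univ A
    rwa [Fintype.card_fin] at this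
  have hd1 : 1 ≤ d := by omega
  set A' := univ \ B with hA'
  set B' := univ \ A with hB'
  have hA'c : A'.card = d + 1 := by
    rw [hA', Finset.card_sdiff_of_subset (Finset.subset_univ _), Finset.card_univ, Fintype.card_fin]
    omega
  have hB'c : B'.card = d - 1 := by
    rw [hB', Finset.card_sdiff_of_subset (Finset.subset_univ _), Finset.card_univ, Fintype.card_fin]
    omega
  obtain ⟨hpA, hpB⟩ := Finset.mem_sdiff.1 hp
  have hp' : p ∈ A' \ B' := by
    rw [hA', hB', sdiff_sdiff_eq_sdiff]
    exact hp
  have hset : A' \ B' = A \ B := by rw [hA', hB', sdiff_sdiff_eq_sdiff]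
  have hbend := (idem_bend_iff hord hp').1 (hpl A' B' hA'c hB'c p hp')
  have hterm : ∀ i ∈ A \ B, w (A'.erase i) * w (insert i B')
      = w (univ \ A.erase i) * w (univ \ insert i B) := by
    intro i hi
    have h1 : A'.erase i = univ \ insert i B := by
      rw [hA']
      ext m
      simp only [Finset.mem_erase, Finset.mem_sdiff, Finset.mem_univ, true_and,
        Finset.mem_insert, not_or]
    have h2 : insert i B' = univ \ A.erase i := by
      rw [hB']
      exact insert_compl_eq_compl_erase
    rw [h1, h2, mul_comm]
  calc w (univ \ A.erase p) * w (univ \ insert p B)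
      = w (A'.erase p) * w (insert p B') := (hterm p hp).symm
    _ ≤ ∑ i ∈ (A' \ B').erase p, w (A'.erase i) * w (insert i B') := hbend
    _ = ∑ i ∈ (A \ B).erase p, w (univ \ A.erase i) * w (univ \ insert i B) := by
        rw [hset]
        exact Finset.sum_congr rfl fun i hi => hterm i (Finset.mem_of_mem_erase hi)

end Main

/-- over a totally ordered idempotent semifield, for a tropical Plücker
vector `w`: `(L_w)^⊥ = L_{⋆w}` and consequently `L_w^{⊥⊥} = L_w`, where
`(⋆w)_K = w_{K^c}`. -/
theorem orthDual_tropLinearSpace {S : Type*} [Semifield S] [LinearOrder S]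
    (hid : ∀ s : S, s + s = s) (hord : ∀ a b : S, a ≤ b ↔ a + b = b)
    (n d : ℕ) (w : Finset (Fin n) → S)
    (hw : ∃ I : Finset (Fin n), I.card = d ∧ w I ≠ 0)
    (hpl : TropPluckerRel n d w) :
    orthDual (tropLinearSpace n d w)
        = tropLinearSpace n (n - d) (fun K => w (univ \ K))
    ∧ orthDual (orthDual (tropLinearSpace n d w)) = tropLinearSpace n d w := by
  have hdn : d ≤ n := by
    obtain ⟨I, hIc, -⟩ := hw
    have := Finset.card_le_univ I
    rwa [hIc, Fintype.card_fin] at this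
  have h1 : orthDual (tropLinearSpace n d w)
      = tropLinearSpace n (n - d) (fun K => w (univ \ K)) := by
    apply Set.eq_of_subset_of_subset
    · -- `orthDual L_w ⊆ L_{⋆w}`, via the cocircuit vectors of `w`
      intro f hf
      rw [memL_iff hord]
      intro J hJ p hp
      have hJn : J.card ≤ n := by
        have := Finset.card_le_univ J
        rwa [Fintype.card_fin] at this
      have hd1 : 1 ≤ d := by omega
      set K : Finset (Fin n) := univ \ J with hK
      have hKc : K.card + 1 = d := by
        rw [hK, Finset.card_sdiff_of_subset (Finset.subset_univ _), Finset.card_univ, Fintype.card_fin]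
        omega
      set v : Fin n → S := fun i => if i ∈ K then 0 else w (insert i K) with hvdef
      have hvmem : v ∈ tropLinearSpace n d w :=
        cocirc_mem hid hord w (tpr'_of_tpr hord hpl) K hKc
      have hbend := (idem_bend_iff hord (Finset.mem_univ p)).1 (hf v hvmem p)
      have hcompl : ∀ i ∈ J, univ \ J.erase i = insert i K := by
        intro i _
        rw [hK]
        exact compl_erase_eq_insert_compl
      have hpK : p ∉ K := fun h => (Finset.mem_sdiff.1 h).2 hp
      have hvp : v p = w (insert p K) := by rw [hvdef]; simp [hpK]
      have hvanish : ∀ i ∈ univ.erase p, i ∉ J.erase p → f i * v i = 0 := by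
        intro i hi hiJp
        have hip : i ≠ p := (Finset.mem_erase.1 hi).1
        have hiJ : i ∉ J := fun h => hiJp (Finset.mem_erase.2 ⟨hip, h⟩)
        have hiK : i ∈ K := by
          rw [hK]
          exact Finset.mem_sdiff.2 ⟨Finset.mem_univ i, hiJ⟩
        rw [hvdef]
        simp [hiK]
      have hsub := Finset.sum_subset
        (Finset.erase_subset_erase p (Finset.subset_univ J)) hvanish
      have hcongr : ∑ i ∈ J.erase p, f i * v i
          = ∑ i ∈ J.erase p, w (univ \ J.erase i) * f i := by
        refine Finset.sum_congr rfl fun i hi => ?_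
        have hiJ : i ∈ J := Finset.mem_of_mem_erase hi
        have hiK : i ∉ K := fun h => (Finset.mem_sdiff.1 h).2 hiJ
        rw [hvdef]
        simp only [if_neg hiK]
        rw [hcompl i hiJ, mul_comm]
      show w (univ \ J.erase p) * f p ≤ ∑ i ∈ J.erase p, w (univ \ J.erase i) * f i
      calc w (univ \ J.erase p) * f p = f p * v p := by
            rw [hcompl p hp, hvp, mul_comm]
        _ ≤ ∑ i ∈ univ.erase p, f i * v i := hbend
        _ = ∑ i ∈ J.erase p, f i * v i := hsub.symm
        _ = ∑ i ∈ J.erase p, w (univ \ J.erase i) * f i := hcongr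
    · -- `L_{⋆w} ⊆ orthDual L_w`, by the orthogonality pairing
      intro f hf
      simp only [orthDual, Set.mem_setOf_eq]
      intro v hv j
      exact (idem_bend_iff hord (Finset.mem_univ j)).2 (orth_pairing hid hord hw hv hf j)
  refine ⟨h1, ?_⟩
  rw [h1]
  apply Set.eq_of_subset_of_subset
  · -- `orthDual L_{⋆w} ⊆ L_w`, via the cocircuit vectors of `⋆w`
    intro g hg
    rw [memL_iff hord]
    intro A hA p hp
    have hAn : A.card ≤ n := by
      have := Finset.card_le_univ A
      rwa [Fintype.card_fin] at this
    set K' : Finset (Fin n) := univ \ A with hK'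
    have hK'c : K'.card + 1 = n - d := by
      rw [hK', Finset.card_sdiff_of_subset (Finset.subset_univ _), Finset.card_univ, Fintype.card_fin]
      omega
    set v' : Fin n → S := fun i => if i ∈ K' then 0
      else (fun K => w (univ \ K)) (insert i K') with hv'def
    have hv'mem : v' ∈ tropLinearSpace n (n - d) (fun K => w (univ \ K)) :=
      cocirc_mem hid hord _ (dual_tpr hord hdn hpl) K' hK'c
    have hbend := (idem_bend_iff hord (Finset.mem_univ p)).1 (hg v' hv'mem p)
    have hpK' : p ∉ K' := fun h => (Finset.mem_sdiff.1 h).2 hp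
    have hv'p : v' p = w (A.erase p) := by
      rw [hv'def]
      simp only [if_neg hpK']
      show w (univ \ insert p (univ \ A)) = w (A.erase p)
      rw [compl_insert_compl]
    have hvanish : ∀ i ∈ univ.erase p, i ∉ A.erase p → g i * v' i = 0 := by
      intro i hi hiAp
      have hip : i ≠ p := (Finset.mem_erase.1 hi).1
      have hiA : i ∉ A := fun h => hiAp (Finset.mem_erase.2 ⟨hip, h⟩)
      have hiK' : i ∈ K' := by
        rw [hK']
        exact Finset.mem_sdiff.2 ⟨Finset.mem_univ i, hiA⟩
      rw [hv'def]
      simp [hiK']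
    have hsub := Finset.sum_subset
      (Finset.erase_subset_erase p (Finset.subset_univ A)) hvanish
    have hcongr : ∑ i ∈ A.erase p, g i * v' i
        = ∑ i ∈ A.erase p, w (A.erase i) * g i := by
      refine Finset.sum_congr rfl fun i hi => ?_
      have hiA : i ∈ A := Finset.mem_of_mem_erase hi
      have hiK' : i ∉ K' := fun h => (Finset.mem_sdiff.1 h).2 hiA
      rw [hv'def]
      simp only [if_neg hiK']
      show g i * w (univ \ insert i (univ \ A)) = w (A.erase i) * g i
      rw [compl_insert_compl, mul_comm]
    calc w (A.erase p) * g p = g p * v' p := by rw [hv'p, mul_comm]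
      _ ≤ ∑ i ∈ univ.erase p, g i * v' i := hbend
      _ = ∑ i ∈ A.erase p, g i * v' i := hsub.symm
      _ = ∑ i ∈ A.erase p, w (A.erase i) * g i := hcongr
  · -- `L_w ⊆ orthDual L_{⋆w}`, by the orthogonality pairing
    intro g hg
    simp only [orthDual, Set.mem_setOf_eq]
    intro f hf j
    refine (idem_bend_iff hord (Finset.mem_univ j)).2 ?_
    have hpair := orth_pairing hid hord hw hg hf j
    calc g j * f j = f j * g j := mul_comm _ _
      _ ≤ ∑ i ∈ univ.erase j, f i * g i := hpair
      _ = ∑ i ∈ univ.erase j, g i * f i := Finset.sum_congr rfl fun i _ => mul_comm _ _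
end

section
/- Let S = B be the Boolean semifield and let w = Σ_{I∈𝓑} e_I ∈ ⋀^3 B^6 be the Plücker vector of the graphic matroid M(K_4), whose bases are 𝓑 = C([6],3) ∖ {{1,2,3},{1,4,5},{2,5,6},{3,4,6}}. Then ⋀^3 Q_w ≅ B is free of rank one; the images of x_I for I ∈ 𝓑 all equal the generator, and x_I = 0 for I ∈ {{1,2,3},{1,4,5},{2,5,6},{3,4,6}}. -/
open Finset

set_option maxRecDepth 100000
set_option maxHeartbeats 2000000
open Finset

def myBad : Finset (Finset (Fin 6)) :=
  {({0,1,2} : Finset (Fin 6)), {0,3,4}, {1,4,5}, {2,3,5}}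
def myB : Finset (Finset (Fin 6)) := (univ : Finset (Fin 6)).powersetCard 3 \ myBad
def isB (I : Finset (Fin 6)) : Prop := I.card = 3 ∧ I ∉ myBad
instance : DecidablePred isB := fun I => by unfold isB; infer_instance

/-- evaluation of wedgeElt for a 0/1-valued w as an indicator function -/
theorem wedge_eval {S : Type*} [Semifield S] (P : Finset (Fin 6) → Prop) [DecidablePred P]
    (T J B : Finset (Fin 6)) :
    wedgeElt 3 (fun I => if P I then (1:S) else 0) T J B
      = fun K => if ∃ i ∈ T \ B, K.1 = insert i B ∧ P (J.erase i) then 1 else 0 := by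
  funext K
  show (∑ i ∈ T \ B, if K.1 = insert i B then (if P (J.erase i) then (1:S) else 0) else 0) = _
  by_cases h : ∃ i ∈ T \ B, K.1 = insert i B ∧ P (J.erase i)
  · obtain ⟨i0, hi0, hK, hb⟩ := h
    rw [if_pos ⟨i0, hi0, hK, hb⟩]
    rw [Finset.sum_eq_single i0]
    · rw [if_pos hK, if_pos hb]
    · intro b hb' hne
      by_cases hKb : K.1 = insert b B
      · exfalso
        apply hne
        have hbB : b ∉ B := (Finset.mem_sdiff.1 hb').2
        have : b ∈ insert i0 B := by rw [← hK, hKb]; exact Finset.mem_insert_self b B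
        rcases Finset.mem_insert.1 this with h1 | h2
        · exact h1
        · exact absurd h2 hbB
      · rw [if_neg hKb]
    · intro hi0'; exact absurd hi0 hi0'
  · rw [if_neg h]
    apply Finset.sum_eq_zero
    intro i hi
    by_cases hKi : K.1 = insert i B
    · rw [if_pos hKi]
      rw [if_neg (fun hP => h ⟨i, hi, hKi, hP⟩)]
    · rw [if_neg hKi]

theorem ind_congr {S : Type*} [Semifield S] (P Q : WIdx 6 3 → Prop)
    [DecidablePred P] [DecidablePred Q] (h : ∀ K, P K ↔ Q K) :
    (fun K => if P K then (1:S) else 0) = fun K => if Q K then 1 else 0 := by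
  funext K; rw [if_congr (h K) rfl rfl]

theorem ind_or {S : Type*} [Semifield S] (hid : ∀ s : S, s + s = s)
    (P Q : WIdx 6 3 → Prop) [DecidablePred P] [DecidablePred Q] :
    (fun K => if P K ∨ Q K then (1:S) else 0)
      = (fun K => if P K then (1:S) else 0) + fun K => if Q K then 1 else 0 := by
  funext K
  show _ = (if P K then (1:S) else 0) + (if Q K then 1 else 0)
  by_cases hP : P K <;> by_cases hQ : Q K <;>
    simp [hP, hQ, hid]

def myw (S : Type*) [Semifield S] : Finset (Fin 6) → S :=
  fun I => if I ∈ (univ : Finset (Fin 6)).powersetCard 3 \ myBad then 1 else 0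

theorem myw_eq (S : Type*) [Semifield S] :
    myw S = fun I => if isB I then (1:S) else 0 := by
  funext I
  simp only [myw, isB, Finset.mem_sdiff, Finset.mem_powersetCard_univ]

def phi (S : Type*) [Semifield S] (m : WIdx 6 3 → S) : S :=
  ∑ K : WIdx 6 3, (if isB K.1 then (1:S) else 0) * m K

theorem phi_add {S : Type*} [Semifield S] (m m' : WIdx 6 3 → S) :
    phi S (m + m') = phi S m + phi S m' := by
  simp [phi, mul_add, Finset.sum_add_distrib]

theorem phi_smul {S : Type*} [Semifield S] (s : S) (m : WIdx 6 3 → S) :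
    phi S (s • m) = s * phi S m := by
  simp only [phi, Pi.smul_apply, smul_eq_mul, Finset.mul_sum]
  exact Finset.sum_congr rfl fun K _ => by ring

theorem sum_ind {S : Type*} [Semifield S] (hid : ∀ s : S, s + s = s)
    {α : Type*} [DecidableEq α] (s : Finset α) (P : α → Prop) [DecidablePred P] :
    (∑ a ∈ s, if P a then (1:S) else 0) = if ∃ a ∈ s, P a then 1 else 0 := by
  induction s using Finset.induction_on with
  | empty => simp
  | @insert a s' hx ih =>
    rw [Finset.sum_insert hx, ih]
    by_cases hP : P a
    · rw [if_pos hP, if_pos (⟨a, Finset.mem_insert_self a s', hP⟩ : ∃ b ∈ insert a s', P b)]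
      by_cases h2 : ∃ b ∈ s', P b
      · rw [if_pos h2]; exact hid 1
      · rw [if_neg h2, add_zero]
    · rw [if_neg hP, zero_add]
      apply if_congr _ rfl rfl
      constructor
      · rintro ⟨b, hb, hPb⟩; exact ⟨b, Finset.mem_insert_of_mem hb, hPb⟩
      · rintro ⟨b, hb, hPb⟩
        rcases Finset.mem_insert.1 hb with rfl | hb'
        · exact absurd hPb hP
        · exact ⟨b, hb', hPb⟩

theorem phi_ind {S : Type*} [Semifield S] (hid : ∀ s : S, s + s = s)
    (Q : WIdx 6 3 → Prop) [DecidablePred Q] :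
    phi S (fun K => if Q K then 1 else 0)
      = if ∃ K : WIdx 6 3, isB K.1 ∧ Q K then 1 else 0 := by
  rw [phi]
  have : ∀ K : WIdx 6 3, (if isB K.1 then (1:S) else 0) * (if Q K then 1 else 0)
      = if isB K.1 ∧ Q K then 1 else 0 := by
    intro K
    by_cases h1 : isB K.1 <;> by_cases h2 : Q K <;> simp [h1, h2]
  rw [Finset.sum_congr rfl fun K _ => this K, sum_ind hid]
  apply if_congr _ rfl rfl
  simp

theorem phi_wedge {S : Type*} [Semifield S] (hid : ∀ s : S, s + s = s)
    (T J B : Finset (Fin 6)) :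
    phi S (wedgeElt 3 (myw S) T J B)
      = if ∃ i ∈ T \ B, isB (insert i B) ∧ isB (J.erase i) then 1 else 0 := by
  rw [myw_eq, wedge_eval, phi_ind hid]
  apply if_congr _ rfl rfl
  constructor
  · rintro ⟨K, hK, i, hi, hKi, hJi⟩
    refine ⟨i, hi, ?_, hJi⟩
    rwa [← hKi]
  · rintro ⟨i, hi, hiB, hJi⟩
    exact ⟨⟨insert i B, hiB.1⟩, hiB, i, hi, rfl, hJi⟩

theorem key : ∀ J ∈ (univ : Finset (Fin 6)).powersetCard 4,
    ∀ B ∈ (univ : Finset (Fin 6)).powersetCard 2, ∀ j ∈ J,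
    ((∃ i ∈ J \ B, isB (insert i B) ∧ isB (J.erase i)) ↔
     (∃ i ∈ (J.erase j) \ B, isB (insert i B) ∧ isB (J.erase i))) := by decide

theorem phi_congr {S : Type*} [Semifield S] (hid : ∀ s : S, s + s = s)
    {m m' : WIdx 6 3 → S} (h : ModCongr S (WedgeBendRel 6 3 (myw S)) m m') :
    phi S m = phi S m' := by
  induction h with
  | of hr =>
    obtain ⟨J, B, j, hj, hJ, hB, rfl, rfl⟩ := hr
    rw [phi_wedge hid, phi_wedge hid]
    apply if_congr _ rfl rfl
    exact key J (Finset.mem_powersetCard_univ.2 hJ) B (Finset.mem_powersetCard_univ.2 hB) j hj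
  | refl x => rfl
  | symm _ ih => exact ih.symm
  | trans _ _ ih1 ih2 => exact ih1.trans ih2
  | add _ _ ih1 ih2 => rw [phi_add, phi_add, ih1, ih2]
  | smul s _ ih => rw [phi_smul, phi_smul, ih]

theorem gen_rel {S : Type*} [Semifield S] (J B : Finset (Fin 6)) (j : Fin 6) (hj : j ∈ J)
    (hJ : J.card = 4) (hB : B.card = 2) :
    ModCongr S (WedgeBendRel 6 3 (myw S)) (wedgeElt 3 (myw S) J J B)
      (wedgeElt 3 (myw S) (J.erase j) J B) :=
  ModCongr.of ⟨J, B, j, hj, hJ, hB, rfl, rfl⟩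

theorem edge_congr {S : Type*} [Semifield S] (hid : ∀ s : S, s + s = s)
    (J B : Finset (Fin 6)) (i1 i2 : Fin 6) (K1 K2 : Finset (Fin 6))
    (h1 : i1 ∈ J) (h2 : i2 ∈ J) (hJ : J.card = 4) (hB : B.card = 2)
    (hiff : ∀ K : WIdx 6 3,
      (∃ i ∈ J \ B, K.1 = insert i B ∧ isB (J.erase i)) ↔ (K.1 = K1 ∨ K.1 = K2))
    (hiff1 : ∀ K : WIdx 6 3,
      (∃ i ∈ (J.erase i1) \ B, K.1 = insert i B ∧ isB (J.erase i)) ↔ K.1 = K2)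
    (hiff2 : ∀ K : WIdx 6 3,
      (∃ i ∈ (J.erase i2) \ B, K.1 = insert i B ∧ isB (J.erase i)) ↔ K.1 = K1) :
    ModCongr S (WedgeBendRel 6 3 (myw S)) (deltaVec S 6 3 K1) (deltaVec S 6 3 K2) := by
  have hp : wedgeElt 3 (myw S) J J B = deltaVec S 6 3 K1 + deltaVec S 6 3 K2 := by
    rw [myw_eq, wedge_eval, ind_congr _ _ hiff, ind_or hid]; rfl
  have hq1 : wedgeElt 3 (myw S) (J.erase i1) J B = deltaVec S 6 3 K2 := by
    rw [myw_eq, wedge_eval, ind_congr _ _ hiff1]; rfl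
  have hq2 : wedgeElt 3 (myw S) (J.erase i2) J B = deltaVec S 6 3 K1 := by
    rw [myw_eq, wedge_eval, ind_congr _ _ hiff2]; rfl
  have r1 := gen_rel (S := S) J B i2 h2 hJ hB
  rw [hp, hq2] at r1
  have r2 := gen_rel (S := S) J B i1 h1 hJ hB
  rw [hp, hq1] at r2
  exact ModCongr.trans (ModCongr.symm r1) r2

theorem zero_congr {S : Type*} [Semifield S]
    (J B : Finset (Fin 6)) (j : Fin 6) (I : Finset (Fin 6))
    (hj : j ∈ J) (hJ : J.card = 4) (hB : B.card = 2)
    (hiffp : ∀ K : WIdx 6 3,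
      (∃ i ∈ J \ B, K.1 = insert i B ∧ isB (J.erase i)) ↔ K.1 = I)
    (hiffq : ∀ K : WIdx 6 3,
      ¬ (∃ i ∈ (J.erase j) \ B, K.1 = insert i B ∧ isB (J.erase i))) :
    ModCongr S (WedgeBendRel 6 3 (myw S)) (deltaVec S 6 3 I) 0 := by
  have hp : wedgeElt 3 (myw S) J J B = deltaVec S 6 3 I := by
    rw [myw_eq, wedge_eval, ind_congr _ _ hiffp]; rfl
  have hq : wedgeElt 3 (myw S) (J.erase j) J B = 0 := by
    rw [myw_eq, wedge_eval]
    funext K; rw [if_neg (hiffq K)]; rfl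
  have r := gen_rel (S := S) J B j hj hJ hB
  rw [hp, hq] at r; exact r

theorem congr_sum {S : Type*} [Semifield S] {r : (WIdx 6 3 → S) → (WIdx 6 3 → S) → Prop}
    {α : Type*} (s : Finset α) (f h : α → WIdx 6 3 → S)
    (hc : ∀ a ∈ s, ModCongr S r (f a) (h a)) :
    ModCongr S r (∑ a ∈ s, f a) (∑ a ∈ s, h a) := by
  classical
  induction s using Finset.induction_on with
  | empty => simpa using ModCongr.refl (0 : WIdx 6 3 → S)
  | @insert a s' hx ih =>
    rw [Finset.sum_insert hx, Finset.sum_insert hx]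
    exact ModCongr.add (hc a (Finset.mem_insert_self a s'))
      (ih fun b hb => hc b (Finset.mem_insert_of_mem hb))

theorem part4' {S : Type*} [Semifield S] :
    ∀ I ∈ myBad, ModCongr S (WedgeBendRel 6 3 (myw S)) (deltaVec S 6 3 I) 0 := by
  intro I hI
  have hd : I = ({0,1,2} : Finset (Fin 6)) ∨ I = {0,3,4} ∨ I = {1,4,5} ∨ I = {2,3,5} :=
    (show ∀ I : Finset (Fin 6), I ∈ myBad →
      (I = ({0,1,2} : Finset (Fin 6)) ∨ I = {0,3,4} ∨ I = {1,4,5} ∨ I = {2,3,5}) by decide) I hI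
  rcases hd with rfl | rfl | rfl | rfl
  · exact zero_congr {0,1,2,3} {0,1} 2 {0,1,2} (by decide) (by decide) (by decide)
      (by decide) (by decide)
  · exact zero_congr {0,1,3,4} {0,3} 4 {0,3,4} (by decide) (by decide) (by decide)
      (by decide) (by decide)
  · exact zero_congr {0,1,4,5} {1,4} 5 {1,4,5} (by decide) (by decide) (by decide)
      (by decide) (by decide)
  · exact zero_congr {0,2,3,5} {2,3} 5 {2,3,5} (by decide) (by decide) (by decide)
      (by decide) (by decide)

theorem part3' {S : Type*} [Semifield S] (hid : ∀ s : S, s + s = s) :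
    ∀ I ∈ myB, ModCongr S (WedgeBendRel 6 3 (myw S)) (deltaVec S 6 3 I)
      (deltaVec S 6 3 ({0,1,3} : Finset (Fin 6))) := by
  have e014 : ModCongr S (WedgeBendRel 6 3 (myw S)) (deltaVec S 6 3 ({0,1,4} : Finset (Fin 6))) (deltaVec S 6 3 ({0,1,3} : Finset (Fin 6))) :=
    edge_congr hid {0,1,3,4} {0,1} 4 3 {0,1,4} {0,1,3} (by decide) (by decide) (by decide) (by decide) (by decide) (by decide) (by decide)
  have e015 : ModCongr S (WedgeBendRel 6 3 (myw S)) (deltaVec S 6 3 ({0,1,5} : Finset (Fin 6))) (deltaVec S 6 3 ({0,1,3} : Finset (Fin 6))) :=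
    edge_congr hid {0,1,3,5} {0,1} 5 3 {0,1,5} {0,1,3} (by decide) (by decide) (by decide) (by decide) (by decide) (by decide) (by decide)
  have e023 : ModCongr S (WedgeBendRel 6 3 (myw S)) (deltaVec S 6 3 ({0,2,3} : Finset (Fin 6))) (deltaVec S 6 3 ({0,1,3} : Finset (Fin 6))) :=
    edge_congr hid {0,1,2,3} {0,3} 2 1 {0,2,3} {0,1,3} (by decide) (by decide) (by decide) (by decide) (by decide) (by decide) (by decide)
  have e024 : ModCongr S (WedgeBendRel 6 3 (myw S)) (deltaVec S 6 3 ({0,2,4} : Finset (Fin 6))) (deltaVec S 6 3 ({0,2,3} : Finset (Fin 6))) :=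
    edge_congr hid {0,1,3,4} {0,2} 4 3 {0,2,4} {0,2,3} (by decide) (by decide) (by decide) (by decide) (by decide) (by decide) (by decide)
  have e025 : ModCongr S (WedgeBendRel 6 3 (myw S)) (deltaVec S 6 3 ({0,2,5} : Finset (Fin 6))) (deltaVec S 6 3 ({0,2,3} : Finset (Fin 6))) :=
    edge_congr hid {0,2,3,5} {0,2} 5 3 {0,2,5} {0,2,3} (by decide) (by decide) (by decide) (by decide) (by decide) (by decide) (by decide)
  have e035 : ModCongr S (WedgeBendRel 6 3 (myw S)) (deltaVec S 6 3 ({0,3,5} : Finset (Fin 6))) (deltaVec S 6 3 ({0,1,3} : Finset (Fin 6))) :=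
    edge_congr hid {0,1,3,5} {0,3} 5 1 {0,3,5} {0,1,3} (by decide) (by decide) (by decide) (by decide) (by decide) (by decide) (by decide)
  have e045 : ModCongr S (WedgeBendRel 6 3 (myw S)) (deltaVec S 6 3 ({0,4,5} : Finset (Fin 6))) (deltaVec S 6 3 ({0,1,4} : Finset (Fin 6))) :=
    edge_congr hid {0,1,4,5} {0,4} 5 1 {0,4,5} {0,1,4} (by decide) (by decide) (by decide) (by decide) (by decide) (by decide) (by decide)
  have e123 : ModCongr S (WedgeBendRel 6 3 (myw S)) (deltaVec S 6 3 ({1,2,3} : Finset (Fin 6))) (deltaVec S 6 3 ({0,1,3} : Finset (Fin 6))) :=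
    edge_congr hid {0,1,2,3} {1,3} 2 0 {1,2,3} {0,1,3} (by decide) (by decide) (by decide) (by decide) (by decide) (by decide) (by decide)
  have e124 : ModCongr S (WedgeBendRel 6 3 (myw S)) (deltaVec S 6 3 ({1,2,4} : Finset (Fin 6))) (deltaVec S 6 3 ({1,2,3} : Finset (Fin 6))) :=
    edge_congr hid {1,2,3,4} {1,2} 4 3 {1,2,4} {1,2,3} (by decide) (by decide) (by decide) (by decide) (by decide) (by decide) (by decide)
  have e125 : ModCongr S (WedgeBendRel 6 3 (myw S)) (deltaVec S 6 3 ({1,2,5} : Finset (Fin 6))) (deltaVec S 6 3 ({1,2,3} : Finset (Fin 6))) :=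
    edge_congr hid {0,2,3,5} {1,2} 5 3 {1,2,5} {1,2,3} (by decide) (by decide) (by decide) (by decide) (by decide) (by decide) (by decide)
  have e134 : ModCongr S (WedgeBendRel 6 3 (myw S)) (deltaVec S 6 3 ({1,3,4} : Finset (Fin 6))) (deltaVec S 6 3 ({0,1,3} : Finset (Fin 6))) :=
    edge_congr hid {0,1,3,4} {1,3} 4 0 {1,3,4} {0,1,3} (by decide) (by decide) (by decide) (by decide) (by decide) (by decide) (by decide)
  have e135 : ModCongr S (WedgeBendRel 6 3 (myw S)) (deltaVec S 6 3 ({1,3,5} : Finset (Fin 6))) (deltaVec S 6 3 ({0,1,3} : Finset (Fin 6))) :=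
    edge_congr hid {0,1,3,5} {1,3} 5 0 {1,3,5} {0,1,3} (by decide) (by decide) (by decide) (by decide) (by decide) (by decide) (by decide)
  have e234 : ModCongr S (WedgeBendRel 6 3 (myw S)) (deltaVec S 6 3 ({2,3,4} : Finset (Fin 6))) (deltaVec S 6 3 ({0,2,3} : Finset (Fin 6))) :=
    edge_congr hid {0,1,3,4} {2,3} 4 0 {2,3,4} {0,2,3} (by decide) (by decide) (by decide) (by decide) (by decide) (by decide) (by decide)
  have e245 : ModCongr S (WedgeBendRel 6 3 (myw S)) (deltaVec S 6 3 ({2,4,5} : Finset (Fin 6))) (deltaVec S 6 3 ({0,2,4} : Finset (Fin 6))) :=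
    edge_congr hid {0,2,4,5} {2,4} 5 0 {2,4,5} {0,2,4} (by decide) (by decide) (by decide) (by decide) (by decide) (by decide) (by decide)
  have e345 : ModCongr S (WedgeBendRel 6 3 (myw S)) (deltaVec S 6 3 ({3,4,5} : Finset (Fin 6))) (deltaVec S 6 3 ({1,3,4} : Finset (Fin 6))) :=
    edge_congr hid {0,1,4,5} {3,4} 5 1 {3,4,5} {1,3,4} (by decide) (by decide) (by decide) (by decide) (by decide) (by decide) (by decide)
  intro I hI
  have hd := (show ∀ I : Finset (Fin 6), I ∈ myB → (I = ({0,1,3} : Finset (Fin 6)) ∨ I = ({0,1,4} : Finset (Fin 6)) ∨ I = ({0,1,5} : Finset (Fin 6)) ∨ I = ({0,2,3} : Finset (Fin 6)) ∨ I = ({0,2,4} : Finset (Fin 6)) ∨ I = ({0,2,5} : Finset (Fin 6)) ∨ I = ({0,3,5} : Finset (Fin 6)) ∨ I = ({0,4,5} : Finset (Fin 6)) ∨ I = ({1,2,3} : Finset (Fin 6)) ∨ I = ({1,2,4} : Finset (Fin 6)) ∨ I = ({1,2,5} : Finset (Fin 6)) ∨ I = ({1,3,4} : Finset (Fin 6))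 ∨ I = ({1,3,5} : Finset (Fin 6)) ∨ I = ({2,3,4} : Finset (Fin 6)) ∨ I = ({2,4,5} : Finset (Fin 6)) ∨ I = ({3,4,5} : Finset (Fin 6))) by decide) I hI
  rcases hd with rfl|rfl|rfl|rfl|rfl|rfl|rfl|rfl|rfl|rfl|rfl|rfl|rfl|rfl|rfl|rfl
  · exact ModCongr.refl _
  · exact e014
  · exact e015
  · exact e023
  · exact ModCongr.trans (e024) e023
  · exact ModCongr.trans (e025) e023
  · exact e035
  · exact ModCongr.trans (e045) e014
  · exact e123
  · exact ModCongr.trans (e124) e123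
  · exact ModCongr.trans (e125) e123
  · exact e134
  · exact e135
  · exact ModCongr.trans (e234) e023
  · exact ModCongr.trans (ModCongr.trans (e245) e024) e023
  · exact ModCongr.trans (e345) e134

theorem mem_myB_of_card {S : Type*} (I : Finset (Fin 6)) (h3 : I.card = 3)
    (h : I ∉ myB) : I ∈ myBad :=
  (show ∀ I : Finset (Fin 6), I.card = 3 → I ∉ myB → I ∈ myBad by decide) I h3 h

/-- over the Boolean semifield (an idempotent semifield whose only elements
are `0` and `1`), let `w ∈ ⋀^3 𝔹^6` be the Plücker vector of the graphic matroid
`M(K_4)`, whose bases `𝓑` are all 3-element subsets of `{1,…,6}` (here `Fin 6`) except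
the four circuit-hyperplanes `{1,2,3},{1,4,5},{2,5,6},{3,4,6}` (zero-indexed:
`{0,1,2},{0,3,4},{1,4,5},{2,3,5}`).  Then `⋀^3 Q_w ≅ 𝔹` is free of rank one; the images
of `x_I` for `I ∈ 𝓑` all equal the generator, and `x_I = 0` for the four excluded
triples. -/
theorem K4_top_wedge_free_rank_one {S : Type*} [Semifield S]
    (hid : ∀ s : S, s + s = s) (htwo : ∀ s : S, s = 0 ∨ s = 1) :
    let bad : Finset (Finset (Fin 6)) :=
      {({0,1,2} : Finset (Fin 6)), {0,3,4}, {1,4,5}, {2,3,5}}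
    let 𝓑 : Finset (Finset (Fin 6)) := (univ : Finset (Fin 6)).powersetCard 3 \ bad
    let w : Finset (Fin 6) → S := fun I => if I ∈ 𝓑 then 1 else 0
    let g : WIdx 6 3 → S := deltaVec S 6 3 ({0,1,3} : Finset (Fin 6))
    (∀ m : WIdx 6 3 → S, ∃ s : S, ModCongr S (WedgeBendRel 6 3 w) m (s • g))
    ∧ (∀ s t : S, ModCongr S (WedgeBendRel 6 3 w) (s • g) (t • g) → s = t)
    ∧ (∀ I ∈ 𝓑, ModCongr S (WedgeBendRel 6 3 w) (deltaVec S 6 3 I) g)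
    ∧ (∀ I ∈ bad, ModCongr S (WedgeBendRel 6 3 w) (deltaVec S 6 3 I) 0) := by
  intro bad 𝓑 w g
  have hw : w = myw S := rfl
  have hBB : 𝓑 = myB := rfl
  have hbad : bad = myBad := rfl
  have hg : g = deltaVec S 6 3 ({0,1,3} : Finset (Fin 6)) := rfl
  rw [hw, hBB, hbad, hg]
  have p3 := part3' (S := S) hid
  have p4 := part4' (S := S)
  refine ⟨?_, ?_, p3, p4⟩
  · -- part 1
    intro m
    refine ⟨∑ K ∈ Finset.univ.filter (fun K : WIdx 6 3 => K.1 ∈ myB), m K, ?_⟩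
    have hm : m = ∑ K : WIdx 6 3, m K • deltaVec S 6 3 K.1 := by
      funext K'
      rw [Finset.sum_apply, Finset.sum_eq_single K']
      · simp [deltaVec]
      · intro b _ hne
        have : K'.1 ≠ b.1 := fun h => hne (Subtype.ext h).symm
        simp [deltaVec, this]
      · intro h; exact absurd (Finset.mem_univ K') h
    nth_rewrite 1 [hm]
    have step : ∀ K : WIdx 6 3, ModCongr S (WedgeBendRel 6 3 (myw S))
        (m K • deltaVec S 6 3 K.1)
        (if K.1 ∈ myB then m K • deltaVec S 6 3 ({0,1,3} : Finset (Fin 6)) else 0) := by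
      intro K
      by_cases hK : K.1 ∈ myB
      · rw [if_pos hK]
        exact ModCongr.smul (m K) (p3 K.1 hK)
      · rw [if_neg hK]
        have h0 := ModCongr.smul (m K) (p4 K.1 (mem_myB_of_card (S := S) K.1 K.2 hK))
        rwa [smul_zero] at h0
    refine ModCongr.trans (congr_sum Finset.univ _ _ (fun K _ => step K)) ?_
    have heq : (∑ K : WIdx 6 3,
        if K.1 ∈ myB then m K • deltaVec S 6 3 ({0,1,3} : Finset (Fin 6)) else 0)
        = (∑ K ∈ Finset.univ.filter (fun K : WIdx 6 3 => K.1 ∈ myB), m K)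
            • deltaVec S 6 3 ({0,1,3} : Finset (Fin 6)) := by
      rw [Finset.sum_ite, Finset.sum_const_zero, add_zero, Finset.sum_smul]
    rw [heq]
    exact ModCongr.refl (S := S) (r := WedgeBendRel 6 3 (myw S)) ((∑ K ∈ Finset.univ.filter (fun K : WIdx 6 3 => K.1 ∈ myB), m K)
      • deltaVec S 6 3 ({0,1,3} : Finset (Fin 6)))
  · -- part 2
    intro s t h
    have hphi := phi_congr hid h
    rw [phi_smul, phi_smul] at hphi
    have hg1 : phi S (deltaVec S 6 3 ({0,1,3} : Finset (Fin 6))) = 1 := by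
      have h2 : deltaVec S 6 3 ({0,1,3} : Finset (Fin 6))
          = fun K : WIdx 6 3 => if K.1 = ({0,1,3} : Finset (Fin 6)) then (1:S) else 0 := rfl
      rw [h2, phi_ind hid]
      exact if_pos ⟨⟨({0,1,3} : Finset (Fin 6)), by decide⟩, by decide, rfl⟩
    rw [hg1, mul_one, mul_one] at hphi
    exact hphi
end
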